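/- arXiv:2507.09832 — 4 statements merged into one kernel-verified Lean document; each statement's English description precedes it below -/
import Mathlib

section
/- If G is a simple graph on n ≥ 2 vertices, none of which is isolated, and with m edges, then for any positive integer k, the Ramsey number satisfies r(G, F_k) ≤ n + 2mk − 2m/n (an inequality of real numbers). -/
open SimpleGraph Finset

universe u

/-- `host.ContainsCopy G` means that `host` contains a (not necessarily induced) subgraph
isomorphic to `G`. -/
def SimpleGraph.ContainsCopy {β α : Type*} (host : SimpleGraph β) (G : SimpleGraph α) : Prop :=
  ∃ f : α → β, Function.Injective f ∧ ∀ ⦃a b : α⦄, G.Adj a b → host.Adj (f a) (f b)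

/-- `ramseyProp G H N` means: for every red-blue coloring of the edges of the complete graph
on `N` vertices (given by its red graph `red`, the blue graph being the complement `redᶜ`),
there is a red copy of `G` or a blue copy of `H`. -/
def ramseyProp {α β : Type*} (G : SimpleGraph α) (H : SimpleGraph β) (N : ℕ) : Prop :=
  ∀ red : SimpleGraph (Fin N), red.ContainsCopy G ∨ (redᶜ).ContainsCopy H

/-- The Ramsey number `r(G, H)`: the least `N` with the Ramsey property. -/
noncomputable def ramseyNumber {α β : Type*} (G : SimpleGraph α) (H : SimpleGraph β) : ℕ :=
  sInf {N | ramseyProp G H N}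

/-- The fan `F_k = K_1 + k·K_2`: `k` triangles sharing exactly one common vertex (`none`). -/
def fan (k : ℕ) : SimpleGraph (Option (Fin k × Fin 2)) :=
  SimpleGraph.fromRel (fun x y => x = none ∨ ∃ i a b, x = some (i, a) ∧ y = some (i, b))

/-- `copies t G` is the disjoint union of `t` copies of `G`. -/
def copies {α : Type*} (t : ℕ) (G : SimpleGraph α) : SimpleGraph (Fin t × α) where
  Adj x y := x.1 = y.1 ∧ G.Adj x.2 y.2
  symm := ⟨fun _ _ h => ⟨h.1.symm, h.2.symm⟩⟩
  loopless := ⟨fun x h => G.loopless.irrefl x.2 h.2⟩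

-- L1: clique gives copy
lemma containsCopy_of_clique {V : Type*} [Fintype V] {N n : ℕ} (G : SimpleGraph V)
    (hcard : Fintype.card V = n) (red : SimpleGraph (Fin N)) (s : Finset (Fin N))
    (hs : n ≤ s.card) (hclq : ∀ x ∈ s, ∀ y ∈ s, x ≠ y → red.Adj x y) :
    red.ContainsCopy G := by
  have : Fintype.card V ≤ Fintype.card s := by
    rw [hcard, Fintype.card_coe]; exact hs
  obtain ⟨e⟩ := Function.Embedding.nonempty_of_card_le this
  refine ⟨fun v => (e v : Fin N), ?_, ?_⟩
  · intro a b hab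
    exact e.injective (Subtype.ext hab)
  · intro a b hab
    refine hclq _ (e a).2 _ (e b).2 ?_
    intro h
    exact hab.ne (e.injective (Subtype.ext h))

-- L4: greedy extension
lemma exists_extension {N : ℕ} (red : SimpleGraph (Fin N)) [DecidableRel red.Adj]
    (U W : Finset (Fin N)) (hWU : W ⊆ U) (B : ℕ)
    (hB : ∀ w ∈ W, ((redᶜ).neighborFinset w).card ≤ B)
    (hN : U.card + W.card * B < N) :
    ∃ x, x ∉ U ∧ ∀ w ∈ W, red.Adj x w := by
  classical
  set T := U ∪ W.biUnion (fun w => (redᶜ).neighborFinset w) with hT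
  have hTcard : T.card < N := by
    calc T.card ≤ U.card + (W.biUnion fun w => (redᶜ).neighborFinset w).card :=
          Finset.card_union_le _ _
    _ ≤ U.card + ∑ w ∈ W, ((redᶜ).neighborFinset w).card := by
          gcongr; exact Finset.card_biUnion_le
    _ ≤ U.card + W.card * B := by
          gcongr
          calc ∑ w ∈ W, ((redᶜ).neighborFinset w).card ≤ ∑ _w ∈ W, B :=
                Finset.sum_le_sum hB
          _ = W.card * B := by rw [Finset.sum_const, smul_eq_mul]
    _ < N := hN
  have : ∃ x : Fin N, x ∉ T := by
    by_contra h
    push_neg at h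
    have : (Finset.univ : Finset (Fin N)) ⊆ T := fun x _ => h x
    have := Finset.card_le_card this
    simp only [Finset.card_univ, Fintype.card_fin] at this
    omega
  obtain ⟨x, hx⟩ := this
  refine ⟨x, fun hxU => hx (Finset.mem_union_left _ hxU), ?_⟩
  intro w hw
  have hxb : x ∉ (redᶜ).neighborFinset w := fun hmem =>
    hx (Finset.mem_union_right _ (Finset.mem_biUnion.mpr ⟨w, hw, hmem⟩))
  rw [SimpleGraph.mem_neighborFinset] at hxb
  have hne : x ≠ w := by
    rintro rfl
    exact hx (Finset.mem_union_left _ (hWU hw))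
  by_contra hadj
  exact hxb ((SimpleGraph.compl_adj red w x).mpr ⟨(Ne.symm hne), fun h => hadj h.symm⟩)

-- edge count of induced subgraph
lemma card_edgeFinset_induce_add_degree_le {V : Type*} [Fintype V] [DecidableEq V]
    (G : SimpleGraph V) [DecidableRel G.Adj] (s : Set V) [DecidablePred (· ∈ s)] (u : V)
    (hu : u ∉ s) :
    (G.induce s).edgeFinset.card + G.degree u ≤ G.edgeFinset.card := by
  classical
  have hsub : G.incidenceFinset u ⊆ G.edgeFinset := by
    intro e he
    rw [SimpleGraph.mem_incidenceFinset] at he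
    exact SimpleGraph.mem_edgeFinset.mpr he.1
  have key : (G.induce s).edgeFinset.card ≤ (G.edgeFinset \ G.incidenceFinset u).card := by
    apply Finset.card_le_card_of_injOn (fun e => Sym2.map (fun x : s => (x : V)) e)
    · intro e he
      induction e with
      | _ a b =>
        rw [Finset.mem_coe, SimpleGraph.mem_edgeFinset, SimpleGraph.mem_edgeSet] at he
        have hadj : G.Adj (a : V) (b : V) := he
        rw [Finset.mem_coe, Finset.mem_sdiff]
        beta_reduce
        constructor
        · rw [Sym2.map_pair_eq, SimpleGraph.mem_edgeFinset, SimpleGraph.mem_edgeSet]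
          exact hadj
        · rw [SimpleGraph.mem_incidenceFinset]
          rintro ⟨-, hmem⟩
          rw [Sym2.map_pair_eq, Sym2.mem_iff] at hmem
          rcases hmem with h | h
          · exact hu (h ▸ a.2)
          · exact hu (h ▸ b.2)
    · intro e1 _ e2 _ h
      exact Sym2.map.injective Subtype.val_injective h
  have hcard : (G.edgeFinset \ G.incidenceFinset u).card
      = G.edgeFinset.card - G.degree u := by
    rw [Finset.card_sdiff_of_subset hsub, SimpleGraph.card_incidenceFinset_eq_degree]
  have hdeg : G.degree u ≤ G.edgeFinset.card := by
    rw [← SimpleGraph.card_incidenceFinset_eq_degree]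
    exact Finset.card_le_card hsub
  omega

lemma fin2cases : ∀ a : Fin 2, a = 0 ∨ a = 1 := by decide

lemma containsCopy_fan {N k : ℕ} (red : SimpleGraph (Fin N)) [DecidableRel red.Adj] (v : Fin N)
    (g : Fin k × Fin 2 → Fin N) (hginj : Function.Injective g)
    (hgA : ∀ p, g p ∈ (redᶜ).neighborFinset v)
    (hgadj : ∀ i : Fin k, (redᶜ).Adj (g (i, 0)) (g (i, 1))) :
    (redᶜ).ContainsCopy (fan k) := by
  have hgA' : ∀ p, (redᶜ).Adj v (g p) := by
    intro p; have := hgA p; rwa [SimpleGraph.mem_neighborFinset] at this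
  refine ⟨fun o => Option.elim o v g, ?_, ?_⟩
  · intro o1 o2 h
    match o1, o2 with
    | none, none => rfl
    | none, some p => exact absurd h (hgA' p).ne
    | some p, none => exact absurd h.symm (hgA' p).ne
    | some p, some q => exact congrArg some (hginj h)
  · have hrel : ∀ a b : Option (Fin k × Fin 2), a ≠ b →
        (a = none ∨ ∃ i c d, a = some (i, c) ∧ b = some (i, d)) →
        (redᶜ).Adj (Option.elim a v g) (Option.elim b v g) := by
      rintro a b hne (rfl | ⟨i, c, d, rfl, rfl⟩)
      · match b with
        | none => exact absurd rfl hne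
        | some p => exact hgA' p
      · have hcd : c ≠ d := fun h => hne (by rw [h])
        rcases fin2cases c with rfl | rfl <;> rcases fin2cases d with rfl | rfl
        · exact absurd rfl hcd
        · exact hgadj i
        · exact (hgadj i).symm
        · exact absurd rfl hcd
    intro a b hab
    rw [fan, SimpleGraph.fromRel_adj] at hab
    rcases hab.2 with h | h
    · exact hrel a b hab.1 h
    · exact (hrel b a hab.1.symm h).symm

lemma aux_matching {N : ℕ} (red : SimpleGraph (Fin N)) [DecidableRel red.Adj] (v : Fin N)
    (j : ℕ) :
    (∃ g : Fin j × Fin 2 → Fin N, Function.Injective g ∧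
      (∀ p, g p ∈ (redᶜ).neighborFinset v) ∧
      (∀ i : Fin j, (redᶜ).Adj (g (i, 0)) (g (i, 1))))
    ∨ (∃ i : ℕ, i + 1 ≤ j ∧ ∃ S : Finset (Fin N), S.card ≤ 2 * i ∧
        ∀ x ∈ (redᶜ).neighborFinset v, x ∉ S → ∀ y ∈ (redᶜ).neighborFinset v, y ∉ S →
          x ≠ y → red.Adj x y) := by
  classical
  induction j with
  | zero =>
    left
    exact ⟨fun p => p.1.elim0, fun p => p.1.elim0, fun p => p.1.elim0, fun i => i.elim0⟩
  | succ j ih =>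
    rcases ih with ⟨g, hginj, hgA, hgadj⟩ | ⟨i, hik, S, hS, hcov⟩
    · set A := (redᶜ).neighborFinset v with hA
      set U := Finset.image g Finset.univ with hU
      have hUcard : U.card ≤ 2 * j := by
        calc U.card ≤ (Finset.univ : Finset (Fin j × Fin 2)).card := Finset.card_image_le
        _ = 2 * j := by simp [Fintype.card_prod, mul_comm]
      by_cases hE : ∃ x y : Fin N, x ∈ A ∧ x ∉ U ∧ y ∈ A ∧ y ∉ U ∧ (redᶜ).Adj x y
      · obtain ⟨x, y, hxA, hxU, hyA, hyU, hxy⟩ := hE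
        left
        refine ⟨fun p => if h : (p.1 : ℕ) < j then g (⟨p.1.1, h⟩, p.2) else
          (if p.2 = 0 then x else y), ?_, ?_, ?_⟩
        · intro p q hpq
          simp only at hpq
          by_cases hp : (p.1 : ℕ) < j <;> by_cases hq : (q.1 : ℕ) < j
          · rw [dif_pos hp, dif_pos hq] at hpq
            have heq := Prod.ext_iff.mp (hginj hpq)
            have h1 : p.1 = q.1 := by simpa [Fin.ext_iff] using heq.1
            exact Prod.ext h1 heq.2
          · rw [dif_pos hp, dif_neg hq] at hpq
            exfalso
            have hmem : g (⟨p.1.1, hp⟩, p.2) ∈ U := Finset.mem_image_of_mem g (Finset.mem_univ _)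
            split at hpq
            · exact hxU (hpq ▸ hmem)
            · exact hyU (hpq ▸ hmem)
          · rw [dif_neg hp, dif_pos hq] at hpq
            exfalso
            have hmem : g (⟨q.1.1, hq⟩, q.2) ∈ U := Finset.mem_image_of_mem g (Finset.mem_univ _)
            split at hpq
            · exact hxU (hpq ▸ hmem)
            · exact hyU (hpq ▸ hmem)
          · rw [dif_neg hp, dif_neg hq] at hpq
            have h1 : p.1 = q.1 := by
              have hp1 : (p.1 : ℕ) = j := by omega
              have hq1 : (q.1 : ℕ) = j := by omega
              exact Fin.ext (hp1.trans hq1.symm)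
            have h2 : p.2 = q.2 := by
              rcases fin2cases p.2 with hp2 | hp2 <;> rcases fin2cases q.2 with hq2 | hq2 <;>
                rw [hp2, hq2] at hpq ⊢ <;> simp only [if_pos rfl] at hpq <;> try rfl
              · rw [if_neg (by decide : (1 : Fin 2) ≠ 0)] at hpq
                exact absurd hpq hxy.ne
              · rw [if_neg (by decide : (1 : Fin 2) ≠ 0)] at hpq
                exact absurd hpq.symm hxy.ne
            exact Prod.ext h1 h2
        · intro p
          by_cases hp : (p.1 : ℕ) < j
          · simp only [dif_pos hp]; exact hgA _
          · simp only [dif_neg hp]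
            split
            · exact hxA
            · exact hyA
        · intro i
          by_cases hp : (i : ℕ) < j
          · simp only [dif_pos hp]
            exact hgadj ⟨i.1, hp⟩
          · simp only [dif_neg hp]
            rw [if_pos trivial, if_neg (by decide : ¬(1 : Fin 2) = 0)]
            exact hxy
      · right
        push_neg at hE
        refine ⟨j, le_refl _, U ∩ A, le_trans (Finset.card_le_card
          (Finset.inter_subset_left)) hUcard, ?_⟩
        intro x hxA hxS y hyA hyS hxy
        have hxU : x ∉ U := fun h => hxS (Finset.mem_inter.mpr ⟨h, hxA⟩)
        have hyU : y ∉ U := fun h => hyS (Finset.mem_inter.mpr ⟨h, hyA⟩)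
        have := hE x y hxA hxU hyA hyU
        by_contra hred
        exact this ((SimpleGraph.compl_adj red x y).mpr ⟨hxy, hred⟩)
    · exact Or.inr ⟨i, by omega, S, hS, hcov⟩

lemma blue_deg_bound {N n k : ℕ} (hk : 1 ≤ k) (red : SimpleGraph (Fin N))
    [DecidableRel red.Adj]
    (Hclq : ∀ s : Finset (Fin N), (∀ x ∈ s, ∀ y ∈ s, x ≠ y → red.Adj x y) → s.card < n)
    (HB : ¬ (redᶜ).ContainsCopy (fan k)) (v : Fin N) :
    ((redᶜ).neighborFinset v).card + 3 ≤ n + 2 * k := by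
  classical
  rcases aux_matching red v k with ⟨g, h1, h2, h3⟩ | ⟨i, hik, S, hS, hcov⟩
  · exact absurd (containsCopy_fan red v g h1 h2 h3) HB
  · set A := (redᶜ).neighborFinset v with hA
    have hclq : (A \ S).card < n := by
      apply Hclq
      intro x hx y hy hxy
      rw [Finset.mem_sdiff] at hx hy
      exact hcov x hx.1 hx.2 y hy.1 hy.2 hxy
    have := Finset.card_le_card_sdiff_add_card (s := A) (t := S)
    omega

-- AR2 : IH applicability, delete one vertex
theorem AR2 (k m' e n N : ℤ) (hk : 1 ≤ k) (hn : 3 ≤ n) (hm' : 0 ≤ m') (he : 1 ≤ e)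
    (hN : n*(n+2*(m'+e)*k) < 2*(m'+e) + n + n*N) :
    (n-1)*((n-1)+2*m'*k) < 2*m' + (n-1) + (n-1)*N := by
  have h1 : n*((n-1)*N) ≥ (n-1)*(n*(n+2*(m'+e)*k)) - (n-1)*(2*(m'+e)+n) + (n-1) := by nlinarith
  have hb : 0 ≤ n*e*((n-1)*k-1) := by
    apply mul_nonneg (by nlinarith) (by nlinarith)
  have h2 : n*((n-1)*((n-1)+2*m'*k)) < n*(2*m' + (n-1) + (n-1)*N) := by nlinarith
  exact lt_of_mul_lt_mul_left h2 (by linarith)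

-- AR3 : IH applicability, delete two vertices
theorem AR3 (k m' e n N : ℤ) (hk : 1 ≤ k) (hn : 4 ≤ n) (hm' : 0 ≤ m') (he : 1 ≤ e)
    (hN : n*(n+2*(m'+e)*k) < 2*(m'+e) + n + n*N) :
    (n-2)*((n-2)+2*m'*k) < 2*m' + (n-2) + (n-2)*N := by
  have h1 : n*((n-2)*N) ≥ (n-2)*(n*(n+2*(m'+e)*k)) - (n-2)*(2*(m'+e)+n) + (n-2) := by nlinarith
  have hb : 0 ≤ n*e*((n-2)*k-1) := by
    apply mul_nonneg (by nlinarith) (by nlinarith)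
  have h2 : n*((n-2)*((n-2)+2*m'*k)) < n*(2*m' + (n-2) + (n-2)*N) := by nlinarith
  exact lt_of_mul_lt_mul_left h2 (by linarith)

-- AR4 : extension after deleting a vertex of degree one
theorem AR4 (k m n N : ℤ) (hk : 1 ≤ k) (hn : 3 ≤ n) (hmn : n ≤ 2*m)
    (hN : n*(n+2*m*k) < 2*m + n + n*N) : 2*n + 2*k - 4 < N := by
  have key : n*(2*n+2*k-4) < n*N := by
    nlinarith [mul_nonneg (by linarith : (0:ℤ) ≤ 2*m - n) (by nlinarith : (0:ℤ) ≤ n*k - 1),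
      mul_nonneg (by linarith : (0:ℤ) ≤ n) (by nlinarith : (0:ℤ) ≤ (n-2)*(k-1))]
  exact lt_of_mul_lt_mul_left key (by linarith)

-- AR6 : extension, min degree d
theorem AR6 (k m n d N : ℤ) (hk : 1 ≤ k) (hn : 3 ≤ n) (hd : n*d ≤ 2*m) (hd0 : 0 ≤ d)
    (hm0 : 0 ≤ m) (hN : n*(n+2*m*k) < 2*m + n + n*N) : (n-1) + d*(n+2*k-3) < N := by
  have key : n*((n-1) + d*(n+2*k-3)) < n*N := by
    nlinarith [mul_nonneg (by linarith : (0:ℤ) ≤ 2*m - n*d) (by nlinarith : (0:ℤ) ≤ n + 2*k - 3),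
      mul_nonneg (by nlinarith : (0:ℤ) ≤ 2*m) (by nlinarith : (0:ℤ) ≤ (n-2)*(k-1))]
  exact lt_of_mul_lt_mul_left key (by linarith)

/-- The statement we prove by strong induction on `m`. -/
def MainStmt (k m : ℕ) : Prop :=
  ∀ (V : Type u) (_ : Fintype V) (G : SimpleGraph V) (n : ℕ),
    2 ≤ n → Fintype.card V = n → G.edgeSet.ncard = m →
    (∀ v : V, ∃ w : V, G.Adj v w) → ∀ N : ℕ,
    n * (n + 2*m*k) < 2*m + n + n*N → ramseyProp G (fan k) N

/-- delete one vertex and apply the induction hypothesis -/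
lemma delete_one {k m : ℕ} (hk : 1 ≤ k)
    (IH : ∀ m' : ℕ, m' < m → MainStmt.{u} k m')
    (V : Type u) [Fintype V] (G : SimpleGraph V) [DecidableRel G.Adj] (n : ℕ)
    (hn : 3 ≤ n) (hcard : Fintype.card V = n) (hmF : G.edgeFinset.card = m)
    (u : V) (hdegu : 1 ≤ G.degree u)
    (hiso' : ∀ x : V, x ≠ u → ∃ y : V, y ≠ u ∧ G.Adj x y)
    (N : ℕ) (hN : n * (n + 2*m*k) < 2*m + n + n*N)
    (red : SimpleGraph (Fin N)) (HB : ¬ (redᶜ).ContainsCopy (fan k)) :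
    ∃ f' : {x : V // x ≠ u} → Fin N, Function.Injective f' ∧
      ∀ a b : {x : V // x ≠ u}, G.Adj a.1 b.1 → red.Adj (f' a) (f' b) := by
  classical
  set s : Set V := {x : V | x ≠ u} with hs
  have husn : u ∉ s := by simp [hs]
  obtain ⟨m', hm'⟩ : ∃ m', (G.induce s).edgeFinset.card = m' := ⟨_, rfl⟩
  have hm'le : m' + 1 ≤ m := by
    have h2 := card_edgeFinset_induce_add_degree_le G s u husn
    rw [hmF, hm'] at h2
    omega
  have hcard' : Fintype.card s = n - 1 := by
    rw [Fintype.card_subtype]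
    rw [show Finset.univ.filter (· ∈ s) = Finset.univ.erase u from by
      ext x; simp [hs, Finset.mem_erase, and_comm]]
    rw [Finset.card_erase_of_mem (Finset.mem_univ u), Finset.card_univ, hcard]
  have hiso'' : ∀ v : s, ∃ w : s, (G.induce s).Adj v w := by
    rintro ⟨x, hx⟩
    obtain ⟨y, hyu, hxy⟩ := hiso' x hx
    exact ⟨⟨y, hyu⟩, hxy⟩
  have hm'n : (G.induce s).edgeSet.ncard = m' := by
    rw [Set.ncard_eq_toFinset_card']; exact hm'
  have hNcond : (n-1) * ((n-1) + 2*m'*k) < 2*m' + (n-1) + (n-1)*N := by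
    have h1 : (1:ℕ) ≤ n := by omega
    zify [h1]
    have hz := AR2 (k : ℤ) (m' : ℤ) ((m : ℤ) - m') (n : ℤ) (N : ℤ)
      (by exact_mod_cast hk) (by exact_mod_cast hn) (Int.natCast_nonneg m')
      (by push_cast; omega) ?_
    · convert hz using 2 <;> push_cast <;> ring
    · have he : (m' : ℤ) + ((m : ℤ) - m') = m := by ring
      rw [he]
      exact_mod_cast hN
  have := IH m' (by omega) s inferInstance (G.induce s) (n-1) (by omega) hcard' hm'n hiso'' N hNcond
  rcases this red with ⟨f', hinj, hadj⟩ | hfan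
  · exact ⟨f', hinj, fun a b hab => hadj hab⟩
  · exact absurd hfan HB

/-- delete two vertices (a `K₂` component) and apply the induction hypothesis -/
lemma delete_two {k m : ℕ} (hk : 1 ≤ k)
    (IH : ∀ m' : ℕ, m' < m → MainStmt.{u} k m')
    (V : Type u) [Fintype V] (G : SimpleGraph V) [DecidableRel G.Adj] (n : ℕ)
    (hn : 4 ≤ n) (hcard : Fintype.card V = n) (hmF : G.edgeFinset.card = m)
    (u w : V) (huw : u ≠ w) (hdegu : 1 ≤ G.degree u)
    (hiso' : ∀ x : V, x ≠ u → x ≠ w → ∃ y : V, y ≠ u ∧ y ≠ w ∧ G.Adj x y)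
    (N : ℕ) (hN : n * (n + 2*m*k) < 2*m + n + n*N)
    (red : SimpleGraph (Fin N)) (HB : ¬ (redᶜ).ContainsCopy (fan k)) :
    ∃ f' : {x : V // x ≠ u ∧ x ≠ w} → Fin N, Function.Injective f' ∧
      ∀ a b : {x : V // x ≠ u ∧ x ≠ w}, G.Adj a.1 b.1 → red.Adj (f' a) (f' b) := by
  classical
  set s : Set V := {x : V | x ≠ u ∧ x ≠ w} with hs
  have husn : u ∉ s := by simp [hs]
  obtain ⟨m', hm'⟩ : ∃ m', (G.induce s).edgeFinset.card = m' := ⟨_, rfl⟩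
  have hm'le : m' + 1 ≤ m := by
    have h2 := card_edgeFinset_induce_add_degree_le G s u husn
    rw [hmF, hm'] at h2
    omega
  have hcard' : Fintype.card s = n - 2 := by
    rw [Fintype.card_subtype]
    rw [show Finset.univ.filter (· ∈ s) = Finset.univ \ {u, w} from by
      ext x; simp [hs, not_or, and_comm]]
    rw [Finset.card_sdiff_of_subset (Finset.subset_univ _), Finset.card_univ, hcard]
    congr 1
    rw [Finset.card_insert_of_notMem (by simp [huw]), Finset.card_singleton]
  have hiso'' : ∀ v : s, ∃ z : s, (G.induce s).Adj v z := by
    rintro ⟨x, hx1, hx2⟩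
    obtain ⟨y, hyu, hyw, hxy⟩ := hiso' x hx1 hx2
    exact ⟨⟨y, hyu, hyw⟩, hxy⟩
  have hm'n : (G.induce s).edgeSet.ncard = m' := by
    rw [Set.ncard_eq_toFinset_card']; exact hm'
  have hNcond : (n-2) * ((n-2) + 2*m'*k) < 2*m' + (n-2) + (n-2)*N := by
    have h1 : (2:ℕ) ≤ n := by omega
    zify [h1]
    have hz := AR3 (k : ℤ) (m' : ℤ) ((m : ℤ) - m') (n : ℤ) (N : ℤ)
      (by exact_mod_cast hk) (by exact_mod_cast hn) (Int.natCast_nonneg m')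
      (by push_cast; omega) ?_
    · convert hz using 2 <;> push_cast <;> ring
    · have he : (m' : ℤ) + ((m : ℤ) - m') = m := by ring
      rw [he]
      exact_mod_cast hN
  have := IH m' (by omega) s inferInstance (G.induce s) (n-2) (by omega) hcard' hm'n hiso'' N hNcond
  rcases this red with ⟨f', hinj, hadj⟩ | hfan
  · exact ⟨f', hinj, fun a b hab => hadj hab⟩
  · exact absurd hfan HB

lemma main_step (k m : ℕ) (hk : 1 ≤ k) (IH : ∀ m' : ℕ, m' < m → MainStmt.{u} k m') :
    MainStmt.{u} k m := by
  intro V instV G n hn hcard hm hiso N hN red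
  classical
  by_cases HB : (redᶜ).ContainsCopy (fan k)
  · exact Or.inr HB
  by_cases HR : red.ContainsCopy G
  · exact Or.inl HR
  exfalso
  letI : DecidableRel G.Adj := Classical.decRel _
  letI : DecidableRel red.Adj := Classical.decRel _
  have hmF : G.edgeFinset.card = m := by rw [← hm, ← SimpleGraph.coe_edgeFinset, Set.ncard_coe_finset]
  have hdegpos : ∀ v : V, 1 ≤ G.degree v := fun v =>
    (G.degree_pos_iff_exists_adj v).mpr (hiso v)
  have h2m : n ≤ 2 * m := by
    have hh := SimpleGraph.sum_degrees_eq_twice_card_edges G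
    calc n = ∑ _v : V, 1 := by
          rw [Finset.sum_const, smul_eq_mul, Finset.card_univ, hcard, mul_one]
    _ ≤ ∑ v : V, G.degree v := Finset.sum_le_sum fun v _ => hdegpos v
    _ = 2 * m := by rw [hh, hmF]
  have hm1 : 1 ≤ m := by omega
  have Hclq : ∀ s : Finset (Fin N), (∀ x ∈ s, ∀ y ∈ s, x ≠ y → red.Adj x y) → s.card < n := by
    intro s hs
    by_contra hcon
    exact HR (containsCopy_of_clique G hcard red s (by omega) hs)
  have Hdeg : ∀ v : Fin N, ((redᶜ).neighborFinset v).card + 3 ≤ n + 2*k :=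
    blue_deg_bound hk red Hclq HB
  rcases Nat.lt_or_ge n 3 with hn2' | hn3
  -- ================= case n = 2 : G = K₂ =================
  · have hn2 : n = 2 := by omega
    obtain ⟨v₁, v₂, hv12, hU2⟩ := Finset.card_eq_two.mp
      (by rw [Finset.card_univ, hcard, hn2] : (Finset.univ : Finset V).card = 2)
    have huniv : ∀ x : V, x = v₁ ∨ x = v₂ := by
      intro x
      have : x ∈ (Finset.univ : Finset V) := Finset.mem_univ x
      rw [hU2] at this
      simpa using this
    by_cases hre : ∃ x y : Fin N, red.Adj x y
    · obtain ⟨x, y, hxy⟩ := hre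
      apply HR
      refine ⟨fun v => if v = v₁ then x else y, ?_, ?_⟩
      · intro a b hab
        simp only at hab
        rcases huniv a with rfl | rfl <;> rcases huniv b with rfl | rfl <;>
          simp only [if_pos rfl] at hab <;> first | rfl | skip
        · rw [if_neg (Ne.symm hv12)] at hab
          exact absurd hab hxy.ne
        · rw [if_neg (Ne.symm hv12)] at hab
          exact absurd hab.symm hxy.ne
      · intro a b hab
        rcases huniv a with rfl | rfl <;> rcases huniv b with rfl | rfl
        · exact absurd rfl hab.ne
        · simpa [Ne.symm hv12] using hxy
        · simpa [Ne.symm hv12] using hxy.symm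
        · exact absurd rfl hab.ne
    · push_neg at hre
      apply HB
      have hNk : 2*k + 1 ≤ N := by
        have hz : (2:ℤ)*k + 1 ≤ N := by
          have hNz : (n:ℤ)*(n+2*m*k) < 2*m + n + n*N := by exact_mod_cast hN
          have hn2z : (n:ℤ) = 2 := by exact_mod_cast congrArg (Nat.cast : ℕ → ℤ) hn2
          have hm1z : (1:ℤ) ≤ m := by exact_mod_cast hm1
          have hkz : (1:ℤ) ≤ k := by exact_mod_cast hk
          rw [hn2z] at hNz
          nlinarith
        exact_mod_cast hz
      have hcardle : Fintype.card (Option (Fin k × Fin 2)) ≤ Fintype.card (Fin N) := by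
        simp only [Fintype.card_option, Fintype.card_prod, Fintype.card_fin]
        omega
      obtain ⟨e⟩ := Function.Embedding.nonempty_of_card_le hcardle
      exact ⟨e, e.injective, fun a b hab =>
        (SimpleGraph.compl_adj red _ _).mpr ⟨fun h => hab.ne (e.injective h), hre _ _⟩⟩
  -- ================= case n ≥ 3 =================
  · have hext : 2*n + 2*k - 4 < N := by
      have hz := AR4 (k:ℤ) (m:ℤ) (n:ℤ) (N:ℤ) (by exact_mod_cast hk)
        (by exact_mod_cast hn3) (by exact_mod_cast h2m) (by exact_mod_cast hN)
      have : 2*n + 2*k < N + 4 := by exact_mod_cast (by linarith : 2*(n:ℤ) + 2*k < (N:ℤ) + 4)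
      omega
    by_cases hdeg1 : ∃ u : V, G.degree u = 1
    · -- there is a vertex of degree 1
      obtain ⟨u, hu⟩ := hdeg1
      obtain ⟨w, hw⟩ : ∃ w, G.neighborFinset u = {w} := Finset.card_eq_one.mp hu
      have huw : G.Adj u w := by
        rw [← SimpleGraph.mem_neighborFinset, hw]; exact Finset.mem_singleton_self w
      have hnbu : ∀ x : V, G.Adj u x → x = w := fun x hx =>
        Finset.mem_singleton.mp (hw ▸ (SimpleGraph.mem_neighborFinset _ _ _).mpr hx)
      by_cases hw1 : G.degree w = 1
      · -- `u w` is a K₂ component : delete both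
        have hnbw : ∀ x : V, G.Adj w x → x = u := by
          intro x hx
          obtain ⟨z, hz⟩ : ∃ z, G.neighborFinset w = {z} := Finset.card_eq_one.mp hw1
          have hu' : u ∈ G.neighborFinset w := (SimpleGraph.mem_neighborFinset _ _ _).mpr huw.symm
          have hx' : x ∈ G.neighborFinset w := (SimpleGraph.mem_neighborFinset _ _ _).mpr hx
          rw [hz, Finset.mem_singleton] at hu' hx'
          rw [hx', ← hu']
        have hn4 : 4 ≤ n := by
          by_contra hcon
          have hn3' : n = 3 := by omega
          obtain ⟨z, hzmem⟩ : ∃ z : V, z ∈ Finset.univ \ ({u, w} : Finset V) := by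
            apply Finset.card_pos.mp
            rw [Finset.card_sdiff_of_subset (Finset.subset_univ _), Finset.card_univ, hcard,
              Finset.card_insert_of_notMem (by simp [huw.ne]), Finset.card_singleton, hn3']
            omega
          rw [Finset.mem_sdiff, Finset.mem_insert, Finset.mem_singleton] at hzmem
          push_neg at hzmem
          obtain ⟨-, hzu, hzw⟩ := hzmem
          obtain ⟨y, hzy⟩ := hiso z
          have huniv3 : ({u, w, z} : Finset V) = Finset.univ := by
            apply Finset.eq_univ_of_card
            rw [hcard, hn3']
            rw [Finset.card_insert_of_notMem (by simp [huw.ne, Ne.symm hzu]),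
              Finset.card_insert_of_notMem (by simp [Ne.symm hzw]), Finset.card_singleton]
          have hy3 : y ∈ ({u, w, z} : Finset V) := huniv3 ▸ Finset.mem_univ y
          rw [Finset.mem_insert, Finset.mem_insert, Finset.mem_singleton] at hy3
          rcases hy3 with rfl | rfl | rfl
          · exact hzw (hnbu z hzy.symm)
          · exact hzu (hnbw z hzy.symm)
          · exact hzy.ne rfl
        have hiso2 : ∀ x : V, x ≠ u → x ≠ w → ∃ y : V, y ≠ u ∧ y ≠ w ∧ G.Adj x y := by
          intro x hxu hxw
          obtain ⟨y, hxy⟩ := hiso x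
          refine ⟨y, ?_, ?_, hxy⟩
          · rintro rfl
            exact hxw (hnbu x hxy.symm)
          · rintro rfl
            exact hxu (hnbw x hxy.symm)
        obtain ⟨f', hinj, hadj⟩ := delete_two hk IH V G n hn4 hcard hmF u w huw.ne
          (by omega) hiso2 N hN red HB
        set U : Finset (Fin N) := Finset.image f' Finset.univ with hUdef
        have hUcard : U.card = n - 2 := by
          rw [hUdef, Finset.card_image_of_injective _ hinj, Finset.card_univ,
            Fintype.card_subtype]
          rw [show Finset.univ.filter (fun x => x ≠ u ∧ x ≠ w) = Finset.univ \ {u, w} from by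
            ext x; simp [not_or]]
          rw [Finset.card_sdiff_of_subset (Finset.subset_univ _), Finset.card_univ, hcard]
          congr 1
          rw [Finset.card_insert_of_notMem (by simp [huw.ne]), Finset.card_singleton]
        obtain ⟨x₀, hx₀U, -⟩ := exists_extension red U ∅ (Finset.empty_subset _) 0
          (by simp) (by simp only [Finset.card_empty, Nat.zero_mul, Nat.add_zero]; omega)
        obtain ⟨y₀, hy₀, hy₀adj⟩ := exists_extension red (insert x₀ U) {x₀}
          (by simp) (n + 2*k - 3)
          (fun w' _ => by have := Hdeg w'; omega)
          (by
            have hci := Finset.card_insert_le x₀ U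
            simp only [Finset.card_singleton, one_mul]
            omega)
        have hxy₀ : red.Adj y₀ x₀ := hy₀adj x₀ (Finset.mem_singleton_self x₀)
        have hy₀U : y₀ ∉ U := fun h => hy₀ (Finset.mem_insert_of_mem h)
        have hy₀x : y₀ ≠ x₀ := hxy₀.ne
        apply HR
        refine ⟨fun v => if hvu : v = u then x₀ else if hvw : v = w then y₀
          else f' ⟨v, hvu, hvw⟩, ?_, ?_⟩
        · intro a b hab
          dsimp only at hab
          by_cases hau : a = u <;> by_cases hbu : b = u
          · rw [hau, hbu]
          · exfalso
            rw [dif_pos hau, dif_neg hbu] at hab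
            by_cases hbw : b = w
            · rw [dif_pos hbw] at hab
              exact hy₀x hab.symm
            · rw [dif_neg hbw] at hab
              exact hx₀U (hab ▸ Finset.mem_image_of_mem f' (Finset.mem_univ _))
          · exfalso
            rw [dif_neg hau, dif_pos hbu] at hab
            by_cases haw : a = w
            · rw [dif_pos haw] at hab
              exact hy₀x hab
            · rw [dif_neg haw] at hab
              exact hx₀U (hab ▸ Finset.mem_image_of_mem f' (Finset.mem_univ _))
          · rw [dif_neg hau, dif_neg hbu] at hab
            by_cases haw : a = w <;> by_cases hbw : b = w
            · rw [haw, hbw]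
            · exfalso
              rw [dif_pos haw, dif_neg hbw] at hab
              exact hy₀U (hab ▸ Finset.mem_image_of_mem f' (Finset.mem_univ _))
            · exfalso
              rw [dif_neg haw, dif_pos hbw] at hab
              exact hy₀U (hab ▸ Finset.mem_image_of_mem f' (Finset.mem_univ _))
            · rw [dif_neg haw, dif_neg hbw] at hab
              exact congrArg Subtype.val (hinj hab)
        · intro a b hab
          dsimp only
          by_cases hau : a = u
          · have hbw : b = w := hnbu b (hau ▸ hab)
            rw [dif_pos hau, dif_neg (hbw ▸ huw.ne' : b ≠ u), dif_pos hbw]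
            exact hxy₀.symm
          · by_cases hbu : b = u
            · have haw : a = w := hnbu a (hbu ▸ hab.symm)
              rw [dif_pos hbu, dif_neg (haw ▸ huw.ne' : a ≠ u), dif_pos haw]
              exact hxy₀
            · have haw : a ≠ w := fun h => hbu (hnbw b (h ▸ hab))
              have hbw : b ≠ w := fun h => hau (hnbw a (h ▸ hab).symm)
              rw [dif_neg hau, dif_neg haw, dif_neg hbu, dif_neg hbw]
              exact hadj _ _ hab
      · -- w has degree ≥ 2 : delete u only
        have hiso1 : ∀ x : V, x ≠ u → ∃ y : V, y ≠ u ∧ G.Adj x y := by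
          intro x hxu
          obtain ⟨y, hxy⟩ := hiso x
          by_cases hyu : y = u
          · have hxw : x = w := hnbu x (hyu ▸ hxy).symm
            have hdw2 : 1 < G.degree w := by
              have := hdegpos w
              omega
            obtain ⟨y', hy'mem, hy'u⟩ := Finset.exists_mem_ne hdw2 u
            exact ⟨y', hy'u, hxw ▸ (SimpleGraph.mem_neighborFinset _ _ _).mp hy'mem⟩
          · exact ⟨y, hyu, hxy⟩
        obtain ⟨f', hinj, hadj⟩ := delete_one hk IH V G n hn3 hcard hmF u (by omega)
          hiso1 N hN red HB
        set U : Finset (Fin N) := Finset.image f' Finset.univ with hUdef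
        have hUcard : U.card = n - 1 := by
          rw [hUdef, Finset.card_image_of_injective _ hinj, Finset.card_univ,
            Fintype.card_subtype]
          rw [show Finset.univ.filter (fun x : V => x ≠ u) = Finset.univ.erase u from by
            ext x; simp [Finset.mem_erase, and_comm]]
          rw [Finset.card_erase_of_mem (Finset.mem_univ u), Finset.card_univ, hcard]
        have hwu : w ≠ u := huw.ne'
        obtain ⟨x, hxU, hxadj⟩ := exists_extension red U {f' ⟨w, hwu⟩}
          (Finset.singleton_subset_iff.mpr (Finset.mem_image_of_mem f' (Finset.mem_univ _)))
          (n + 2*k - 3)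
          (fun w' _ => by have := Hdeg w'; omega)
          (by simp only [Finset.card_singleton, one_mul]; omega)
        apply HR
        refine ⟨fun v => if hvu : v = u then x else f' ⟨v, hvu⟩, ?_, ?_⟩
        · intro a b hab
          dsimp only at hab
          by_cases hau : a = u <;> by_cases hbu : b = u
          · rw [hau, hbu]
          · exfalso
            rw [dif_pos hau, dif_neg hbu] at hab
            exact hxU (hab ▸ Finset.mem_image_of_mem f' (Finset.mem_univ _))
          · exfalso
            rw [dif_neg hau, dif_pos hbu] at hab
            exact hxU (hab ▸ Finset.mem_image_of_mem f' (Finset.mem_univ _))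
          · rw [dif_neg hau, dif_neg hbu] at hab
            exact congrArg Subtype.val (hinj hab)
        · intro a b hab
          dsimp only
          by_cases hau : a = u
          · have hbw : b = w := hnbu b (hau ▸ hab)
            rw [dif_pos hau, dif_neg (hbw ▸ hwu : b ≠ u)]
            have : f' ⟨b, hbw ▸ hwu⟩ = f' ⟨w, hwu⟩ := by
              congr 1
              exact Subtype.ext hbw
            rw [this]
            exact hxadj _ (Finset.mem_singleton_self _)
          · by_cases hbu : b = u
            · have haw : a = w := hnbu a (hbu ▸ hab.symm)
              rw [dif_pos hbu, dif_neg (haw ▸ hwu : a ≠ u)]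
              have : f' ⟨a, haw ▸ hwu⟩ = f' ⟨w, hwu⟩ := by
                congr 1
                exact Subtype.ext haw
              rw [this]
              exact (hxadj _ (Finset.mem_singleton_self _)).symm
            · rw [dif_neg hau, dif_neg hbu]
              exact hadj _ _ hab
    · -- minimum degree at least 2
      have hne : Nonempty V := by
        rw [← Fintype.card_pos_iff, hcard]; omega
      obtain ⟨u, hu⟩ := G.exists_minimal_degree_vertex
      have hdmin : ∀ v : V, G.degree u ≤ G.degree v := fun v => hu ▸ G.minDegree_le_degree v
      have hd2 : 2 ≤ G.degree u := by
        have h1 := hdegpos u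
        have h2 : G.degree u ≠ 1 := fun h => hdeg1 ⟨u, h⟩
        omega
      have hnd : n * G.degree u ≤ 2 * m := by
        have hsum : Finset.univ.card • G.degree u ≤ ∑ v : V, G.degree v :=
          Finset.card_nsmul_le_sum _ _ _ (fun v _ => hdmin v)
        rw [Finset.card_univ, hcard, smul_eq_mul,
          SimpleGraph.sum_degrees_eq_twice_card_edges, hmF] at hsum
        exact hsum
      obtain ⟨f', hinj, hadj⟩ := delete_one hk IH V G n hn3 hcard hmF u (by omega)
        (fun x hxu => by
          have hdx : 1 < G.degree x := lt_of_lt_of_le (by omega) (hdmin x)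
          obtain ⟨y, hymem, hyu⟩ := Finset.exists_mem_ne hdx u
          exact ⟨y, hyu, (SimpleGraph.mem_neighborFinset _ _ _).mp hymem⟩) N hN red HB
      set U : Finset (Fin N) := Finset.image f' Finset.univ with hUdef
      have hUcard : U.card = n - 1 := by
        rw [hUdef, Finset.card_image_of_injective _ hinj, Finset.card_univ,
          Fintype.card_subtype]
        rw [show Finset.univ.filter (fun x : V => x ≠ u) = Finset.univ.erase u from by
          ext x; simp [Finset.mem_erase, and_comm]]
        rw [Finset.card_erase_of_mem (Finset.mem_univ u), Finset.card_univ, hcard]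
      set W : Finset (Fin N) := (G.neighborFinset u).attach.image
        (fun y => f' ⟨y.1, ((SimpleGraph.mem_neighborFinset _ _ _).mp y.2).ne'⟩) with hWdef
      have hWU : W ⊆ U := by
        intro z hz
        rw [hWdef, Finset.mem_image] at hz
        obtain ⟨y, -, rfl⟩ := hz
        exact Finset.mem_image_of_mem f' (Finset.mem_univ _)
      have hWcard : W.card = G.degree u := by
        rw [hWdef, Finset.card_image_of_injective, Finset.card_attach]
        · rfl
        · intro y1 y2 h
          exact Subtype.ext (by simpa using congrArg Subtype.val (hinj h))
      have hNext : U.card + W.card * (n + 2*k - 3) < N := by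
        rw [hUcard, hWcard]
        have h3 : 3 ≤ n + 2*k := by omega
        have h1n : 1 ≤ n := by omega
        zify [h3, h1n]
        have hz := AR6 (k:ℤ) (m:ℤ) (n:ℤ) (G.degree u : ℤ) (N:ℤ) (by exact_mod_cast hk)
          (by exact_mod_cast hn3) (by exact_mod_cast hnd) (by positivity)
          (by positivity) (by exact_mod_cast hN)
        linarith
      obtain ⟨x, hxU, hxadj⟩ := exists_extension red U W hWU (n + 2*k - 3)
        (fun w' _ => by have := Hdeg w'; omega) hNext
      apply HR
      refine ⟨fun v => if hvu : v = u then x else f' ⟨v, hvu⟩, ?_, ?_⟩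
      · intro a b hab
        dsimp only at hab
        by_cases hau : a = u <;> by_cases hbu : b = u
        · rw [hau, hbu]
        · exfalso
          rw [dif_pos hau, dif_neg hbu] at hab
          exact hxU (hab ▸ Finset.mem_image_of_mem f' (Finset.mem_univ _))
        · exfalso
          rw [dif_neg hau, dif_pos hbu] at hab
          exact hxU (hab ▸ Finset.mem_image_of_mem f' (Finset.mem_univ _))
        · rw [dif_neg hau, dif_neg hbu] at hab
          exact congrArg Subtype.val (hinj hab)
      · intro a b hab
        dsimp only
        by_cases hau : a = u
        · rw [dif_pos hau, dif_neg ((hau ▸ hab : G.Adj u b)).ne']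
          apply hxadj
          rw [hWdef, Finset.mem_image]
          exact ⟨⟨b, (SimpleGraph.mem_neighborFinset _ _ _).mpr (hau ▸ hab)⟩,
            Finset.mem_attach _ _, rfl⟩
        · by_cases hbu : b = u
          · rw [dif_pos hbu, dif_neg ((hbu ▸ hab.symm : G.Adj u a)).ne']
            refine (hxadj _ ?_).symm
            rw [hWdef, Finset.mem_image]
            exact ⟨⟨a, (SimpleGraph.mem_neighborFinset _ _ _).mpr (hbu ▸ hab.symm)⟩,
              Finset.mem_attach _ _, rfl⟩
          · rw [dif_neg hau, dif_neg hbu]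
            exact hadj _ _ hab


lemma main_all (k m : ℕ) (hk : 1 ≤ k) : MainStmt.{u} k m := by
  induction m using Nat.strong_induction_on with
  | _ m IH => exact main_step k m hk IH

/-- Lemma 9: if `G` is a simple graph on `n ≥ 2` vertices none of which is isolated and
with `m` edges, then `r(G, F_k) ≤ n + 2mk − 2m/n`. -/
theorem ramsey_fan_upper {V : Type*} [Fintype V] (n m k : ℕ) (hk : 1 ≤ k) (hn : 2 ≤ n)
    (G : SimpleGraph V) (hcard : Fintype.card V = n) (hm : G.edgeSet.ncard = m)
    (hiso : ∀ v : V, ∃ w : V, G.Adj v w) :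
    (ramseyNumber G (fan k) : ℝ) ≤ (n : ℝ) + 2 * (m : ℝ) * (k : ℝ) - 2 * (m : ℝ) / (n : ℝ) := by
  classical
  letI : DecidableRel G.Adj := Classical.decRel _
  have hmF : G.edgeFinset.card = m := by rw [← hm, ← SimpleGraph.coe_edgeFinset, Set.ncard_coe_finset]
  have hdegpos : ∀ v : V, 1 ≤ G.degree v := fun v =>
    (G.degree_pos_iff_exists_adj v).mpr (hiso v)
  have h2m : n ≤ 2 * m := by
    have hh := SimpleGraph.sum_degrees_eq_twice_card_edges G
    calc n = ∑ _v : V, 1 := by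
          rw [Finset.sum_const, smul_eq_mul, Finset.card_univ, hcard, mul_one]
    _ ≤ ∑ v : V, G.degree v := Finset.sum_le_sum fun v _ => hdegpos v
    _ = 2 * m := by rw [hh, hmF]
  have hm1 : 1 ≤ m := by omega
  obtain ⟨c, hc⟩ : ∃ c, (2*m + n - 1)/n = c := ⟨_, rfl⟩
  have hdm := Nat.div_add_mod (2*m + n - 1) n
  have hmod := Nat.mod_lt (2*m + n - 1) (show 0 < n by omega)
  rw [hc] at hdm
  have hclow : 2*m ≤ n*c := by omega
  have hcn : n*c ≤ 2*m + n - 1 := by omega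
  have h2c : 2*c ≤ n*c := Nat.mul_le_mul_right c hn
  have h2mk : 2*m ≤ 2*m*k := Nat.le_mul_of_pos_right (2*m) hk
  have hcle : c ≤ 2*m*k := by omega
  set N₀ := n + (2*m*k - c) with hN₀
  have hNcond : n * (n + 2*m*k) < 2*m + n + n*N₀ := by
    have e1 : n*N₀ = n*n + (n*(2*m*k) - n*c) := by
      rw [hN₀, Nat.mul_add, Nat.mul_sub]
    have e2 : n*(n + 2*m*k) = n*n + n*(2*m*k) := by ring
    have e3 : n*c ≤ n*(2*m*k) := Nat.mul_le_mul_left n hcle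
    omega
  have hmem : ramseyProp G (fan k) N₀ :=
    main_all k m hk V inferInstance G n hn hcard hm hiso N₀ hNcond
  have hle : ramseyNumber G (fan k) ≤ N₀ := Nat.sInf_le hmem
  have hstep1 : (ramseyNumber G (fan k) : ℝ) ≤ (N₀ : ℝ) := by exact_mod_cast hle
  refine hstep1.trans ?_
  have hn0R : (0:ℝ) < n := by exact_mod_cast (show 0 < n by omega)
  have hcR : 2*(m:ℝ)/n ≤ c := by
    rw [div_le_iff₀ hn0R]
    have hx : (2*(m:ℝ)) ≤ (n:ℝ)*c := by exact_mod_cast hclow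
    linarith
  have hNval : (N₀:ℝ) = n + 2*(m:ℝ)*k - c := by
    rw [hN₀]
    push_cast [hcle]
    ring
  rw [hNval]
  linarith
end

section
/- If G is a simple graph on n ≥ 2 vertices, none of which is isolated, and with m edges, then for any positive integers k and t, the Ramsey number satisfies r(G, tF_k) ≤ n + 2mk − 2m/n + (t − 1)(2k + 1) (an inequality of real numbers). -/
open SimpleGraph

section AuxiliaryLemmas

open Finset

lemma key_arith (n m k J t b c : ℕ) (hn : 2 ≤ n) (hm : 1 ≤ m) (hk : 1 ≤ k)
    (hJ1 : 1 ≤ J) (hJn : J ≤ n) (ht : t + 1 ≤ J) (htJ : t * J ≤ 2 * m)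
    (hb : b + 3 ≤ J + 2 * k) (hc1 : 2 * m ≤ n * c) (hc2 : n * c < 2 * m + n) :
    J + t * b + c ≤ n + 2 * m * k := by
  zify at *
  have hcm : (c : ℤ) ≤ m := by nlinarith
  rcases eq_or_lt_of_le hk with hk1 | hk2
  · have hk1 : (k : ℤ) = 1 := hk1.symm
    have hbJ : (b : ℤ) ≤ J - 1 := by omega
    rcases le_or_gt (c : ℤ) t with hct | htc
    · have h1 : (t : ℤ) * b ≤ t * (J - 1) :=
        mul_le_mul_of_nonneg_left hbJ (by positivity)
      nlinarith
    · have h1 : (t : ℤ) * b ≤ (c - 1) * (n - 1) := by nlinarith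
      nlinarith
  · have hk2 : (2 : ℤ) ≤ k := by exact_mod_cast hk2
    rcases Nat.eq_zero_or_pos t with ht0 | ht1
    · subst ht0; push_cast; nlinarith
    · have ht1 : (1 : ℤ) ≤ t := by exact_mod_cast ht1
      have htm : (t : ℤ) ≤ m := by nlinarith
      have h1 : (t : ℤ) * b ≤ t * J + t * (2 * k - 3) := by nlinarith
      nlinarith


lemma matching_or_indep {α : Type*} [DecidableEq α] (B : SimpleGraph α)
    [DecidableRel B.Adj] :
    ∀ (q : ℕ), 1 ≤ q → ∀ (S : Finset α),
      (∃ f : Fin q → α × α,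
        (∀ i, (f i).1 ∈ S ∧ (f i).2 ∈ S ∧ B.Adj (f i).1 (f i).2) ∧
        (∀ i i', i ≠ i' → (f i).1 ≠ (f i').1 ∧ (f i).1 ≠ (f i').2 ∧
            (f i).2 ≠ (f i').1 ∧ (f i).2 ≠ (f i').2)) ∨
      (∃ W : Finset α, W ⊆ S ∧ (∀ x ∈ W, ∀ y ∈ W, x ≠ y → ¬ B.Adj x y) ∧
        S.card ≤ W.card + 2 * (q - 1)) := by
  intro q
  induction q with
  | zero => omega
  | succ q IH =>
    intro _ S
    rcases Nat.eq_zero_or_pos q with hq0 | hq1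
    · -- q + 1 = 1
      subst hq0
      by_cases h : ∃ x ∈ S, ∃ y ∈ S, B.Adj x y
      · obtain ⟨x, hx, y, hy, hxy⟩ := h
        left
        exact ⟨fun _ => (x, y), fun _ => ⟨hx, hy, hxy⟩,
          fun i i' hii => absurd (Fin.ext (by omega)) hii⟩
      · right
        push_neg at h
        exact ⟨S, le_refl _, fun x hx y hy _ => h x hx y hy, by omega⟩
    · rcases IH hq1 S with ⟨f, hf1, hf2⟩ | ⟨W, hW1, hW2, hW3⟩
      · -- have a q-matching, try to extend
        set U : Finset α := Finset.univ.biUnion (fun i : Fin q => {(f i).1, (f i).2}) with hU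
        have hUcard : U.card ≤ 2 * q := by
          calc U.card ≤ ∑ i : Fin q, ({(f i).1, (f i).2} : Finset α).card :=
                Finset.card_biUnion_le
            _ ≤ ∑ _i : Fin q, 2 := by
                exact Finset.sum_le_sum fun i _ => Finset.card_insert_le _ _ |>.trans (by simp)
            _ = 2 * q := by simp [mul_comm]
        have hmemU : ∀ i : Fin q, (f i).1 ∈ U ∧ (f i).2 ∈ U := by
          intro i
          constructor <;>
          · refine Finset.mem_biUnion.2 ⟨i, Finset.mem_univ _, ?_⟩
            simp
        by_cases h : ∃ x ∈ S \ U, ∃ y ∈ S \ U, B.Adj x y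
        · obtain ⟨x, hx, y, hy, hxy⟩ := h
          rw [Finset.mem_sdiff] at hx hy
          left
          refine ⟨Fin.snoc f (x, y), ?_, ?_⟩
          · intro i
            refine Fin.lastCases ?_ ?_ i
            · simp only [Fin.snoc_last]
              exact ⟨hx.1, hy.1, hxy⟩
            · intro j; simp only [Fin.snoc_castSucc]; exact hf1 j
          · have hnew : ∀ j : Fin q, x ≠ (f j).1 ∧ x ≠ (f j).2 ∧
                y ≠ (f j).1 ∧ y ≠ (f j).2 := by
              intro j
              refine ⟨?_, ?_, ?_, ?_⟩ <;> rintro rfl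
              · exact hx.2 (hmemU j).1
              · exact hx.2 (hmemU j).2
              · exact hy.2 (hmemU j).1
              · exact hy.2 (hmemU j).2
            intro i i'
            refine Fin.lastCases ?_ (fun j => ?_) i <;>
              refine Fin.lastCases ?_ (fun j' => ?_) i' <;> intro hii <;>
              simp only [Fin.snoc_last, Fin.snoc_castSucc]
            · exact absurd rfl hii
            · obtain ⟨h1, h2, h3, h4⟩ := hnew j'
              exact ⟨h1, h2, h3, h4⟩
            · obtain ⟨h1, h2, h3, h4⟩ := hnew j
              exact ⟨h1.symm, h3.symm, h2.symm, h4.symm⟩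
            · exact hf2 j j' (fun hjj => hii (by rw [hjj]))
        · right
          push_neg at h
          refine ⟨S \ U, Finset.sdiff_subset, ?_, ?_⟩
          · intro a ha bb hb _ hadj; exact h a ha bb hb hadj
          · have : S.card ≤ (S \ U).card + U.card := Finset.card_le_card_sdiff_add_card
            omega
      · right
        exact ⟨W, hW1, hW2, by omega⟩

lemma greedy_embed {V γ : Type*} [Fintype V] [Fintype γ] [DecidableEq γ]
    (G : SimpleGraph V) [DecidableRel G.Adj] (B : SimpleGraph γ) [DecidableRel B.Adj]
    (n m k b c : ℕ) (hn : 2 ≤ n) (hk : 1 ≤ k) (hm1 : 1 ≤ m)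
    (hcard : Fintype.card V = n) (hdegsum : ∑ v, G.degree v = 2 * m)
    (hc1 : 2 * m ≤ n * c) (hc2 : n * c < 2 * m + n) (hck : c ≤ 2 * m * k)
    (S : Finset γ) (hS : n + (2 * m * k - c) ≤ S.card)
    (hmax : ∀ u ∈ S, (B.neighborFinset u ∩ S).card ≤ b)
    (W : Finset γ) (hWS : W ⊆ S)
    (hWind : ∀ x ∈ W, ∀ y ∈ W, x ≠ y → ¬B.Adj x y)
    (hWn : W.card < n) (hbW : b ≤ W.card + 2 * (k - 1)) :
    Bᶜ.ContainsCopy G := by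
  have hn1 : 1 ≤ n := by omega
  have hdeglt : ∀ v : V, G.degree v < n := by
    intro v; rw [← hcard]; exact G.degree_lt_card_verts v
  obtain ⟨e, hsort⟩ : ∃ e : Fin n ≃ V,
      ∀ a b' : Fin n, a ≤ b' → G.degree (e b') ≤ G.degree (e a) := by
    have e0 : Fin n ≃ V := (Fintype.equivFinOfCardEq hcard).symm
    refine ⟨(Tuple.sort (fun i => n - G.degree (e0 i))).trans e0, ?_⟩
    intro a b' hab
    have h := Tuple.monotone_sort (fun i => n - G.degree (e0 i)) hab
    simp only [Function.comp_apply] at h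
    simp only [Equiv.trans_apply]
    have h1 := hdeglt (e0 (Tuple.sort (fun i => n - G.degree (e0 i)) a))
    have h2 := hdeglt (e0 (Tuple.sort (fun i => n - G.degree (e0 i)) b'))
    exact (Nat.sub_le_sub_iff_left h2.le).mp h
  -- partial sums
  have hpartial : ∀ j : Fin n, (j.val + 1) * G.degree (e j) ≤ 2 * m := by
    intro j
    have h1 : ∑ i : Fin n, G.degree (e i) = 2 * m := by
      rw [← hdegsum]
      exact Fintype.sum_equiv e _ _ (fun i => rfl)
    have h2 : ∑ i ∈ Finset.Iic j, G.degree (e i)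
        ≤ ∑ i : Fin n, G.degree (e i) :=
      Finset.sum_le_sum_of_subset (Finset.subset_univ _)
    have h3 : (j.val + 1) * G.degree (e j)
        ≤ ∑ i ∈ Finset.Iic j, G.degree (e i) := by
      have hcardf : (Finset.Iic j).card = j.val + 1 := Fin.card_Iic j
      calc (j.val + 1) * G.degree (e j)
          = ∑ _i ∈ Finset.Iic j, G.degree (e j) := by
            rw [Finset.sum_const, hcardf, smul_eq_mul]
        _ ≤ _ := Finset.sum_le_sum (fun i hi => hsort i j (Finset.mem_Iic.mp hi))
    omega
  -- the greedy construction
  have hSpos : 0 < S.card := by omega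
  set w := W.card with hw
  have main : ∀ j, w ≤ j → j ≤ n →
      ∃ φ : ℕ → γ, (∀ i < j, φ i ∈ S) ∧
        (∀ i1 < j, ∀ i2 < j, i1 ≠ i2 → φ i1 ≠ φ i2) ∧
        (∀ i1, ∀ (h1 : i1 < n), i1 < j → ∀ i2, ∀ (h2 : i2 < n), i2 < j →
          G.Adj (e ⟨i1, h1⟩) (e ⟨i2, h2⟩) → ¬B.Adj (φ i1) (φ i2)) := by
    intro j hwj
    induction j, hwj using Nat.le_induction with
    | base =>
      intro hjn
      -- embed into W
      obtain ⟨u0, hu0⟩ := Finset.card_pos.mp hSpos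
      have hcw : Fintype.card ↥W = w := by rw [Fintype.card_coe]
      let ow : Fin w ≃ ↥W := (Fintype.equivFinOfCardEq hcw).symm
      refine ⟨fun i => if h : i < w then (ow ⟨i, h⟩ : γ) else u0, ?_, ?_, ?_⟩
      · intro i hi; dsimp only; rw [dif_pos hi]; exact hWS (ow ⟨i, hi⟩).2
      · intro i1 h1 i2 h2 h12
        dsimp only; rw [dif_pos h1, dif_pos h2]
        intro hc
        have : (⟨i1, h1⟩ : Fin w) = ⟨i2, h2⟩ := ow.injective (Subtype.ext hc)
        exact h12 (by simpa using this)
      · intro i1 h1n h1 i2 h2n h2 hadj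
        dsimp only; rw [dif_pos h1, dif_pos h2]
        refine hWind _ (ow ⟨i1, h1⟩).2 _ (ow ⟨i2, h2⟩).2 ?_
        intro hc
        have heq : (⟨i1, h1⟩ : Fin w) = ⟨i2, h2⟩ := ow.injective (Subtype.ext hc)
        have heq2 : i1 = i2 := by simpa using heq
        subst heq2
        exact hadj.ne rfl
    | succ j hwj IH =>
      intro hjn
      have hjn' : j ≤ n := by omega
      have hjltn : j < n := by omega
      obtain ⟨φ, hφS, hφinj, hφadj⟩ := IH hjn'
      set vj : V := e ⟨j, hjltn⟩ with hvj
      set tset : Finset ℕ :=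
        (Finset.range j).filter (fun i =>
          ∃ h : i < n, G.Adj (e ⟨i, h⟩) vj) with htset
      set t := tset.card with htdef
      have htsub : ∀ i ∈ tset, i < j := by
        intro i hi; exact Finset.mem_range.mp (Finset.mem_filter.mp hi).1
      have htj : t ≤ j := by
        calc t ≤ (Finset.range j).card := Finset.card_le_card (Finset.filter_subset _ _)
          _ = j := Finset.card_range j
      have htd : t ≤ G.degree vj := by
        rw [htdef]
        have : ∀ i ∈ tset, ∃ h : i < n, (e ⟨i, h⟩) ∈ G.neighborFinset vj := by
          intro i hi
          obtain ⟨h, hadj⟩ := (Finset.mem_filter.mp hi).2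
          exact ⟨h, (SimpleGraph.mem_neighborFinset _ _ _).mpr hadj.symm⟩
        rw [← SimpleGraph.card_neighborFinset_eq_degree]
        apply Finset.card_le_card_of_injOn
          (fun i => if h : i < n then e ⟨i, h⟩ else vj)
        · intro i hi
          obtain ⟨h, hmem⟩ := this i hi
          dsimp only; rw [dif_pos h]; exact hmem
        · intro i1 h1 i2 h2 heq
          have hi1 : i1 < n := lt_trans (htsub _ h1) hjltn
          have hi2 : i2 < n := lt_trans (htsub _ h2) hjltn
          dsimp only at heq
          rw [dif_pos hi1, dif_pos hi2] at heq
          have := e.injective heq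
          simpa using this
      have htn : t * (j + 1) ≤ 2 * m := by
        calc t * (j + 1) ≤ G.degree vj * (j + 1) := Nat.mul_le_mul_right _ htd
          _ = (j + 1) * G.degree vj := Nat.mul_comm _ _
          _ ≤ 2 * m := hpartial ⟨j, hjltn⟩
      -- candidate set
      set bad : Finset γ := (Finset.range j).image φ ∪
          tset.biUnion (fun i => B.neighborFinset (φ i) ∩ S) with hbad
      have hbadcard : bad.card ≤ j + t * b := by
        calc bad.card ≤ ((Finset.range j).image φ).card +
            (tset.biUnion (fun i => B.neighborFinset (φ i) ∩ S)).card :=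
              Finset.card_union_le _ _
          _ ≤ j + t * b := by
              have h1 : ((Finset.range j).image φ).card ≤ j := by
                calc _ ≤ (Finset.range j).card := Finset.card_image_le
                  _ = j := Finset.card_range j
              have h2 : (tset.biUnion (fun i => B.neighborFinset (φ i) ∩ S)).card
                  ≤ t * b := by
                calc _ ≤ ∑ i ∈ tset, (B.neighborFinset (φ i) ∩ S).card :=
                      Finset.card_biUnion_le
                  _ ≤ ∑ _i ∈ tset, b := Finset.sum_le_sum (fun i hi =>
                      hmax (φ i) (hφS i (htsub i hi)))
                  _ = t * b := by rw [Finset.sum_const, smul_eq_mul]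
              omega
      have harith : (j + 1) + t * b + c ≤ n + 2 * m * k := by
        apply key_arith n m k (j + 1) t b c hn hm1 hk (by omega) (by omega)
          (by omega) htn ?_ hc1 hc2
        -- b + 3 ≤ (j+1) + 2k
        omega
      have hcand : 0 < (S \ bad).card := by
        have := Finset.card_le_card_sdiff_add_card (s := S) (t := bad)
        omega
      obtain ⟨x, hx⟩ := Finset.card_pos.mp hcand
      rw [Finset.mem_sdiff] at hx
      refine ⟨fun i => if i = j then x else φ i, ?_, ?_, ?_⟩
      · intro i hi
        dsimp only
        by_cases h : i = j
        · rw [if_pos h]; exact hx.1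
        · rw [if_neg h]; exact hφS i (by omega)
      · intro i1 h1 i2 h2 h12
        dsimp only
        by_cases e1 : i1 = j <;> by_cases e2 : i2 = j
        · omega
        · rw [if_pos e1, if_neg e2]
          intro hcon
          exact hx.2 (Finset.mem_union_left _ (Finset.mem_image.mpr
            ⟨i2, Finset.mem_range.mpr (by omega), hcon.symm⟩))
        · rw [if_neg e1, if_pos e2]
          intro hcon
          exact hx.2 (Finset.mem_union_left _ (Finset.mem_image.mpr
            ⟨i1, Finset.mem_range.mpr (by omega), hcon⟩))
        · rw [if_neg e1, if_neg e2]
          exact hφinj i1 (by omega) i2 (by omega) h12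
      · intro i1 h1n h1 i2 h2n h2 hadj
        dsimp only
        by_cases e1 : i1 = j <;> by_cases e2 : i2 = j
        · subst e1; subst e2; exact absurd hadj (G.irrefl)
        · subst e1
          rw [if_pos rfl, if_neg e2]
          have hi2t : i2 ∈ tset := by
            refine Finset.mem_filter.mpr ⟨Finset.mem_range.mpr (by omega), ⟨h2n, ?_⟩⟩
            exact hadj.symm
          intro hcon
          apply hx.2
          refine Finset.mem_union_right _ (Finset.mem_biUnion.mpr ⟨i2, hi2t, ?_⟩)
          rw [Finset.mem_inter, SimpleGraph.mem_neighborFinset]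
          exact ⟨hcon.symm, hx.1⟩
        · subst e2
          rw [if_neg e1, if_pos rfl]
          have hi1t : i1 ∈ tset := by
            refine Finset.mem_filter.mpr ⟨Finset.mem_range.mpr (by omega), ⟨h1n, ?_⟩⟩
            exact hadj
          intro hcon
          apply hx.2
          refine Finset.mem_union_right _ (Finset.mem_biUnion.mpr ⟨i1, hi1t, ?_⟩)
          rw [Finset.mem_inter, SimpleGraph.mem_neighborFinset]
          exact ⟨hcon, hx.1⟩
        · rw [if_neg e1, if_neg e2]
          exact hφadj i1 h1n (by omega) i2 h2n (by omega) hadj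
  -- conclude
  obtain ⟨φ, hφS, hφinj, hφadj⟩ := main n (by omega) le_rfl
  refine ⟨fun v => φ (e.symm v).val, ?_, ?_⟩
  · intro a b' hab
    by_cases h : (e.symm a).val = (e.symm b').val
    · have : e.symm a = e.symm b' := Fin.ext h
      exact e.symm.injective this
    · exact absurd hab (hφinj _ (e.symm a).isLt _ (e.symm b').isLt h)
  · intro a b' hadj
    have hne : a ≠ b' := hadj.ne
    have hidx : (e.symm a).val ≠ (e.symm b').val := by
      intro h; exact hne (e.symm.injective (Fin.ext h))
    rw [SimpleGraph.compl_adj]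
    refine ⟨hφinj _ (e.symm a).isLt _ (e.symm b').isLt hidx, ?_⟩
    apply hφadj _ (e.symm a).isLt (e.symm a).isLt _ (e.symm b').isLt (e.symm b').isLt
    have h1 : e ⟨(e.symm a).val, (e.symm a).isLt⟩ = a := by
      rw [Fin.eta]; exact e.apply_symm_apply a
    have h2 : e ⟨(e.symm b').val, (e.symm b').isLt⟩ = b' := by
      rw [Fin.eta]; exact e.apply_symm_apply b'
    rw [h1, h2]; exact hadj

lemma core_fan {V γ : Type*} [Fintype V] [Fintype γ] [DecidableEq γ]
    (G : SimpleGraph V) [DecidableRel G.Adj] (B : SimpleGraph γ) [DecidableRel B.Adj]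
    (n m k c : ℕ) (hn : 2 ≤ n) (hk : 1 ≤ k) (hm1 : 1 ≤ m)
    (hcard : Fintype.card V = n) (hdegsum : ∑ v, G.degree v = 2 * m)
    (hc1 : 2 * m ≤ n * c) (hc2 : n * c < 2 * m + n) (hck : c ≤ 2 * m * k)
    (S : Finset γ) (hS : n + (2 * m * k - c) ≤ S.card) :
    Bᶜ.ContainsCopy G ∨ ∃ f : Option (Fin k × Fin 2) → γ, Function.Injective f ∧
      (∀ ⦃a b⦄, (fan k).Adj a b → B.Adj (f a) (f b)) ∧ (∀ x, f x ∈ S) := by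
  have hSpos : 0 < S.card := by omega
  have hSne : S.Nonempty := Finset.card_pos.mp hSpos
  obtain ⟨u0, hu0S, hu0max⟩ : ∃ u0 ∈ S, ∀ u ∈ S,
      (B.neighborFinset u ∩ S).card ≤ (B.neighborFinset u0 ∩ S).card :=
    S.exists_max_image (fun u => (B.neighborFinset u ∩ S).card) hSne
  rcases matching_or_indep B k hk (B.neighborFinset u0 ∩ S) with
    ⟨f, hf1, hf2⟩ | ⟨W, hW1, hW2, hW3⟩
  · -- blue fan centered at u0
    right
    have hend : ∀ i : Fin k, B.Adj u0 (f i).1 ∧ B.Adj u0 (f i).2 ∧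
        (f i).1 ∈ S ∧ (f i).2 ∈ S := by
      intro i
      obtain ⟨h1, h2, _⟩ := hf1 i
      rw [Finset.mem_inter, SimpleGraph.mem_neighborFinset] at h1 h2
      exact ⟨h1.1, h2.1, h1.2, h2.2⟩
    refine ⟨fun x => x.elim u0 (fun p => if p.2 = 0 then (f p.1).1 else (f p.1).2),
      ?_, ?_, ?_⟩
    · -- injective
      intro x y hxy
      match x, y with
      | none, none => rfl
      | none, some (i, a) =>
        exfalso
        simp only [Option.elim_none, Option.elim_some] at hxy
        by_cases ha : a = 0
        · rw [if_pos ha] at hxy; exact (hend i).1.ne hxy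
        · rw [if_neg ha] at hxy; exact (hend i).2.1.ne hxy
      | some (i, a), none =>
        exfalso
        simp only [Option.elim_none, Option.elim_some] at hxy
        by_cases ha : a = 0
        · rw [if_pos ha] at hxy; exact (hend i).1.ne' hxy
        · rw [if_neg ha] at hxy; exact (hend i).2.1.ne' hxy
      | some (i, a), some (i', a') =>
        simp only [Option.elim_some] at hxy
        by_cases hi : i = i'
        · subst hi
          by_cases ha : a = 0 <;> by_cases ha' : a' = 0
          · rw [ha, ha']
          · rw [if_pos ha, if_neg ha'] at hxy
            exact absurd hxy (hf1 i).2.2.ne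
          · rw [if_neg ha, if_pos ha'] at hxy
            exact absurd hxy (hf1 i).2.2.ne'
          · have : a = a' := by omega
            rw [this]
        · exfalso
          obtain ⟨h11, h12, h21, h22⟩ := hf2 i i' hi
          by_cases ha : a = 0 <;> by_cases ha' : a' = 0 <;>
            [rw [if_pos ha, if_pos ha'] at hxy;
             rw [if_pos ha, if_neg ha'] at hxy;
             rw [if_neg ha, if_pos ha'] at hxy;
             rw [if_neg ha, if_neg ha'] at hxy]
          · exact h11 hxy
          · exact h12 hxy
          · exact h21 hxy
          · exact h22 hxy
    · -- adjacency
      intro a b hadj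
      rw [fan, SimpleGraph.fromRel_adj] at hadj
      obtain ⟨hne, hr⟩ := hadj
      match a, b with
      | none, none => exact absurd rfl hne
      | none, some (i, a') =>
        simp only [Option.elim_none, Option.elim_some]
        by_cases ha : a' = 0
        · rw [if_pos ha]; exact (hend i).1
        · rw [if_neg ha]; exact (hend i).2.1
      | some (i, a'), none =>
        simp only [Option.elim_none, Option.elim_some]
        by_cases ha : a' = 0
        · rw [if_pos ha]; exact (hend i).1.symm
        · rw [if_neg ha]; exact (hend i).2.1.symm
      | some (i, x), some (i', y) =>
        simp only [Option.elim_some]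
        have hii : i = i' := by
          rcases hr with (h | ⟨i0, a0, b0, he1, he2⟩) | (h | ⟨i0, a0, b0, he1, he2⟩)
          · exact absurd h (Option.some_ne_none _)
          · have h1 : i = i0 := congrArg Prod.fst (Option.some.inj he1)
            have h2 : i' = i0 := congrArg Prod.fst (Option.some.inj he2)
            exact h1.trans h2.symm
          · exact absurd h (Option.some_ne_none _)
          · have h1 : i' = i0 := congrArg Prod.fst (Option.some.inj he1)
            have h2 : i = i0 := congrArg Prod.fst (Option.some.inj he2)
            exact h2.trans h1.symm
        subst hii
        have hxy : x ≠ y := fun h => hne (by rw [h])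
        have hB := (hf1 i).2.2
        by_cases hx0 : x = 0 <;> by_cases hy0 : y = 0
        · exact absurd (hx0.trans hy0.symm) hxy
        · rw [if_pos hx0, if_neg hy0]; exact hB
        · rw [if_neg hx0, if_pos hy0]; exact hB.symm
        · exfalso; apply hxy; omega
    · -- in S
      intro x
      match x with
      | none => exact hu0S
      | some (i, a) =>
        simp only [Option.elim_some]
        by_cases ha : a = 0
        · rw [if_pos ha]; exact (hend i).2.2.1
        · rw [if_neg ha]; exact (hend i).2.2.2
  · -- independent set
    rcases le_or_gt n W.card with hnW | hWn
    · left
      have hcardle : Fintype.card V ≤ Fintype.card ↥W := by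
        rw [hcard, Fintype.card_coe]; exact hnW
      obtain ⟨ι⟩ := Function.Embedding.nonempty_of_card_le hcardle
      refine ⟨fun v => (ι v : γ), ?_, ?_⟩
      · intro a b hab
        exact ι.injective (Subtype.ext hab)
      · intro a b hadj
        rw [SimpleGraph.compl_adj]
        have hne : (ι a : γ) ≠ (ι b : γ) := by
          intro hc
          exact hadj.ne (ι.injective (Subtype.ext hc))
        exact ⟨hne, hW2 _ (ι a).2 _ (ι b).2 hne⟩
    · left
      refine greedy_embed G B n m k (B.neighborFinset u0 ∩ S).card c hn hk hm1 hcard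
        hdegsum hc1 hc2 hck S hS hu0max W
        (hW1.trans Finset.inter_subset_right) hW2 hWn hW3

lemma multi_fan {V γ : Type*} [Fintype V] [Fintype γ] [DecidableEq γ]
    (G : SimpleGraph V) [DecidableRel G.Adj] (B : SimpleGraph γ) [DecidableRel B.Adj]
    (n m k c : ℕ) (hn : 2 ≤ n) (hk : 1 ≤ k) (hm1 : 1 ≤ m)
    (hcard : Fintype.card V = n) (hdegsum : ∑ v, G.degree v = 2 * m)
    (hc1 : 2 * m ≤ n * c) (hc2 : n * c < 2 * m + n) (hck : c ≤ 2 * m * k) :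
    ∀ (t' : ℕ) (S : Finset γ), n + (2 * m * k - c) + t' * (2 * k + 1) ≤ S.card →
      Bᶜ.ContainsCopy G ∨ ∃ f : (Fin (t' + 1) × Option (Fin k × Fin 2)) → γ,
        Function.Injective f ∧
        (∀ ⦃a b⦄, (copies (t' + 1) (fan k)).Adj a b → B.Adj (f a) (f b)) ∧
        (∀ x, f x ∈ S) := by
  intro t'
  induction t' with
  | zero =>
    intro S hScard
    rcases core_fan G B n m k c hn hk hm1 hcard hdegsum hc1 hc2 hck S (by omega) with
      hred | ⟨f0, hf0inj, hf0adj, hf0S⟩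
    · exact Or.inl hred
    · right
      refine ⟨fun p => f0 p.2, ?_, ?_, fun p => hf0S p.2⟩
      · intro p q hpq
        have h2 : p.2 = q.2 := hf0inj hpq
        have h1 : p.1 = q.1 := Fin.ext (by omega)
        exact Prod.ext h1 h2
      · intro p q hpq
        exact hf0adj (show p.1 = q.1 ∧ (fan k).Adj p.2 q.2 from hpq).2
  | succ t' IH =>
    intro S hScard
    rcases core_fan G B n m k c hn hk hm1 hcard hdegsum hc1 hc2 hck S (by omega) with
      hred | ⟨f0, hf0inj, hf0adj, hf0S⟩
    · exact Or.inl hred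
    · set Im : Finset γ := Finset.image f0 Finset.univ with hIm
      have hImcard : Im.card ≤ 2 * k + 1 := by
        calc Im.card ≤ (Finset.univ : Finset (Option (Fin k × Fin 2))).card :=
            Finset.card_image_le
          _ = 2 * k + 1 := by simp [Finset.card_univ]; ring
      have hS'card : n + (2 * m * k - c) + t' * (2 * k + 1) ≤ (S \ Im).card := by
        have h1 : S.card ≤ (S \ Im).card + Im.card := Finset.card_le_card_sdiff_add_card
        have : (t' + 1) * (2 * k + 1) = t' * (2 * k + 1) + (2 * k + 1) := by ring
        omega
      rcases IH (S \ Im) hS'card with hred | ⟨g, hginj, hgadj, hgS⟩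
      · exact Or.inl hred
      · right
        refine ⟨fun p => if h : p.1.val = 0 then f0 p.2
            else g (⟨p.1.val - 1, by omega⟩, p.2), ?_, ?_, ?_⟩
        · intro p q hpq
          dsimp only at hpq
          by_cases hp : p.1.val = 0 <;> by_cases hq : q.1.val = 0
          · rw [dif_pos hp, dif_pos hq] at hpq
            exact Prod.ext (Fin.ext (by omega)) (hf0inj hpq)
          · rw [dif_pos hp, dif_neg hq] at hpq
            exfalso
            have hmem : g (⟨q.1.val - 1, by omega⟩, q.2) ∈ S \ Im := hgS _
            rw [Finset.mem_sdiff] at hmem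
            exact hmem.2 (hpq ▸ Finset.mem_image.mpr ⟨p.2, Finset.mem_univ _, rfl⟩)
          · rw [dif_neg hp, dif_pos hq] at hpq
            exfalso
            have hmem : g (⟨p.1.val - 1, by omega⟩, p.2) ∈ S \ Im := hgS _
            rw [Finset.mem_sdiff] at hmem
            exact hmem.2 (hpq ▸ Finset.mem_image.mpr ⟨q.2, Finset.mem_univ _, rfl⟩)
          · rw [dif_neg hp, dif_neg hq] at hpq
            have heq := hginj hpq
            have h1 : p.1.val - 1 = q.1.val - 1 := by
              have := congrArg (fun r : Fin (t' + 1) × Option (Fin k × Fin 2) =>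
                (r.1 : Fin (t' + 1)).val) heq
              simpa using this
            have h2 : p.2 = q.2 := congrArg
              (fun r : Fin (t' + 1) × Option (Fin k × Fin 2) => r.2) heq
            exact Prod.ext (Fin.ext (by omega)) h2
        · intro p q hpq
          obtain ⟨h1, h2⟩ : p.1 = q.1 ∧ (fan k).Adj p.2 q.2 := hpq
          dsimp only
          have hval : p.1.val = q.1.val := by rw [h1]
          by_cases hp : p.1.val = 0
          · rw [dif_pos hp, dif_pos (hval ▸ hp)]
            exact hf0adj h2
          · rw [dif_neg hp, dif_neg (hval ▸ hp)]
            exact hgadj ⟨Fin.ext (by simp [hval]), h2⟩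
        · intro p
          dsimp only
          by_cases hp : p.1.val = 0
          · rw [dif_pos hp]; exact hf0S p.2
          · rw [dif_neg hp]
            have := hgS (⟨p.1.val - 1, by omega⟩, p.2)
            rw [Finset.mem_sdiff] at this
            exact this.1

end AuxiliaryLemmas

/-- Corollary 15: if `G` is a simple graph on `n ≥ 2` vertices none of which is isolated and
with `m` edges, then `r(G, tF_k) ≤ n + 2mk − 2m/n + (t − 1)(2k + 1)`. -/
theorem ramsey_tFan_upper_general {V : Type*} [Fintype V] (n m k t : ℕ) (hk : 1 ≤ k)
    (ht : 1 ≤ t) (hn : 2 ≤ n)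
    (G : SimpleGraph V) (hcard : Fintype.card V = n) (hm : G.edgeSet.ncard = m)
    (hiso : ∀ v : V, ∃ w : V, G.Adj v w) :
    (ramseyNumber G (copies t (fan k)) : ℝ) ≤
      (n : ℝ) + 2 * (m : ℝ) * (k : ℝ) - 2 * (m : ℝ) / (n : ℝ)
        + ((t : ℝ) - 1) * (2 * (k : ℝ) + 1) := by
  classical
  obtain ⟨t', rfl⟩ : ∃ t', t = t' + 1 := ⟨t - 1, by omega⟩
  have hmfin : G.edgeFinset.card = m := by
    rw [← hm, ← SimpleGraph.coe_edgeFinset, Set.ncard_coe_finset]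
  have hdegsum : ∑ v, G.degree v = 2 * m := by
    rw [G.sum_degrees_eq_twice_card_edges, hmfin]
  have hm1 : 1 ≤ m := by
    have hV : Nonempty V := Fintype.card_pos_iff.mp (by omega)
    obtain ⟨w, hw⟩ := hiso (Classical.arbitrary V)
    have : s(Classical.arbitrary V, w) ∈ G.edgeFinset := by
      rw [SimpleGraph.mem_edgeFinset, SimpleGraph.mem_edgeSet]
      exact hw
    have := Finset.card_pos.mpr ⟨_, this⟩
    omega
  set c : ℕ := (2 * m + n - 1) / n with hc
  have hdm := Nat.div_add_mod (2 * m + n - 1) n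
  rw [← hc] at hdm
  have hmod := Nat.mod_lt (2 * m + n - 1) (show 0 < n by omega)
  have hc1 : 2 * m ≤ n * c := by omega
  have hc2 : n * c < 2 * m + n := by omega
  have hcm : c ≤ m := by
    have h2 : 2 * m ≤ n * m := Nat.mul_le_mul_right m hn
    have : n * c < n * (m + 1) := by
      calc n * c < 2 * m + n := hc2
        _ ≤ n * m + n := by omega
        _ = n * (m + 1) := by ring
    have := Nat.lt_of_mul_lt_mul_left this
    omega
  have hck : c ≤ 2 * m * k := by
    have : m ≤ 2 * m * k := by nlinarith
    omega
  set N₀ : ℕ := n + (2 * m * k - c) + t' * (2 * k + 1) with hN₀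
  have hprop : ramseyProp G (copies (t' + 1) (fan k)) N₀ := by
    intro red
    letI : DecidableRel (redᶜ).Adj := Classical.decRel _
    have hcount : n + (2 * m * k - c) + t' * (2 * k + 1)
        ≤ (Finset.univ : Finset (Fin N₀)).card := by
      rw [Finset.card_univ, Fintype.card_fin]
    rcases multi_fan G (redᶜ) n m k c hn hk hm1 hcard hdegsum hc1 hc2 hck t'
        Finset.univ hcount with hred | ⟨f, hfinj, hfadj, -⟩
    · left
      rw [compl_compl] at hred
      exact hred
    · right
      exact ⟨f, hfinj, hfadj⟩
  have hle : ramseyNumber G (copies (t' + 1) (fan k)) ≤ N₀ := Nat.sInf_le hprop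
  have hcast : (N₀ : ℝ) = (n : ℝ) + ((2 * m * k : ℕ) - (c : ℕ) : ℝ) + t' * (2 * k + 1) := by
    rw [hN₀]
    push_cast [Nat.cast_sub hck]
    ring
  have hdiv : 2 * (m : ℝ) / (n : ℝ) ≤ (c : ℝ) := by
    rw [div_le_iff₀ (by positivity : (0:ℝ) < n)]
    have : (2 * m : ℕ) ≤ (n * c : ℕ) := hc1
    calc (2 : ℝ) * m = ((2 * m : ℕ) : ℝ) := by push_cast; ring
      _ ≤ ((n * c : ℕ) : ℝ) := Nat.cast_le.mpr this
      _ = (c : ℝ) * n := by push_cast; ring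
  calc (ramseyNumber G (copies (t' + 1) (fan k)) : ℝ) ≤ (N₀ : ℝ) := Nat.cast_le.mpr hle
    _ ≤ (n : ℝ) + 2 * m * k - 2 * m / n + ((t' + 1 : ℕ) - 1 : ℝ) * (2 * k + 1) := by
        rw [hcast]
        push_cast
        nlinarith [hdiv]
    _ = _ := by norm_num
end

section
/- Let k ≥ 1 and t ≥ 1 be integers and suppose n ≥ max{12kt + 2k − 19, 10kt + 2k − 13, 4k^2t − 2k^2 − kt − t + 1}. Then the Ramsey number r(K_{1,n−1}, tF_k) equals 2n + t − 2. -/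
set_option linter.unusedSectionVars false
set_option linter.unusedVariables false
set_option maxHeartbeats 1600000


open SimpleGraph

open Finset

namespace StarFan


variable {V : Type*} [Fintype V] [DecidableEq V]

abbrev Opt (k : ℕ) := Option (Fin k × Fin 2)

/-- a family of `m` pairwise disjoint fans in `G` -/
def IsFam (G : SimpleGraph V) (k m : ℕ) (f : Fin m × Opt k → V) : Prop :=
  Function.Injective f ∧
  (∀ (i : Fin m) (j : Fin k) (c : Fin 2), G.Adj (f (i, none)) (f (i, some (j, c)))) ∧
  (∀ (i : Fin m) (j : Fin k), G.Adj (f (i, some (j, 0))) (f (i, some (j, 1))))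

def Fam (G : SimpleGraph V) (k m : ℕ) : Prop := ∃ f, IsFam G k m f

lemma fam_zero (G : SimpleGraph V) (k : ℕ) : Fam G k 0 := by
  refine ⟨fun x => x.1.elim0, ⟨fun a => a.1.elim0, fun i => i.elim0, fun i => i.elim0⟩⟩

/-- a single fan datum -/
structure FanAt (G : SimpleGraph V) (k : ℕ) (g : Opt k → V) : Prop where
  inj : Function.Injective g
  adj1 : ∀ (j : Fin k) (c : Fin 2), G.Adj (g none) (g (some (j, c)))
  adj2 : ∀ (j : Fin k), G.Adj (g (some (j, 0))) (g (some (j, 1)))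

lemma fam_add {G : SimpleGraph V} {k p : ℕ} {f : Fin p × Opt k → V} (hf : IsFam G k p f)
    {g : Opt k → V} (hg : FanAt G k g)
    (hdisj : ∀ x i y, g x ≠ f (i, y)) : Fam G k (p + 1) := by
  classical
  refine ⟨fun x => Fin.lastCases (g x.2) (fun i => f (i, x.2)) x.1, ?_, ?_, ?_⟩
  · rintro ⟨i, x⟩ ⟨i', x'⟩ h
    induction i using Fin.lastCases with
    | last =>
      induction i' using Fin.lastCases with
      | last =>
        simp only [Fin.lastCases_last] at h
        simp [hg.inj h]
      | cast i' =>
        simp only [Fin.lastCases_last, Fin.lastCases_castSucc] at h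
        exact absurd h (hdisj _ _ _)
    | cast i =>
      induction i' using Fin.lastCases with
      | last =>
        simp only [Fin.lastCases_last, Fin.lastCases_castSucc] at h
        exact absurd h.symm (hdisj _ _ _)
      | cast i' =>
        simp only [Fin.lastCases_castSucc] at h
        have := hf.1 h
        simp only [Prod.mk.injEq] at this
        simp [this.1, this.2]
  · intro i j c
    induction i using Fin.lastCases with
    | last => simpa using hg.adj1 j c
    | cast i => simpa using hf.2.1 i j c
  · intro i j
    induction i using Fin.lastCases with
    | last => simpa using hg.adj2 j
    | cast i => simpa using hf.2.2 i j

/-- replace the fan at index `i₀` by two new fans -/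
lemma fam_swap {G : SimpleGraph V} {k p : ℕ} {f : Fin p × Opt k → V} (hf : IsFam G k p f)
    (i₀ : Fin p) {g₁ g₂ : Opt k → V} (hg₁ : FanAt G k g₁) (hg₂ : FanAt G k g₂)
    (h12 : ∀ x y, g₁ x ≠ g₂ y)
    (hdisj₁ : ∀ x i y, i ≠ i₀ → g₁ x ≠ f (i, y))
    (hdisj₂ : ∀ x i y, i ≠ i₀ → g₂ x ≠ f (i, y)) : Fam G k (p + 1) := by
  classical
  refine ⟨fun x => Fin.lastCases (g₂ x.2)
      (fun i => if i = i₀ then g₁ x.2 else f (i, x.2)) x.1, ?_, ?_, ?_⟩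
  · rintro ⟨i, x⟩ ⟨i', x'⟩ h
    induction i using Fin.lastCases with
    | last =>
      induction i' using Fin.lastCases with
      | last =>
        simp only [Fin.lastCases_last] at h
        simp [hg₂.inj h]
      | cast i' =>
        simp only [Fin.lastCases_last, Fin.lastCases_castSucc] at h
        by_cases hi : i' = i₀
        · rw [if_pos hi] at h; exact absurd h.symm (h12 _ _)
        · rw [if_neg hi] at h; exact absurd h (hdisj₂ _ _ _ hi)
    | cast i =>
      induction i' using Fin.lastCases with
      | last =>
        simp only [Fin.lastCases_last, Fin.lastCases_castSucc] at h
        by_cases hi : i = i₀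
        · rw [if_pos hi] at h; exact absurd h (h12 _ _)
        · rw [if_neg hi] at h
          exact absurd h.symm (hdisj₂ _ _ _ hi)
      | cast i' =>
        simp only [Fin.lastCases_castSucc] at h
        by_cases hi : i = i₀ <;> by_cases hi' : i' = i₀
        · rw [if_pos hi, if_pos hi'] at h
          have := hg₁.inj h
          simp [this, hi, hi']
        · rw [if_pos hi, if_neg hi'] at h
          exact absurd h (hdisj₁ _ _ _ hi')
        · rw [if_neg hi, if_pos hi'] at h
          exact absurd h (hdisj₁ _ _ _ hi).symm
        · rw [if_neg hi, if_neg hi'] at h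
          have := hf.1 h
          simp only [Prod.mk.injEq] at this
          simp [this.1, this.2]
  · intro i j c
    induction i using Fin.lastCases with
    | last => simpa using hg₂.adj1 j c
    | cast i =>
      by_cases hi : i = i₀
      · simpa [hi] using hg₁.adj1 j c
      · simpa [hi] using hf.2.1 i j c
  · intro i j
    induction i using Fin.lastCases with
    | last => simpa using hg₂.adj2 j
    | cast i =>
      by_cases hi : i = i₀
      · simpa [hi] using hg₁.adj2 j
      · simpa [hi] using hf.2.2 i j



variable {V : Type*} [Fintype V] [DecidableEq V]

/-- a system of `m` pairwise disjoint edges -/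
def PairSys (G : SimpleGraph V) (m : ℕ) (a b : Fin m → V) : Prop :=
  Function.Injective a ∧ Function.Injective b ∧ (∀ j j', a j ≠ b j') ∧
    ∀ j, G.Adj (a j) (b j)

/-- a matching of size `m` inside `s` -/
def Mtch (G : SimpleGraph V) (s : Finset V) (m : ℕ) : Prop :=
  ∃ a b : Fin m → V, PairSys G m a b ∧ ∀ j, a j ∈ s ∧ b j ∈ s

lemma greedy_pairs (G : SimpleGraph V) [DecidableRel G.Adj] :
    ∀ (m : ℕ) (A B : Finset V) (e' : ℕ), Disjoint A B → m ≤ A.card → m + e' ≤ B.card →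
    (∀ x ∈ A, (B \ G.neighborFinset x).card ≤ e') →
    ∃ a b : Fin m → V, PairSys G m a b ∧ ∀ j, a j ∈ A ∧ b j ∈ B := by
  intro m
  induction m with
  | zero =>
    intro A B e' _ _ _ _
    exact ⟨fun j => j.elim0, fun j => j.elim0, ⟨fun j => j.elim0, fun j => j.elim0,
      fun j => j.elim0, fun j => j.elim0⟩, fun j => j.elim0⟩
  | succ m ih =>
    intro A B e' hAB hA hB hmiss
    have hAne : A.Nonempty := Finset.card_pos.mp (by omega)
    obtain ⟨x₀, hx₀⟩ := hAne
    have hBN : (B ∩ G.neighborFinset x₀).Nonempty := by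
      have h1 : (B \ G.neighborFinset x₀).card ≤ e' := hmiss x₀ hx₀
      have h2 : (B \ G.neighborFinset x₀).card + (B ∩ G.neighborFinset x₀).card = B.card := by
        rw [add_comm]; exact Finset.card_inter_add_card_sdiff B (G.neighborFinset x₀)
      refine Finset.card_pos.mp (by omega)
    obtain ⟨z₀, hz₀⟩ := hBN
    rw [Finset.mem_inter, SimpleGraph.mem_neighborFinset] at hz₀
    obtain ⟨hz₀B, hz₀adj⟩ := hz₀
    have hxz : x₀ ≠ z₀ := fun h => (Finset.disjoint_left.mp hAB hx₀) (h ▸ hz₀B)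
    obtain ⟨a, b, ⟨hainj, hbinj, hab, hadj⟩, hmem⟩ :=
      ih (A.erase x₀) (B.erase z₀) e' (hAB.mono (Finset.erase_subset _ _)
        (Finset.erase_subset _ _))
        (by rw [Finset.card_erase_of_mem hx₀]; omega)
        (by rw [Finset.card_erase_of_mem hz₀B]; omega)
        (fun x hx => le_trans (Finset.card_le_card (by
          refine Finset.sdiff_subset_sdiff (Finset.erase_subset _ _) le_rfl))
          (hmiss x (Finset.mem_of_mem_erase hx)))
    have haA : ∀ j, a j ∈ A.erase x₀ := fun j => (hmem j).1
    have hbB : ∀ j, b j ∈ B.erase z₀ := fun j => (hmem j).2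
    refine ⟨Fin.cases x₀ a, Fin.cases z₀ b, ⟨?_, ?_, ?_, ?_⟩, ?_⟩
    · intro j j' h
      induction j using Fin.cases with
      | zero =>
        induction j' using Fin.cases with
        | zero => rfl
        | succ j' =>
          simp only [Fin.cases_zero, Fin.cases_succ] at h
          exact absurd h.symm (Finset.ne_of_mem_erase (haA j'))
      | succ j =>
        induction j' using Fin.cases with
        | zero =>
          simp only [Fin.cases_zero, Fin.cases_succ] at h
          exact absurd h (Finset.ne_of_mem_erase (haA j))
        | succ j' =>
          simp only [Fin.cases_succ] at h
          exact congrArg Fin.succ (hainj h)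
    · intro j j' h
      induction j using Fin.cases with
      | zero =>
        induction j' using Fin.cases with
        | zero => rfl
        | succ j' =>
          simp only [Fin.cases_zero, Fin.cases_succ] at h
          exact absurd h.symm (Finset.ne_of_mem_erase (hbB j'))
      | succ j =>
        induction j' using Fin.cases with
        | zero =>
          simp only [Fin.cases_zero, Fin.cases_succ] at h
          exact absurd h (Finset.ne_of_mem_erase (hbB j))
        | succ j' =>
          simp only [Fin.cases_succ] at h
          exact congrArg Fin.succ (hbinj h)
    · intro j j'
      induction j using Fin.cases with
      | zero =>
        induction j' using Fin.cases with
        | zero => simpa using hxz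
        | succ j' =>
          simp only [Fin.cases_zero, Fin.cases_succ]
          intro h
          have : b j' ∈ B := Finset.mem_of_mem_erase (hbB j')
          exact (Finset.disjoint_left.mp hAB hx₀) (h ▸ this)
      | succ j =>
        induction j' using Fin.cases with
        | zero =>
          simp only [Fin.cases_zero, Fin.cases_succ]
          intro h
          have : a j ∈ A := Finset.mem_of_mem_erase (haA j)
          exact (Finset.disjoint_left.mp hAB (h ▸ this)) hz₀B
        | succ j' =>
          simp only [Fin.cases_succ]
          exact hab j j'
    · intro j
      induction j using Fin.cases with
      | zero => simpa using hz₀adj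
      | succ j => simpa using hadj j
    · intro j
      induction j using Fin.cases with
      | zero => exact ⟨by simpa using hx₀, by simpa using hz₀B⟩
      | succ j => exact ⟨by simpa using Finset.mem_of_mem_erase (haA j),
          by simpa using Finset.mem_of_mem_erase (hbB j)⟩

lemma exists_indep (G : SimpleGraph V) [DecidableRel G.Adj] :
    ∀ (m : ℕ), 1 ≤ m → ∀ s : Finset V, ¬ Mtch G s m →
    ∃ I, I ⊆ s ∧ (∀ x ∈ I, ∀ y ∈ I, ¬ G.Adj x y) ∧ s.card ≤ I.card + 2 * (m - 1) := by
  intro m hm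
  induction m, hm using Nat.le_induction with
  | base =>
    intro s hs
    refine ⟨s, le_refl _, ?_, by omega⟩
    intro x hx y hy hadj
    exact hs ⟨fun _ => x, fun _ => y, ⟨Function.injective_of_subsingleton _,
      Function.injective_of_subsingleton _, fun _ _ => hadj.ne, fun _ => hadj⟩,
      fun _ => ⟨hx, hy⟩⟩
  | succ m hm ih =>
    intro s hs
    by_cases hind : ∀ x ∈ s, ∀ y ∈ s, ¬ G.Adj x y
    · exact ⟨s, le_refl _, hind, by omega⟩
    · push_neg at hind
      obtain ⟨x, hx, y, hy, hadj⟩ := hind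
      have hxy : x ≠ y := hadj.ne
      have hs' : ¬ Mtch G ((s.erase x).erase y) m := by
        rintro ⟨a, b, ⟨hainj, hbinj, hab, hadjm⟩, hmem⟩
        apply hs
        have haS : ∀ j, a j ∈ (s.erase x).erase y := fun j => (hmem j).1
        have hbS : ∀ j, b j ∈ (s.erase x).erase y := fun j => (hmem j).2
        have hane : ∀ j, a j ≠ x ∧ a j ≠ y := fun j =>
          ⟨Finset.ne_of_mem_erase (Finset.mem_of_mem_erase (haS j)),
           Finset.ne_of_mem_erase (haS j)⟩
        have hbne : ∀ j, b j ≠ x ∧ b j ≠ y := fun j =>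
          ⟨Finset.ne_of_mem_erase (Finset.mem_of_mem_erase (hbS j)),
           Finset.ne_of_mem_erase (hbS j)⟩
        refine ⟨Fin.cases x a, Fin.cases y b, ⟨?_, ?_, ?_, ?_⟩, ?_⟩
        · intro j j' h
          induction j using Fin.cases with
          | zero =>
            induction j' using Fin.cases with
            | zero => rfl
            | succ j' => simp only [Fin.cases_zero, Fin.cases_succ] at h
                         exact absurd h.symm (hane j').1
          | succ j =>
            induction j' using Fin.cases with
            | zero => simp only [Fin.cases_zero, Fin.cases_succ] at h
                      exact absurd h (hane j).1
            | succ j' => simp only [Fin.cases_succ] at h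
                         exact congrArg Fin.succ (hainj h)
        · intro j j' h
          induction j using Fin.cases with
          | zero =>
            induction j' using Fin.cases with
            | zero => rfl
            | succ j' => simp only [Fin.cases_zero, Fin.cases_succ] at h
                         exact absurd h.symm (hbne j').2
          | succ j =>
            induction j' using Fin.cases with
            | zero => simp only [Fin.cases_zero, Fin.cases_succ] at h
                      exact absurd h (hbne j).2
            | succ j' => simp only [Fin.cases_succ] at h
                         exact congrArg Fin.succ (hbinj h)
        · intro j j'
          induction j using Fin.cases with
          | zero =>
            induction j' using Fin.cases with
            | zero => simpa using hxy
            | succ j' => simp only [Fin.cases_zero, Fin.cases_succ]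
                         exact fun h => (hbne j').1 h.symm
          | succ j =>
            induction j' using Fin.cases with
            | zero => simp only [Fin.cases_zero, Fin.cases_succ]
                      exact (hane j).2
            | succ j' => simp only [Fin.cases_succ]
                         exact hab j j'
        · intro j
          induction j using Fin.cases with
          | zero => simpa using hadj
          | succ j => simpa using hadjm j
        · intro j
          induction j using Fin.cases with
          | zero => exact ⟨by simpa using hx, by simpa using hy⟩
          | succ j =>
            refine ⟨?_, ?_⟩
            · simpa using Finset.mem_of_mem_erase (Finset.mem_of_mem_erase (haS j))
            · simpa using Finset.mem_of_mem_erase (Finset.mem_of_mem_erase (hbS j))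
      obtain ⟨I, hIsub, hIind, hIcard⟩ := ih _ hs'
      have hys : y ∈ s.erase x := Finset.mem_erase.mpr ⟨hxy.symm, hy⟩
      have hcard2 : s.card ≤ ((s.erase x).erase y).card + 2 := by
        rw [Finset.card_erase_of_mem hys, Finset.card_erase_of_mem hx]
        have h1 : 0 < s.card := Finset.card_pos.mpr ⟨x, hx⟩
        have h2 : 0 < (s.erase x).card := Finset.card_pos.mpr ⟨y, hys⟩
        omega
      have hIs : I ⊆ s :=
        le_trans hIsub (le_trans (Finset.erase_subset _ _) (Finset.erase_subset _ _))
      exact ⟨I, hIs, hIind, by omega⟩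

lemma count_swap (G : SimpleGraph V) [DecidableRel G.Adj] (I R' : Finset V) :
    ∑ r ∈ R', (I \ G.neighborFinset r).card = ∑ x ∈ I, (R' \ G.neighborFinset x).card := by
  have key : ∀ (s : Finset V) (r : V),
      (s \ G.neighborFinset r).card = ∑ x ∈ s, if G.Adj r x then 0 else 1 := by
    intro s r
    rw [Finset.sdiff_eq_filter, Finset.card_filter]
    refine Finset.sum_congr rfl fun x _ => ?_
    by_cases h : G.Adj r x <;> simp [h]
  simp only [key]
  rw [Finset.sum_comm]
  refine Finset.sum_congr rfl fun x _ => Finset.sum_congr rfl fun r _ => ?_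
  by_cases h : G.Adj r x
  · simp [h, (G.adj_comm r x).mp h]
  · have h' : ¬ G.Adj x r := fun hh => h ((G.adj_comm x r).mp hh)
    simp [h, h']

lemma low_count (G : SimpleGraph V) [DecidableRel G.Adj] {I R' : Finset V} {θ eb s : ℕ}
    (hmiss : ∀ x ∈ I, ((univ \ I) \ G.neighborFinset x).card ≤ eb)
    (hR : R' ⊆ univ \ I)
    (hlow : ∀ r ∈ R', (G.neighborFinset r ∩ I).card ≤ θ)
    (hbig : (eb + s + 1) * θ + 1 ≤ (s + 1) * I.card) :
    R'.card ≤ eb + s := by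
  by_contra hc
  push_neg at hc
  have hIθ : θ < I.card := by nlinarith [hbig]
  have h1 : ∀ r ∈ R', I.card - θ ≤ (I \ G.neighborFinset r).card := by
    intro r hr
    have := Finset.card_inter_add_card_sdiff I (G.neighborFinset r)
    have h2 : (I ∩ G.neighborFinset r).card ≤ θ := by
      rw [Finset.inter_comm]; exact hlow r hr
    omega
  have hsum1 : R'.card * (I.card - θ) ≤ ∑ r ∈ R', (I \ G.neighborFinset r).card := by
    calc R'.card * (I.card - θ) = R'.card • (I.card - θ) := by simp
    _ ≤ ∑ r ∈ R', (I \ G.neighborFinset r).card := Finset.card_nsmul_le_sum _ _ _ h1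
  have hsum2 : ∑ x ∈ I, (R' \ G.neighborFinset x).card ≤ I.card * eb := by
    calc ∑ x ∈ I, (R' \ G.neighborFinset x).card ≤ ∑ x ∈ I, eb := by
          refine Finset.sum_le_sum fun x hx => le_trans (Finset.card_le_card
            (Finset.sdiff_subset_sdiff hR le_rfl)) (hmiss x hx)
    _ = I.card * eb := by simp [mul_comm]
  rw [count_swap] at hsum1
  have hchain : (eb + s + 1) * (I.card - θ) ≤ I.card * eb := by
    refine le_trans ?_ (le_trans hsum1 hsum2)
    exact Nat.mul_le_mul_right _ (by omega)
  set d := I.card - θ with hd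
  have hId : I.card = θ + d := by omega
  rw [hId] at hchain hbig
  nlinarith [hchain, hbig]



section arith

variable {k t p n ε ε₂ θ : ℕ}

def B1 (k t n : ℕ) : Prop := 12*(k:ℤ)*t + 2*k - 19 ≤ (n:ℤ)
def B2 (k t n : ℕ) : Prop := 10*(k:ℤ)*t + 2*k - 13 ≤ (n:ℤ)
def B3 (k t n : ℕ) : Prop :=
  4*(k:ℤ)^2*t - 2*(k:ℤ)^2 - (k:ℤ)*t - (t:ℤ) + 1 ≤ (n:ℤ)

section
variable (hk : 1 ≤ k) (ht : 1 ≤ t) (hpt : p + 1 ≤ t)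
  (h1 : B1 k t n) (h2 : B2 k t n) (h3 : B3 k t n)

include hk ht h3 in
lemma arN : 1 ≤ n := by
  unfold B3 at h3
  have hk' : (1:ℤ) ≤ k := by exact_mod_cast hk
  have ht' : (1:ℤ) ≤ t := by exact_mod_cast ht
  have h : (1:ℤ) ≤ n := by
    nlinarith [mul_nonneg (mul_nonneg (by nlinarith : (0:ℤ) ≤ 2*(k:ℤ)^2) (by linarith : (0:ℤ) ≤ (t:ℤ)-1)) (by norm_num : (0:ℤ) ≤ 1),
      mul_nonneg (by nlinarith : (0:ℤ) ≤ 2*(k:ℤ)^2-k-1) (by linarith : (0:ℤ) ≤ (t:ℤ))]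
  exact_mod_cast h

-- AR1 : sharp count at threshold θ = k-1, weak (Y-type) bound on ε
include hk ht hpt h1 h3 in
lemma arA1 (hθ : θ + 1 = k) (hε : ε + t + 2 ≤ 2*k + (2*k+1)*p) :
    (ε+1)*θ + ε + 2 ≤ n := by
  have hk' : (1:ℤ) ≤ k := by exact_mod_cast hk
  have ht' : (1:ℤ) ≤ t := by exact_mod_cast ht
  have hp' : (p:ℤ) + 1 ≤ t := by exact_mod_cast hpt
  have hε' : (ε:ℤ) + t + 2 ≤ 2*k + (2*k+1)*p := by exact_mod_cast hε
  have hθ' : (θ:ℤ) + 1 = k := by exact_mod_cast hθ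
  unfold B1 B3 at *
  have hεb : (ε:ℤ) ≤ 2*k*t - 3 := by
    nlinarith [mul_nonneg (by linarith : (0:ℤ) ≤ 2*(k:ℤ)+1) (by linarith : (0:ℤ) ≤ (t:ℤ)-1-p)]
  have key : ((ε:ℤ)+1)*θ + ε + 2 ≤ n := by
    nlinarith [mul_nonneg (by linarith : (0:ℤ) ≤ (t:ℤ)-1) (by nlinarith : (0:ℤ) ≤ 3*(k:ℤ)^2-k-1),
      mul_nonneg (by linarith : (0:ℤ) ≤ (k:ℤ)-1) (by linarith : (0:ℤ) ≤ 2*(k:ℤ)*t-3-ε)]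
  exact_mod_cast key

-- AR3 : sharp count at threshold θ = 2k-1, strong (X-type) bound on ε, p ≥ 1
include hk ht hpt h1 h3 in
lemma arA3 (hp1 : 1 ≤ p) (hθ : θ + 1 = 2*k) (hε : ε + t + 2 ≤ 2*k + (k+1)*p) :
    (ε+1)*θ + ε + 2 ≤ n := by
  have hk' : (1:ℤ) ≤ k := by exact_mod_cast hk
  have ht2 : (2:ℤ) ≤ t := by
    have : 2 ≤ t := by omega
    exact_mod_cast this
  have hp' : (p:ℤ) + 1 ≤ t := by exact_mod_cast hpt
  have hε' : (ε:ℤ) + t + 2 ≤ 2*k + (k+1)*p := by exact_mod_cast hε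
  have hθ' : (θ:ℤ) + 1 = 2*k := by exact_mod_cast hθ
  unfold B1 B3 at *
  have hεb : (ε:ℤ) ≤ k*t + k - 3 := by
    nlinarith [mul_nonneg (by linarith : (0:ℤ) ≤ (k:ℤ)+1) (by linarith : (0:ℤ) ≤ (t:ℤ)-1-p)]
  have key : ((ε:ℤ)+1)*θ + ε + 2 ≤ n := by
    nlinarith [mul_nonneg (by linarith : (0:ℤ) ≤ (t:ℤ)-2) (by nlinarith : (0:ℤ) ≤ 2*(k:ℤ)^2-k-1),
      mul_nonneg (by linarith : (0:ℤ) ≤ 2*(k:ℤ)) (by linarith : (0:ℤ) ≤ (k:ℤ)*t+k-3-ε)]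
  exact_mod_cast key

-- AR4 : soft count (slack 1) at threshold θ = 2k-1, weak bound on ε₂, p ≥ 1
include hk ht hpt h1 h3 in
lemma arA4 (hp1 : 1 ≤ p) (hθ : θ + 1 = 2*k) (hε : ε₂ + t + 2 ≤ 2*k + (2*k+1)*p) :
    (ε₂+2)*θ + 2*ε₂ + 3 ≤ 2*n := by
  have hk' : (1:ℤ) ≤ k := by exact_mod_cast hk
  have ht2 : (2:ℤ) ≤ t := by
    have : 2 ≤ t := by omega
    exact_mod_cast this
  have hp' : (p:ℤ) + 1 ≤ t := by exact_mod_cast hpt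
  have hε' : (ε₂:ℤ) + t + 2 ≤ 2*k + (2*k+1)*p := by exact_mod_cast hε
  have hθ' : (θ:ℤ) + 1 = 2*k := by exact_mod_cast hθ
  unfold B1 B3 at *
  have hεb : (ε₂:ℤ) ≤ 2*k*t - 3 := by
    nlinarith [mul_nonneg (by linarith : (0:ℤ) ≤ 2*(k:ℤ)+1) (by linarith : (0:ℤ) ≤ (t:ℤ)-1-p)]
  have key : ((ε₂:ℤ)+2)*θ + 2*ε₂ + 3 ≤ 2*n := by
    rcases Nat.lt_or_ge k 2 with hk2 | hk2
    · have hk1 : (k:ℤ) = 1 := by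
        have : k = 1 := by omega
        exact_mod_cast this
      nlinarith [mul_nonneg (by linarith : (0:ℤ) ≤ 3) (by linarith : (0:ℤ) ≤ 2*(k:ℤ)*t-3-ε₂)]
    · have hk2' : (2:ℤ) ≤ k := by exact_mod_cast hk2
      nlinarith [mul_nonneg (by linarith : (0:ℤ) ≤ (t:ℤ)-2) (by nlinarith : (0:ℤ) ≤ 4*(k:ℤ)^2-4*k-2),
        mul_nonneg (by linarith : (0:ℤ) ≤ 2*(k:ℤ)+1) (by linarith : (0:ℤ) ≤ 2*(k:ℤ)*t-3-ε₂),
        (by nlinarith : (0:ℤ) ≤ 4*(k:ℤ)^2-6*k)]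
  exact_mod_cast key

-- AR5 : mid-emptiness at level k
include hk ht hpt h2 in
lemma arA5 (hε : ε + t + 2 ≤ 2*k + (k+1)*p) (hε₂ : ε₂ + t + 2 ≤ 2*k + (2*k+1)*p) :
    2*k + 2*ε + 2*ε₂ ≤ n + 1 := by
  have hk' : (1:ℤ) ≤ k := by exact_mod_cast hk
  have ht' : (1:ℤ) ≤ t := by exact_mod_cast ht
  have hp' : (p:ℤ) + 1 ≤ t := by exact_mod_cast hpt
  have hε' : (ε:ℤ) + t + 2 ≤ 2*k + (k+1)*p := by exact_mod_cast hε
  have hε₂' : (ε₂:ℤ) + t + 2 ≤ 2*k + (2*k+1)*p := by exact_mod_cast hε₂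
  unfold B2 at h2
  have key : 2*(k:ℤ) + 2*ε + 2*ε₂ ≤ n + 1 := by
    nlinarith [mul_nonneg (by linarith : (0:ℤ) ≤ (k:ℤ)+1) (by linarith : (0:ℤ) ≤ (t:ℤ)-1-p),
      mul_nonneg (by linarith : (0:ℤ) ≤ 2*(k:ℤ)+1) (by linarith : (0:ℤ) ≤ (t:ℤ)-1-p),
      mul_nonneg (by linarith : (0:ℤ) ≤ (k:ℤ)) (by linarith : (0:ℤ) ≤ 2*(t:ℤ)-1)]
  exact_mod_cast key

-- AR6 : mid-emptiness at level 2k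
include hk ht hpt h2 in
lemma arA6 (hε : ε + t + 2 ≤ 2*k + (k+1)*p) (hε₂ : ε₂ + t + 2 ≤ 2*k + (2*k+1)*p) :
    4*k + 2*ε + 2*ε₂ ≤ n + 1 := by
  have hk' : (1:ℤ) ≤ k := by exact_mod_cast hk
  have ht' : (1:ℤ) ≤ t := by exact_mod_cast ht
  have hp' : (p:ℤ) + 1 ≤ t := by exact_mod_cast hpt
  have hε' : (ε:ℤ) + t + 2 ≤ 2*k + (k+1)*p := by exact_mod_cast hε
  have hε₂' : (ε₂:ℤ) + t + 2 ≤ 2*k + (2*k+1)*p := by exact_mod_cast hε₂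
  unfold B2 at h2
  have key : 4*(k:ℤ) + 2*ε + 2*ε₂ ≤ n + 1 := by
    nlinarith [mul_nonneg (by linarith : (0:ℤ) ≤ (k:ℤ)+1) (by linarith : (0:ℤ) ≤ (t:ℤ)-1-p),
      mul_nonneg (by linarith : (0:ℤ) ≤ 2*(k:ℤ)+1) (by linarith : (0:ℤ) ≤ (t:ℤ)-1-p),
      mul_nonneg (by linarith : (0:ℤ) ≤ (k:ℤ)) (by linarith : (0:ℤ) ≤ (t:ℤ)-1)]
  exact_mod_cast key

-- AR7 : size needed for the big matching in case (Y)
include hk ht hpt h1 h3 in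
lemma arA7 (hp1 : 1 ≤ p) (hθ : θ + 1 = 2*k)
    (hε : ε + t + 2 ≤ 2*k + (2*k+1)*p) (hε₂ : ε₂ + t + 2 ≤ 2*k + (2*k+1)*p) :
    k*θ*p + ε + ε₂ + 3 ≤ n := by
  have hk' : (1:ℤ) ≤ k := by exact_mod_cast hk
  have ht2 : (2:ℤ) ≤ t := by
    have : 2 ≤ t := by omega
    exact_mod_cast this
  have hp1' : (1:ℤ) ≤ p := by exact_mod_cast hp1
  have hp' : (p:ℤ) + 1 ≤ t := by exact_mod_cast hpt
  have hε' : (ε:ℤ) + t + 2 ≤ 2*k + (2*k+1)*p := by exact_mod_cast hε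
  have hε₂' : (ε₂:ℤ) + t + 2 ≤ 2*k + (2*k+1)*p := by exact_mod_cast hε₂
  have hθ' : (θ:ℤ) + 1 = 2*k := by exact_mod_cast hθ
  unfold B1 B3 at *
  have key : (k:ℤ)*θ*p + ε + ε₂ + 3 ≤ n := by
    rcases Nat.lt_or_ge k 3 with hk3 | hk3
    · have hk12 : k = 1 ∨ k = 2 := by omega
      rcases hk12 with h | h
      · subst h
        have hθv : θ = 1 := by omega
        subst hθv
        push_cast at hε' hε₂' h1 ⊢
        linarith [hε', hε₂', h1, hp', hp1', ht2]
      · subst h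
        have hθv : θ = 3 := by omega
        subst hθv
        push_cast at hε' hε₂' h1 ⊢
        linarith [hε', hε₂', h1, hp', hp1', ht2]
    · have hk3' : (3:ℤ) ≤ k := by exact_mod_cast hk3
      nlinarith [mul_nonneg (by linarith : (0:ℤ) ≤ 2*(k:ℤ)+1) (by linarith : (0:ℤ) ≤ (t:ℤ)-1-p),
        mul_nonneg (by nlinarith : (0:ℤ) ≤ (2*(k:ℤ)-1)*k) (by linarith : (0:ℤ) ≤ (t:ℤ)-1-p),
        mul_nonneg (by linarith : (0:ℤ) ≤ (t:ℤ)-2) (by nlinarith : (0:ℤ) ≤ 2*(k:ℤ)^2-4*k-1),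
        (by nlinarith : (0:ℤ) ≤ 4*(k:ℤ)^2-9*k+3)]
  exact_mod_cast key

-- AR9 : the unused vertex set is nonempty
include hk ht hpt h3 in
lemma arA9 : p*(2*k+1) + 3 ≤ 2*n + t := by
  have hk' : (1:ℤ) ≤ k := by exact_mod_cast hk
  have ht' : (1:ℤ) ≤ t := by exact_mod_cast ht
  have hp' : (p:ℤ) + 1 ≤ t := by exact_mod_cast hpt
  unfold B3 at h3
  have key : (p:ℤ)*(2*k+1) + 3 ≤ 2*n + t := by
    nlinarith [mul_nonneg (by linarith : (0:ℤ) ≤ 2*(k:ℤ)+1) (by linarith : (0:ℤ) ≤ (t:ℤ)-1-p),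
      mul_nonneg (by linarith : (0:ℤ) ≤ (t:ℤ)-1) (by nlinarith : (0:ℤ) ≤ 4*(k:ℤ)^2-2*k-1),
      (by nlinarith : (0:ℤ) ≤ 2*(k:ℤ)^2-k-1)]
  exact_mod_cast key

end
end arith

lemma fin2_cases : ∀ c : Fin 2, c = 0 ∨ c = 1 := by decide

lemma fan_of_pairs (G : SimpleGraph V) [DecidableRel G.Adj] {k : ℕ} {r : V} {a b : Fin k → V}
    (hps : PairSys G k a b)
    (ha : ∀ j, a j ∈ G.neighborFinset r) (hb : ∀ j, b j ∈ G.neighborFinset r) :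
    ∃ g : Opt k → V, FanAt G k g ∧ g none = r ∧
      (∀ j : Fin k, g (some (j, 0)) = a j ∧ g (some (j, 1)) = b j) ∧
      (∀ x : Opt k, g x = r ∨ (∃ j, g x = a j) ∨ (∃ j, g x = b j)) := by
  classical
  obtain ⟨hainj, hbinj, hab, hadj⟩ := hps
  have hra : ∀ j, r ≠ a j := by
    intro j h
    have := ha j
    rw [← h, SimpleGraph.mem_neighborFinset] at this
    exact G.irrefl this
  have hrb : ∀ j, r ≠ b j := by
    intro j h
    have := hb j
    rw [← h, SimpleGraph.mem_neighborFinset] at this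
    exact G.irrefl this
  refine ⟨fun x => match x with
    | none => r
    | some jc => if jc.2 = 0 then a jc.1 else b jc.1, ⟨?_, ?_, ?_⟩, rfl, ?_, ?_⟩
  · rintro (_ | ⟨j, c⟩) (_ | ⟨j', c'⟩) h
    · rfl
    · exfalso
      simp only at h
      rcases fin2_cases c' with h0 | h1
      · rw [h0] at h; simp at h; exact hra j' h
      · rw [h1] at h; simp at h; exact hrb j' h
    · exfalso
      simp only at h
      rcases fin2_cases c with h0 | h1
      · rw [h0] at h; simp at h; exact hra j h.symm
      · rw [h1] at h; simp at h; exact hrb j h.symm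
    · simp only at h
      rcases fin2_cases c with h0 | h1 <;> rcases fin2_cases c' with h0' | h1'
      · rw [h0, h0'] at h; simp at h
        rw [h0, h0', hainj h]
      · rw [h0, h1'] at h; simp at h
        exact absurd h (hab j j')
      · rw [h1, h0'] at h; simp at h
        exact absurd h.symm (hab j' j)
      · rw [h1, h1'] at h; simp at h
        rw [h1, h1', hbinj h]
  · intro j c
    simp only
    rcases fin2_cases c with h0 | h1
    · rw [h0]; simp only [if_pos rfl]
      exact SimpleGraph.mem_neighborFinset _ _ _ |>.mp (ha j)
    · rw [h1]; simp only [if_neg (by decide : (1 : Fin 2) ≠ 0)]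
      exact SimpleGraph.mem_neighborFinset _ _ _ |>.mp (hb j)
  · intro j
    simp only [if_pos rfl, if_neg (by decide : (1 : Fin 2) ≠ 0)]
    exact hadj j
  · intro j
    constructor
    · simp
    · simp [(by decide : (1 : Fin 2) ≠ 0)]
  · rintro (_ | ⟨j, c⟩)
    · left; rfl
    · right
      rcases fin2_cases c with h0 | h1
      · left; exact ⟨j, by rw [h0]; simp⟩
      · right; exact ⟨j, by rw [h1]; simp [(by decide : (1 : Fin 2) ≠ 0)]⟩

lemma exists_inj_fun {α : Type*} [DecidableEq α] (s : Finset α) (m : ℕ) (hm : m ≤ s.card) :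
    ∃ σ : Fin m → α, Function.Injective σ ∧ ∀ j, σ j ∈ s := by
  obtain ⟨u, hus, hcard⟩ := Finset.exists_subset_card_eq hm
  refine ⟨fun j => (u.equivFin.symm ⟨j, by omega⟩ : {x // x ∈ u}), ?_, ?_⟩
  · intro j j' h
    have h2 := u.equivFin.symm.injective (Subtype.ext h)
    have := congrArg Fin.val h2
    exact Fin.ext this
  · intro j
    exact hus (u.equivFin.symm ⟨j, by omega⟩).2

lemma card_le_sdiff_add {s T u : Finset V} (hs : s ⊆ u) :
    s.card ≤ (s \ T).card + (T ∩ u).card := by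
  have hsub : s ⊆ (s \ T) ∪ (T ∩ u) := by
    intro x hx
    by_cases hxT : x ∈ T
    · exact Finset.mem_union_right _ (Finset.mem_inter.mpr ⟨hxT, hs hx⟩)
    · exact Finset.mem_union_left _ (Finset.mem_sdiff.mpr ⟨hx, hxT⟩)
  exact le_trans (Finset.card_le_card hsub) (Finset.card_union_le _ _)

lemma index_card {α : Type*} [Fintype α] [DecidableEq α]
    {f : α → V} (hf : Function.Injective f) (s : Finset V) :
    (univ.filter (fun iy : α => f iy ∈ s)).card = ((Finset.image f univ) ∩ s).card := by
  classical
  rw [← Finset.card_image_of_injective (univ.filter (fun iy : α => f iy ∈ s)) hf]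
  congr 1
  ext u
  constructor
  · intro hu
    rw [Finset.mem_image] at hu
    obtain ⟨iy, hiy, rfl⟩ := hu
    rw [Finset.mem_filter] at hiy
    exact Finset.mem_inter.mpr ⟨Finset.mem_image_of_mem f (Finset.mem_univ iy), hiy.2⟩
  · intro hu
    rw [Finset.mem_inter] at hu
    obtain ⟨h1, h2⟩ := hu
    rw [Finset.mem_image] at h1
    obtain ⟨iy, _, rfl⟩ := h1
    exact Finset.mem_image_of_mem f (Finset.mem_filter.mpr ⟨Finset.mem_univ iy, h2⟩)


lemma build_fan (G : SimpleGraph V) [DecidableRel G.Adj] {k : ℕ} {r : V}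
    {P Q : Finset V} {e' : ℕ} (hPQ : Disjoint P Q)
    (hP : P ⊆ G.neighborFinset r) (hQ : Q ⊆ G.neighborFinset r)
    (hmiss : ∀ x ∈ P, (Q \ G.neighborFinset x).card ≤ e')
    (hPc : k ≤ P.card) (hQc : k + e' ≤ Q.card) :
    ∃ g : Opt k → V, FanAt G k g ∧ g none = r ∧
      (∀ j : Fin k, g (some (j, 0)) ∈ P ∧ g (some (j, 1)) ∈ Q) ∧
      (∀ (j : Fin k) (c : Fin 2), g (some (j, c)) ∈ P ∪ Q) := by
  obtain ⟨a, b, hps, hmem⟩ := greedy_pairs G k P Q e' hPQ hPc hQc hmiss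
  obtain ⟨g, hgFan, hgnone, hgab, hgvals⟩ := fan_of_pairs G hps
    (fun j => hP (hmem j).1) (fun j => hQ (hmem j).2)
  refine ⟨g, hgFan, hgnone, ?_, ?_⟩
  · intro j
    refine ⟨?_, ?_⟩
    · rw [(hgab j).1]; exact (hmem j).1
    · rw [(hgab j).2]; exact (hmem j).2
  · intro j c
    rcases fin2_cases c with h | h
    · rw [h, (hgab j).1]; exact Finset.mem_union_left _ (hmem j).1
    · rw [h, (hgab j).2]; exact Finset.mem_union_right _ (hmem j).2

theorem main_fam (G : SimpleGraph V) [DecidableRel G.Adj] (k t n : ℕ) (hk : 1 ≤ k)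
    (ht : 1 ≤ t) (h1 : B1 k t n) (h2 : B2 k t n) (h3 : B3 k t n)
    (hcard : Fintype.card V = 2*n + t - 2)
    (hdeg : ∀ v, n + t - 1 ≤ G.degree v) : Fam G k t := by
  classical
  have hn1 : 1 ≤ n := arN hk ht h3
  have hNV : Fintype.card V + 2 = 2*n + t := by omega
  have hdeg' : ∀ v, n + t ≤ G.degree v + 1 := fun v => by have := hdeg v; omega
  by_contra hFam
  have hQ0 : Fam G k 0 := fam_zero G k
  set p := Nat.findGreatest (fun m => Fam G k m) t with hpdef
  have hpt : p ≤ t := Nat.findGreatest_le t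
  have hQp : Fam G k p := Nat.findGreatest_spec (Nat.zero_le t) hQ0
  have hplt : p + 1 ≤ t := by
    rcases Nat.lt_or_ge p t with h | h
    · omega
    · exact absurd (le_antisymm hpt h ▸ hQp) hFam
  have hnot : ¬ Fam G k (p+1) :=
    Nat.findGreatest_is_greatest (by rw [← hpdef]; omega) hplt
  obtain ⟨f, hf⟩ := hQp
  set UF : Finset V := Finset.image f univ with hUFdef
  have hUFcard : UF.card = p * (2*k+1) := by
    rw [hUFdef, Finset.card_image_of_injective _ hf.1, Finset.card_univ]
    simp only [Fintype.card_prod, Fintype.card_fin, Fintype.card_option]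
    ring
  have hfUF : ∀ iy, f iy ∈ UF := fun iy => Finset.mem_image_of_mem f (Finset.mem_univ _)
  -- no fan with all its vertices outside the packing
  have noW : ∀ r, r ∉ UF → ¬ Mtch G (G.neighborFinset r \ UF) k := by
    intro r hr hM
    obtain ⟨a, b, hps, hmem⟩ := hM
    have ha : ∀ j, a j ∈ G.neighborFinset r := fun j => (Finset.mem_sdiff.mp (hmem j).1).1
    have hb : ∀ j, b j ∈ G.neighborFinset r := fun j => (Finset.mem_sdiff.mp (hmem j).2).1
    obtain ⟨g, hgFan, hgnone, hgab, hgvals⟩ := fan_of_pairs G hps ha hb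
    apply hnot
    refine fam_add hf hgFan ?_
    intro x i y hxy
    have hgx : g x ∈ UF := by rw [hxy]; exact hfUF (i, y)
    rcases hgvals x with h | ⟨j, h⟩ | ⟨j, h⟩
    · rw [h] at hgx; exact hr hgx
    · rw [h] at hgx; exact (Finset.mem_sdiff.mp (hmem j).1).2 hgx
    · rw [h] at hgx; exact (Finset.mem_sdiff.mp (hmem j).2).2 hgx
  -- extraction of a large independent set in a neighbourhood
  have extract : ∀ v, v ∉ UF → ∃ I : Finset V,
      (∀ x ∈ I, x ∈ G.neighborFinset v ∧ x ∉ UF) ∧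
      (∀ x ∈ I, ∀ y ∈ I, ¬ G.Adj x y) ∧
      G.degree v ≤ I.card + 2*(k-1) + (G.neighborFinset v ∩ UF).card := by
    intro v hv
    obtain ⟨I, hIsub, hIind, hIcard⟩ := exists_indep G k hk _ (noW v hv)
    refine ⟨I, fun x hx => Finset.mem_sdiff.mp (hIsub hx), hIind, ?_⟩
    have hsplit : (G.neighborFinset v ∩ UF).card + (G.neighborFinset v \ UF).card
        = G.degree v := by
      rw [Finset.card_inter_add_card_sdiff, G.card_neighborFinset_eq_degree]
    omega
  have indepFacts : ∀ I : Finset V, (∀ x ∈ I, ∀ y ∈ I, ¬ G.Adj x y) →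
      (I.card + 1 ≤ n ∧
        ∀ x ∈ I, ((univ \ I) \ G.neighborFinset x).card + I.card + 1 ≤ n) := by
    intro I hind
    have hNsub : ∀ x ∈ I, G.neighborFinset x ⊆ univ \ I := by
      intro x hx y hy
      rw [Finset.mem_sdiff]
      exact ⟨Finset.mem_univ _,
        fun hyI => hind x hx y hyI ((SimpleGraph.mem_neighborFinset _ _ _).mp hy)⟩
    have hIcard : I.card + 1 ≤ n := by
      rcases I.eq_empty_or_nonempty with h | ⟨x, hx⟩
      · rw [h]; simpa using hn1
      · have hle : G.degree x ≤ (univ \ I).card := by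
          rw [← G.card_neighborFinset_eq_degree]
          exact Finset.card_le_card (hNsub x hx)
        rw [Finset.card_sdiff_of_subset (Finset.subset_univ I), Finset.card_univ] at hle
        have := hdeg' x
        have hIle : I.card ≤ Fintype.card V := Finset.card_le_card (Finset.subset_univ I)
        omega
    refine ⟨hIcard, fun x hx => ?_⟩
    have hsub := hNsub x hx
    have hcs := Finset.card_sdiff_of_subset hsub
    have hle := Finset.card_le_card hsub
    have hdx := G.card_neighborFinset_eq_degree x
    have h2 : ((univ \ I) \ G.neighborFinset x).card + G.degree x = (univ \ I).card := by
      omega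
    rw [Finset.card_sdiff_of_subset (Finset.subset_univ I), Finset.card_univ] at h2
    have h3 := hdeg' x
    have hIle : I.card ≤ Fintype.card V := Finset.card_le_card (Finset.subset_univ I)
    omega
  -- θ abbreviations
  obtain ⟨θk, hθk⟩ : ∃ θk, θk + 1 = k := ⟨k - 1, by omega⟩
  obtain ⟨θ2, hθ2⟩ : ∃ θ2, θ2 + 1 = 2*k := ⟨2*k - 1, by omega⟩
  by_cases hXY : ∃ v, v ∉ UF ∧ (G.neighborFinset v ∩ UF).card ≤ (k+1) * p
  · -- CASE X
    obtain ⟨v₀, hv₀U, hv₀q⟩ := hXY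
    obtain ⟨I, hImem, hIind, hIext⟩ := extract v₀ hv₀U
    obtain ⟨hIn, hImiss0⟩ := indepFacts I hIind
    obtain ⟨ε, hIε⟩ : ∃ e, I.card + e + 1 = n := ⟨n - 1 - I.card, by omega⟩
    have h2k2 : 2*(k-1) + 2 = 2*k := by omega
    have hεX : ε + t + 2 ≤ 2*k + (k+1)*p := by
      linarith [hdeg' v₀, hIext, hv₀q]
    have hmulX : (k+1)*p ≤ (2*k+1)*p := Nat.mul_le_mul_right _ (by omega)
    have hεXw : ε + t + 2 ≤ 2*k + (2*k+1)*p := by linarith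
    have hImiss : ∀ x ∈ I, ((univ \ I) \ G.neighborFinset x).card ≤ ε := by
      intro x hx; have := hImiss0 x hx; omega
    have hA1 := arA1 hk ht hplt h1 h3 hθk hεXw
    have hIbig : (ε+1)*θk + 1 ≤ I.card := by linarith
    have hIpos : 0 < I.card := by
      have := Nat.zero_le ((ε+1)*θk); linarith
    obtain ⟨x₀, hx₀I⟩ := Finset.card_pos.mp hIpos
    have hx₀U : x₀ ∉ UF := (hImem x₀ hx₀I).2
    obtain ⟨I₂, hI₂mem, hI₂ind, hI₂ext⟩ := extract x₀ hx₀U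
    obtain ⟨hI₂n, hI₂miss0⟩ := indepFacts I₂ hI₂ind
    obtain ⟨ε₂, hI₂ε⟩ : ∃ e, I₂.card + e + 1 = n := ⟨n - 1 - I₂.card, by omega⟩
    have hq₂ : (G.neighborFinset x₀ ∩ UF).card ≤ (2*k+1) * p := by
      calc (G.neighborFinset x₀ ∩ UF).card ≤ UF.card :=
            Finset.card_le_card Finset.inter_subset_right
      _ = p * (2*k+1) := hUFcard
      _ = (2*k+1) * p := by ring
    have hε₂Y : ε₂ + t + 2 ≤ 2*k + (2*k+1)*p := by
      linarith [hdeg' x₀, hI₂ext, hq₂]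
    have hI₂miss : ∀ x ∈ I₂, ((univ \ I₂) \ G.neighborFinset x).card ≤ ε₂ := by
      intro x hx; have := hI₂miss0 x hx; omega
    have hA1b := arA1 hk ht hplt h1 h3 hθk hε₂Y
    have hI₂big : (ε₂+1)*θk + 1 ≤ I₂.card := by linarith
    have hII₂ : Disjoint I I₂ := by
      rw [Finset.disjoint_right]
      intro y hyI₂ hyI
      exact hIind x₀ hx₀I y hyI
        ((SimpleGraph.mem_neighborFinset _ _ _).mp (hI₂mem y hyI₂).1)
    set R : Finset V := (univ \ I) \ I₂ with hRdef
    have hI₂subc : I₂ ⊆ univ \ I := by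
      intro y hy
      rw [Finset.mem_sdiff]
      exact ⟨Finset.mem_univ _, fun hyI => (Finset.disjoint_left.mp hII₂ hyI) hy⟩
    have hRcard : R.card + I.card + I₂.card = Fintype.card V := by
      have h2' : I₂.card ≤ (univ \ I).card := Finset.card_le_card hI₂subc
      have h1' : I.card ≤ Fintype.card V := Finset.card_le_card (Finset.subset_univ I)
      rw [hRdef, Finset.card_sdiff_of_subset hI₂subc, Finset.card_sdiff_of_subset (Finset.subset_univ I),
        Finset.card_univ]
      rw [Finset.card_sdiff_of_subset (Finset.subset_univ I), Finset.card_univ] at h2'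
      omega
    have hRt : R.card = t + ε + ε₂ := by omega
    have hcover : ∀ y : V, y ∈ I ∨ y ∈ I₂ ∨ y ∈ R := by
      intro y
      by_cases hy1 : y ∈ I
      · exact Or.inl hy1
      by_cases hy2 : y ∈ I₂
      · exact Or.inr (Or.inl hy2)
      refine Or.inr (Or.inr ?_)
      rw [hRdef, Finset.mem_sdiff, Finset.mem_sdiff]
      exact ⟨⟨Finset.mem_univ _, hy1⟩, hy2⟩
    have hIWF : ∀ y ∈ I, y ∉ UF := fun y hy => (hImem y hy).2
    have hI₂WF : ∀ y ∈ I₂, y ∉ UF := fun y hy => (hI₂mem y hy).2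
    set aC : V → ℕ := fun r => (G.neighborFinset r ∩ I).card with haCdef
    set bC : V → ℕ := fun r => (G.neighborFinset r ∩ I₂).card with hbCdef
    have hdegsplit : ∀ r ∈ R, G.degree r + 1 ≤ aC r + bC r + R.card := by
      intro r hr
      have hsub : G.neighborFinset r ⊆
          (G.neighborFinset r ∩ I) ∪ ((G.neighborFinset r ∩ I₂) ∪ R.erase r) := by
        intro y hy
        rcases hcover y with h | h | h
        · exact Finset.mem_union_left _ (Finset.mem_inter.mpr ⟨hy, h⟩)
        · exact Finset.mem_union_right _
            (Finset.mem_union_left _ (Finset.mem_inter.mpr ⟨hy, h⟩))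
        · refine Finset.mem_union_right _
            (Finset.mem_union_right _ (Finset.mem_erase.mpr ⟨?_, h⟩))
          intro hyr
          rw [hyr] at hy
          exact G.irrefl ((SimpleGraph.mem_neighborFinset _ _ _).mp hy)
      have hcd := Finset.card_le_card hsub
      have hu1 := Finset.card_union_le (G.neighborFinset r ∩ I)
        ((G.neighborFinset r ∩ I₂) ∪ R.erase r)
      have hu2 := Finset.card_union_le (G.neighborFinset r ∩ I₂) (R.erase r)
      have her : (R.erase r).card + 1 = R.card := by
        rw [Finset.card_erase_of_mem hr]
        have : 0 < R.card := Finset.card_pos.mpr ⟨r, hr⟩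
        omega
      have hdx := G.card_neighborFinset_eq_degree r
      simp only [haCdef, hbCdef]
      omega
    have hA5 := arA5 hk ht hplt h2 hεX hε₂Y
    have hmidk : ∀ r ∈ R, k + ε₂ ≤ aC r ∨ k + ε ≤ bC r := by
      intro r hr
      by_contra hcon
      push_neg at hcon
      have hds := hdegsplit r hr
      have := hdeg' r
      omega
    have hA6 := arA6 hk ht hplt h2 hεX hε₂Y
    have hmid2k : ∀ r ∈ R, 2*k + ε₂ ≤ aC r ∨ 2*k + ε ≤ bC r := by
      intro r hr
      by_contra hcon
      push_neg at hcon
      have hds := hdegsplit r hr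
      have := hdeg' r
      omega
    have hRsubI : R ⊆ univ \ I := by rw [hRdef]; exact Finset.sdiff_subset
    have hRsubI₂ : R ⊆ univ \ I₂ := by
      intro x hx
      rw [hRdef, Finset.mem_sdiff, Finset.mem_sdiff] at hx
      rw [Finset.mem_sdiff]
      exact ⟨Finset.mem_univ _, hx.2⟩
    set Sa := R.filter (fun r => aC r ≤ θk) with hSadef
    have hSa : Sa.card ≤ ε + 0 := low_count G hImiss
      ((Finset.filter_subset _ _).trans hRsubI)
      (fun r hr => (Finset.mem_filter.mp hr).2) (by simpa using hIbig)
    set Sb := R.filter (fun r => bC r ≤ θk) with hSbdef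
    have hSb : Sb.card ≤ ε₂ + 0 := low_count G hI₂miss
      ((Finset.filter_subset _ _).trans hRsubI₂)
      (fun r hr => (Finset.mem_filter.mp hr).2) (by simpa using hI₂big)
    set KG := R.filter (fun r => k ≤ aC r ∧ k ≤ bC r) with hKGdef
    have hKGt : t ≤ KG.card := by
      have hcov : R ⊆ KG ∪ (Sa ∪ Sb) := by
        intro r hr
        by_cases ha' : k ≤ aC r
        · by_cases hb' : k ≤ bC r
          · exact Finset.mem_union_left _ (Finset.mem_filter.mpr ⟨hr, ha', hb'⟩)
          · exact Finset.mem_union_right _ (Finset.mem_union_right _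
              (Finset.mem_filter.mpr ⟨hr, by omega⟩))
        · exact Finset.mem_union_right _ (Finset.mem_union_left _
            (Finset.mem_filter.mpr ⟨hr, by omega⟩))
      have hcc := Finset.card_le_card hcov
      have hu1 := Finset.card_union_le KG (Sa ∪ Sb)
      have hu2 := Finset.card_union_le Sa Sb
      omega
    -- the fan builder
    have mkfan : ∀ r ∈ R, ∀ Ψ : Finset V, (Ψ ∩ I).card ≤ k → (Ψ ∩ I₂).card ≤ k →
        k + (Ψ ∩ I).card ≤ aC r → k + (Ψ ∩ I₂).card ≤ bC r →
        (k + ε₂ + (Ψ ∩ I).card ≤ aC r ∨ k + ε + (Ψ ∩ I₂).card ≤ bC r) →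
        ∃ (g : Opt k → V) (bodyF : Finset V), FanAt G k g ∧ g none = r ∧
          (∀ (j : Fin k) (c : Fin 2), g (some (j,c)) ∈ bodyF) ∧
          (∀ v ∈ bodyF, (v ∈ I ∨ v ∈ I₂) ∧ v ∉ Ψ) ∧
          (bodyF ∩ I).card ≤ k ∧ (bodyF ∩ I₂).card ≤ k := by
      intro r hrR Ψ hΨI hΨI₂ haΨ hbΨ hmidΨ
      have haCr : aC r = (G.neighborFinset r ∩ I).card := rfl
      have hbCr : bC r = (G.neighborFinset r ∩ I₂).card := rfl
      have hPIcard : (G.neighborFinset r ∩ I).card ≤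
          ((G.neighborFinset r ∩ I) \ Ψ).card + (Ψ ∩ I).card :=
        card_le_sdiff_add Finset.inter_subset_right
      have hPI₂card : (G.neighborFinset r ∩ I₂).card ≤
          ((G.neighborFinset r ∩ I₂) \ Ψ).card + (Ψ ∩ I₂).card :=
        card_le_sdiff_add Finset.inter_subset_right
      have hIside : ((G.neighborFinset r ∩ I) \ Ψ) ⊆ G.neighborFinset r :=
        (Finset.sdiff_subset).trans Finset.inter_subset_left
      have hI₂side : ((G.neighborFinset r ∩ I₂) \ Ψ) ⊆ G.neighborFinset r :=
        (Finset.sdiff_subset).trans Finset.inter_subset_left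
      have hmemI : ∀ v ∈ (G.neighborFinset r ∩ I) \ Ψ, v ∈ I ∧ v ∉ Ψ := by
        intro v hv
        rw [Finset.mem_sdiff, Finset.mem_inter] at hv
        exact ⟨hv.1.2, hv.2⟩
      have hmemI₂ : ∀ v ∈ (G.neighborFinset r ∩ I₂) \ Ψ, v ∈ I₂ ∧ v ∉ Ψ := by
        intro v hv
        rw [Finset.mem_sdiff, Finset.mem_inter] at hv
        exact ⟨hv.1.2, hv.2⟩
      rcases hmidΨ with hcase | hcase
      · -- pairing 2 : first coordinates from I₂, partners in I
        have hPQ : Disjoint ((G.neighborFinset r ∩ I₂) \ Ψ) ((G.neighborFinset r ∩ I) \ Ψ) := by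
          refine Finset.disjoint_left.mpr ?_
          intro x hxP hxQ
          exact (Finset.disjoint_left.mp hII₂ (hmemI x hxQ).1) (hmemI₂ x hxP).1
        have hmiss' : ∀ x ∈ (G.neighborFinset r ∩ I₂) \ Ψ,
            (((G.neighborFinset r ∩ I) \ Ψ) \ G.neighborFinset x).card ≤ ε₂ := by
          intro x hxP
          refine le_trans (Finset.card_le_card ?_) (hI₂miss x (hmemI₂ x hxP).1)
          refine Finset.sdiff_subset_sdiff ?_ le_rfl
          intro y hy
          rw [Finset.mem_sdiff]
          exact ⟨Finset.mem_univ _,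
            fun hyI₂ => (Finset.disjoint_left.mp hII₂ (hmemI y hy).1) hyI₂⟩
        obtain ⟨g, hgFan, hgnone, hg01, hgPQ⟩ := build_fan (k := k) G hPQ hI₂side hIside hmiss'
          (by omega) (by omega)
        refine ⟨g, Finset.image (fun jc : Fin k × Fin 2 => g (some jc)) univ,
          hgFan, hgnone, ?_, ?_, ?_, ?_⟩
        · intro j c
          exact Finset.mem_image_of_mem _ (Finset.mem_univ (j, c))
        · intro v hv
          rw [Finset.mem_image] at hv
          obtain ⟨⟨j, c⟩, _, rfl⟩ := hv
          rcases fin2_cases c with h | h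
          · subst h
            have := hmemI₂ _ (hg01 j).1
            exact ⟨Or.inr this.1, this.2⟩
          · subst h
            have := hmemI _ (hg01 j).2
            exact ⟨Or.inl this.1, this.2⟩
        · -- at most k body vertices in I : they are the c = 1 values
          have hsub2 : (Finset.image (fun jc : Fin k × Fin 2 => g (some jc)) univ) ∩ I ⊆
              Finset.image (fun j : Fin k => g (some (j, 1))) univ := by
            intro v hv
            rw [Finset.mem_inter, Finset.mem_image] at hv
            obtain ⟨⟨⟨j, c⟩, _, rfl⟩, hvI⟩ := hv
            rcases fin2_cases c with h | h
            · subst h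
              exact absurd ((hmemI₂ _ (hg01 j).1).1)
                (fun hh => (Finset.disjoint_left.mp hII₂ hvI) hh)
            · subst h
              exact Finset.mem_image_of_mem _ (Finset.mem_univ j)
          calc ((Finset.image (fun jc : Fin k × Fin 2 => g (some jc)) univ) ∩ I).card
              ≤ (Finset.image (fun j : Fin k => g (some (j, 1))) univ).card :=
                Finset.card_le_card hsub2
          _ ≤ (univ : Finset (Fin k)).card := Finset.card_image_le
          _ = k := by simp
        · have hsub2 : (Finset.image (fun jc : Fin k × Fin 2 => g (some jc)) univ) ∩ I₂ ⊆
              Finset.image (fun j : Fin k => g (some (j, 0))) univ := by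
            intro v hv
            rw [Finset.mem_inter, Finset.mem_image] at hv
            obtain ⟨⟨⟨j, c⟩, _, rfl⟩, hvI⟩ := hv
            rcases fin2_cases c with h | h
            · subst h
              exact Finset.mem_image_of_mem _ (Finset.mem_univ j)
            · subst h
              exact absurd ((hmemI _ (hg01 j).2).1)
                (fun hh => (Finset.disjoint_left.mp hII₂ hh) hvI)
          calc ((Finset.image (fun jc : Fin k × Fin 2 => g (some jc)) univ) ∩ I₂).card
              ≤ (Finset.image (fun j : Fin k => g (some (j, 0))) univ).card :=
                Finset.card_le_card hsub2
          _ ≤ (univ : Finset (Fin k)).card := Finset.card_image_le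
          _ = k := by simp
      · -- pairing 1 : first coordinates from I, partners in I₂
        have hPQ : Disjoint ((G.neighborFinset r ∩ I) \ Ψ) ((G.neighborFinset r ∩ I₂) \ Ψ) := by
          refine Finset.disjoint_left.mpr ?_
          intro x hxP hxQ
          exact (Finset.disjoint_left.mp hII₂ (hmemI x hxP).1) (hmemI₂ x hxQ).1
        have hmiss' : ∀ x ∈ (G.neighborFinset r ∩ I) \ Ψ,
            (((G.neighborFinset r ∩ I₂) \ Ψ) \ G.neighborFinset x).card ≤ ε := by
          intro x hxP
          refine le_trans (Finset.card_le_card ?_) (hImiss x (hmemI x hxP).1)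
          refine Finset.sdiff_subset_sdiff ?_ le_rfl
          intro y hy
          rw [Finset.mem_sdiff]
          exact ⟨Finset.mem_univ _,
            fun hyI => (Finset.disjoint_left.mp hII₂ hyI) (hmemI₂ y hy).1⟩
        obtain ⟨g, hgFan, hgnone, hg01, hgPQ⟩ := build_fan (k := k) G hPQ hIside hI₂side hmiss'
          (by omega) (by omega)
        refine ⟨g, Finset.image (fun jc : Fin k × Fin 2 => g (some jc)) univ,
          hgFan, hgnone, ?_, ?_, ?_, ?_⟩
        · intro j c
          exact Finset.mem_image_of_mem _ (Finset.mem_univ (j, c))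
        · intro v hv
          rw [Finset.mem_image] at hv
          obtain ⟨⟨j, c⟩, _, rfl⟩ := hv
          rcases fin2_cases c with h | h
          · subst h
            have := hmemI _ (hg01 j).1
            exact ⟨Or.inl this.1, this.2⟩
          · subst h
            have := hmemI₂ _ (hg01 j).2
            exact ⟨Or.inr this.1, this.2⟩
        · have hsub2 : (Finset.image (fun jc : Fin k × Fin 2 => g (some jc)) univ) ∩ I ⊆
              Finset.image (fun j : Fin k => g (some (j, 0))) univ := by
            intro v hv
            rw [Finset.mem_inter, Finset.mem_image] at hv
            obtain ⟨⟨⟨j, c⟩, _, rfl⟩, hvI⟩ := hv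
            rcases fin2_cases c with h | h
            · subst h
              exact Finset.mem_image_of_mem _ (Finset.mem_univ j)
            · subst h
              exact absurd ((hmemI₂ _ (hg01 j).2).1)
                (fun hh => (Finset.disjoint_left.mp hII₂ hvI) hh)
          calc ((Finset.image (fun jc : Fin k × Fin 2 => g (some jc)) univ) ∩ I).card
              ≤ (Finset.image (fun j : Fin k => g (some (j, 0))) univ).card :=
                Finset.card_le_card hsub2
          _ ≤ (univ : Finset (Fin k)).card := Finset.card_image_le
          _ = k := by simp
        · have hsub2 : (Finset.image (fun jc : Fin k × Fin 2 => g (some jc)) univ) ∩ I₂ ⊆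
              Finset.image (fun j : Fin k => g (some (j, 1))) univ := by
            intro v hv
            rw [Finset.mem_inter, Finset.mem_image] at hv
            obtain ⟨⟨⟨j, c⟩, _, rfl⟩, hvI⟩ := hv
            rcases fin2_cases c with h | h
            · subst h
              exact absurd ((hmemI _ (hg01 j).1).1)
                (fun hh => (Finset.disjoint_left.mp hII₂ hh) hvI)
            · subst h
              exact Finset.mem_image_of_mem _ (Finset.mem_univ j)
          calc ((Finset.image (fun jc : Fin k × Fin 2 => g (some jc)) univ) ∩ I₂).card
              ≤ (Finset.image (fun j : Fin k => g (some (j, 1))) univ).card :=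
                Finset.card_le_card hsub2
          _ ≤ (univ : Finset (Fin k)).card := Finset.card_image_le
          _ = k := by simp
    -- either some good centre is outside the packing, or pigeonhole inside it
    by_cases hKGout : ∃ r ∈ KG, r ∉ UF
    · obtain ⟨r, hrKG, hrU⟩ := hKGout
      have hrR : r ∈ R := (Finset.mem_filter.mp hrKG).1
      have hgood := (Finset.mem_filter.mp hrKG).2
      obtain ⟨g, bodyF, hgFan, hgnone, hgmem, hbody, _, _⟩ :=
        mkfan r hrR ∅ (by simp) (by simp) (by simpa using hgood.1)
          (by simpa using hgood.2) (by simpa using hmidk r hrR)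
      apply hnot
      refine fam_add hf hgFan ?_
      intro x i y hxy
      have hval : g x ∈ UF := by rw [hxy]; exact hfUF (i, y)
      cases x with
      | none => rw [hgnone] at hval; exact hrU hval
      | some jc =>
        obtain ⟨j, c⟩ := jc
        have hb := hbody _ (hgmem j c)
        rcases hb.1 with h | h
        · exact hIWF _ h hval
        · exact hI₂WF _ h hval
    · push_neg at hKGout
      have hKGne : KG.Nonempty := Finset.card_pos.mp (by omega)
      obtain ⟨r₀, hr₀⟩ := hKGne
      have hr₀UF := hKGout r₀ hr₀
      rw [hUFdef, Finset.mem_image] at hr₀UF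
      obtain ⟨iy₀, -, -⟩ := hr₀UF
      have hp1 : 1 ≤ p := iy₀.1.pos
      have hA3 := arA3 hk ht hplt h1 h3 hp1 hθ2 hεX
      have hIbig2 : (ε+1)*θ2 + 1 ≤ I.card := by linarith
      set SA := R.filter (fun r => aC r ≤ θ2) with hSAdef
      have hSA : SA.card ≤ ε + 0 := low_count G hImiss
        ((Finset.filter_subset _ _).trans hRsubI)
        (fun r hr => (Finset.mem_filter.mp hr).2) (by simpa using hIbig2)
      have hA4 := arA4 hk ht hplt h1 h3 hp1 hθ2 hε₂Y
      have hI₂big2 : (ε₂+1+1)*θ2 + 1 ≤ (1+1) * I₂.card := by linarith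
      set SB := R.filter (fun r => bC r ≤ θ2) with hSBdef
      have hSB : SB.card ≤ ε₂ + 1 := low_count G hI₂miss
        ((Finset.filter_subset _ _).trans hRsubI₂)
        (fun r hr => (Finset.mem_filter.mp hr).2) hI₂big2
      set KG2 := R.filter (fun r => 2*k ≤ aC r ∧ 2*k ≤ bC r) with hKG2def
      have hKG2t : t ≤ KG2.card + 1 := by
        have hcov : R ⊆ KG2 ∪ (SA ∪ SB) := by
          intro r hr
          by_cases ha' : 2*k ≤ aC r
          · by_cases hb' : 2*k ≤ bC r
            · exact Finset.mem_union_left _ (Finset.mem_filter.mpr ⟨hr, ha', hb'⟩)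
            · exact Finset.mem_union_right _ (Finset.mem_union_right _
                (Finset.mem_filter.mpr ⟨hr, by omega⟩))
          · exact Finset.mem_union_right _ (Finset.mem_union_left _
              (Finset.mem_filter.mpr ⟨hr, by omega⟩))
        have hcc := Finset.card_le_card hcov
        have hu1 := Finset.card_union_le KG2 (SA ∪ SB)
        have hu2 := Finset.card_union_le SA SB
        omega
      have hKG2sub : KG2 ⊆ KG := by
        intro r hr
        rw [hKG2def, Finset.mem_filter] at hr
        rw [hKGdef, Finset.mem_filter]
        exact ⟨hr.1, by omega, by omega⟩
      set KGidx := univ.filter (fun iy : Fin p × Opt k => f iy ∈ KG) with hKGidxdef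
      have hKGidxcard : KGidx.card = KG.card := by
        rw [hKGidxdef, index_card hf.1 KG, ← hUFdef,
          Finset.inter_eq_right.mpr (fun r hr => hKGout r hr)]
      set KG2idx := univ.filter (fun iy : Fin p × Opt k => f iy ∈ KG2) with hKG2idxdef
      have hKG2idxcard : KG2idx.card = KG2.card := by
        rw [hKG2idxdef, index_card hf.1 KG2, ← hUFdef,
          Finset.inter_eq_right.mpr (fun r hr => hKGout r (hKG2sub hr))]
      have hcardlt : (univ : Finset (Fin p)).card < KGidx.card := by
        rw [Finset.card_univ, Fintype.card_fin]
        omega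
      obtain ⟨iy₁, hiy₁, iy₂, hiy₂, hne12, heq12⟩ :=
        Finset.exists_ne_map_eq_of_card_lt_of_maps_to hcardlt
          (fun iy _ => Finset.mem_univ iy.1)
      have hy12 : iy₁.2 ≠ iy₂.2 := fun h => hne12 (Prod.ext heq12 h)
      have hiy₁KG : f iy₁ ∈ KG := (Finset.mem_filter.mp hiy₁).2
      have hiy₂KG : f iy₂ ∈ KG := (Finset.mem_filter.mp hiy₂).2
      have hTriple : ∃ (i₀ : Fin p) (yS yP : Opt k), yS ≠ yP ∧
          f (i₀, yS) ∈ KG2 ∧ f (i₀, yP) ∈ KG := by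
        by_cases hA : ∃ jy ∈ KG2idx, ∃ jy' ∈ KG2idx, jy ≠ jy' ∧ jy.1 = jy'.1
        · obtain ⟨jy, hjy, jy', hjy', hnejj, heqjj⟩ := hA
          refine ⟨jy.1, jy.2, jy'.2, ?_, ?_, ?_⟩
          · intro h; exact hnejj (Prod.ext heqjj h)
          · have := (Finset.mem_filter.mp hjy).2
            simpa using this
          · have := hKG2sub (Finset.mem_filter.mp hjy').2
            rw [heqjj]
            simpa using this
        · push_neg at hA
          have hinj : Set.InjOn (fun iy : Fin p × Opt k => iy.1) KG2idx := by
            intro x hx y hy hxy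
            by_contra hne
            exact (hA x hx y hy hne) hxy
          have himgcard : (KG2idx.image (fun iy => iy.1)).card = KG2idx.card :=
            Finset.card_image_of_injOn hinj
          have hle : KG2idx.card ≤ p := by
            have h' := Finset.card_le_card (Finset.subset_univ
              (KG2idx.image (fun iy => iy.1)))
            rw [himgcard] at h'
            simpa using h'
          have himguniv : KG2idx.image (fun iy => iy.1) = univ := by
            apply Finset.eq_univ_of_card
            rw [himgcard, Fintype.card_fin]
            omega
          have hi₀mem : iy₁.1 ∈ KG2idx.image (fun iy => iy.1) := by
            rw [himguniv]; exact Finset.mem_univ _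
          obtain ⟨jyS, hjyS, hjySeq⟩ := Finset.mem_image.mp hi₀mem
          have hjySKG2 : f jyS ∈ KG2 := (Finset.mem_filter.mp hjyS).2
          by_cases hyS1 : jyS.2 = iy₁.2
          · refine ⟨iy₁.1, jyS.2, iy₂.2, ?_, ?_, ?_⟩
            · rw [hyS1]; exact hy12
            · have : (iy₁.1, jyS.2) = jyS := by
                rw [← hjySeq]
              rw [this]; exact hjySKG2
            · have : (iy₁.1, iy₂.2) = iy₂ := by
                rw [heq12]
              rw [this]; exact hiy₂KG
          · refine ⟨iy₁.1, jyS.2, iy₁.2, hyS1, ?_, ?_⟩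
            · have : (iy₁.1, jyS.2) = jyS := by
                rw [← hjySeq]
              rw [this]; exact hjySKG2
            · have : (iy₁.1, iy₁.2) = iy₁ := rfl
              rw [this]; exact hiy₁KG
      obtain ⟨i₀, yS, yP, hySP, hSKG2, hPKG⟩ := hTriple
      have hSR : f (i₀, yS) ∈ R := (Finset.mem_filter.mp hSKG2).1
      have hPR : f (i₀, yP) ∈ R := (Finset.mem_filter.mp hPKG).1
      have hSgood := (Finset.mem_filter.mp hSKG2).2
      have hPgood := (Finset.mem_filter.mp hPKG).2
      obtain ⟨g₁, body₁, hg₁Fan, hg₁none, hg₁mem, hbody₁, hb₁I, hb₁I₂⟩ :=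
        mkfan _ hPR ∅ (by simp) (by simp) (by simpa using hPgood.1)
          (by simpa using hPgood.2) (by simpa using hmidk _ hPR)
      obtain ⟨g₂, body₂, hg₂Fan, hg₂none, hg₂mem, hbody₂, -, -⟩ :=
        mkfan _ hSR body₁ (by omega) (by omega) (by omega) (by omega)
          (by rcases hmid2k _ hSR with h | h
              · left; omega
              · right; omega)
      apply hnot
      refine fam_swap hf i₀ hg₁Fan hg₂Fan ?_ ?_ ?_
      · intro x y hxy
        cases x with
        | none =>
          cases y with
          | none =>
            rw [hg₁none, hg₂none] at hxy
            have := hf.1 hxy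
            rw [Prod.mk.injEq] at this
            exact hySP this.2.symm
          | some jc =>
            obtain ⟨j, c⟩ := jc
            have hb := hbody₂ _ (hg₂mem j c)
            rw [hg₁none] at hxy
            have hval : g₂ (some (j, c)) ∈ UF := by rw [← hxy]; exact hfUF _
            rcases hb.1 with h | h
            · exact hIWF _ h hval
            · exact hI₂WF _ h hval
        | some jc =>
          obtain ⟨j, c⟩ := jc
          cases y with
          | none =>
            have hb := hbody₁ _ (hg₁mem j c)
            rw [hg₂none] at hxy
            have hval : g₁ (some (j, c)) ∈ UF := by rw [hxy]; exact hfUF _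
            rcases hb.1 with h | h
            · exact hIWF _ h hval
            · exact hI₂WF _ h hval
          | some jc' =>
            obtain ⟨j', c'⟩ := jc'
            have hb1 := hg₁mem j c
            have hb2 := hbody₂ _ (hg₂mem j' c')
            rw [hxy] at hb1
            exact hb2.2 hb1
      · intro x i y hii hxy
        cases x with
        | none =>
          rw [hg₁none] at hxy
          have := hf.1 hxy
          rw [Prod.mk.injEq] at this
          exact hii this.1.symm
        | some jc =>
          obtain ⟨j, c⟩ := jc
          have hb := hbody₁ _ (hg₁mem j c)
          have hval : g₁ (some (j, c)) ∈ UF := by rw [hxy]; exact hfUF _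
          rcases hb.1 with h | h
          · exact hIWF _ h hval
          · exact hI₂WF _ h hval
      · intro x i y hii hxy
        cases x with
        | none =>
          rw [hg₂none] at hxy
          have := hf.1 hxy
          rw [Prod.mk.injEq] at this
          exact hii this.1.symm
        | some jc =>
          obtain ⟨j, c⟩ := jc
          have hb := hbody₂ _ (hg₂mem j c)
          have hval : g₂ (some (j, c)) ∈ UF := by rw [hxy]; exact hfUF _
          rcases hb.1 with h | h
          · exact hIWF _ h hval
          · exact hI₂WF _ h hval
  · -- CASE Y
    push_neg at hXY
    have hp1 : 1 ≤ p := by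
      rcases Nat.eq_zero_or_pos p with hp0 | hp1
      · exfalso
        have hUF0 : UF.card = 0 := by rw [hUFcard, hp0]; ring
        have hUFempty : UF = ∅ := Finset.card_eq_zero.mp hUF0
        have hcV : 0 < Fintype.card V := by omega
        obtain ⟨v⟩ := Fintype.card_pos_iff.mp hcV
        have hv := hXY v (by rw [hUFempty]; exact Finset.notMem_empty v)
        rw [hUFempty] at hv
        simp [hp0] at hv
      · exact hp1
    have hA9 := arA9 hk ht hplt h3
    have hWFne : ∃ v, v ∉ UF := by
      have hUFlt : UF.card < Fintype.card V := by
        have h' : UF.card = p*(2*k+1) := hUFcard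
        linarith
      by_contra hall
      push_neg at hall
      have hsub := Finset.card_le_card (fun v _ => hall v : (univ : Finset V) ⊆ UF)
      rw [Finset.card_univ] at hsub
      omega
    obtain ⟨v₀, hv₀U⟩ := hWFne
    obtain ⟨I, hImem, hIind, hIext⟩ := extract v₀ hv₀U
    obtain ⟨hIn, hImiss0⟩ := indepFacts I hIind
    obtain ⟨ε, hIε⟩ : ∃ e, I.card + e + 1 = n := ⟨n - 1 - I.card, by omega⟩
    have h2k2 : 2*(k-1) + 2 = 2*k := by omega
    have hq : (G.neighborFinset v₀ ∩ UF).card ≤ (2*k+1) * p := by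
      calc (G.neighborFinset v₀ ∩ UF).card ≤ UF.card :=
            Finset.card_le_card Finset.inter_subset_right
      _ = p * (2*k+1) := hUFcard
      _ = (2*k+1)*p := by ring
    have hεY : ε + t + 2 ≤ 2*k + (2*k+1)*p := by linarith [hdeg' v₀, hIext, hq]
    have hImiss : ∀ x ∈ I, ((univ \ I) \ G.neighborFinset x).card ≤ ε := by
      intro x hx; have := hImiss0 x hx; omega
    have hA1 := arA1 hk ht hplt h1 h3 hθk hεY
    have hIbig : (ε+1)*θk + 1 ≤ I.card := by linarith
    have hIpos : 0 < I.card := by have := Nat.zero_le ((ε+1)*θk); linarith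
    obtain ⟨x₀, hx₀I⟩ := Finset.card_pos.mp hIpos
    have hx₀U : x₀ ∉ UF := (hImem x₀ hx₀I).2
    obtain ⟨I₂, hI₂mem, hI₂ind, hI₂ext⟩ := extract x₀ hx₀U
    obtain ⟨hI₂n, hI₂miss0⟩ := indepFacts I₂ hI₂ind
    obtain ⟨ε₂, hI₂ε⟩ : ∃ e, I₂.card + e + 1 = n := ⟨n - 1 - I₂.card, by omega⟩
    have hq₂ : (G.neighborFinset x₀ ∩ UF).card ≤ (2*k+1) * p := by
      calc (G.neighborFinset x₀ ∩ UF).card ≤ UF.card :=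
            Finset.card_le_card Finset.inter_subset_right
      _ = p * (2*k+1) := hUFcard
      _ = (2*k+1)*p := by ring
    have hε₂Y : ε₂ + t + 2 ≤ 2*k + (2*k+1)*p := by linarith [hdeg' x₀, hI₂ext, hq₂]
    have hII₂ : Disjoint I I₂ := by
      rw [Finset.disjoint_right]
      intro y hyI₂ hyI
      exact hIind x₀ hx₀I y hyI
        ((SimpleGraph.mem_neighborFinset _ _ _).mp (hI₂mem y hyI₂).1)
    have hIWF : ∀ y ∈ I, y ∉ UF := fun y hy => (hImem y hy).2
    have hI₂WF : ∀ y ∈ I₂, y ∉ UF := fun y hy => (hI₂mem y hy).2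
    set M₀ := k * θ2 * p + 1 with hM₀def
    have hA7 := arA7 hk ht hplt h1 h3 hp1 hθ2 hεY hε₂Y
    have hIM : M₀ ≤ I.card := by linarith
    have hI₂M : M₀ + ε ≤ I₂.card := by linarith
    have hmissM : ∀ x ∈ I, (I₂ \ G.neighborFinset x).card ≤ ε := by
      intro x hx
      refine le_trans (Finset.card_le_card ?_) (hImiss x hx)
      refine Finset.sdiff_subset_sdiff ?_ le_rfl
      exact fun y hy => Finset.mem_sdiff.mpr ⟨Finset.mem_univ _,
        fun hyI => (Finset.disjoint_left.mp hII₂ hyI) hy⟩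
    obtain ⟨ma, mb, hmps, hmmem⟩ := greedy_pairs G M₀ I I₂ ε hII₂ hIM hI₂M hmissM
    have hmaWF : ∀ j, ma j ∉ UF := fun j => hIWF _ (hmmem j).1
    have hmbWF : ∀ j, mb j ∉ UF := fun j => hI₂WF _ (hmmem j).2
    set cnt : Fin p × Opt k → ℕ := fun iy =>
      (univ.filter (fun j : Fin M₀ =>
        f iy ∈ G.neighborFinset (ma j) ∩ G.neighborFinset (mb j))).card with hcntdef
    by_cases hswap : ∃ i : Fin p, ∃ y y' : Opt k, y ≠ y' ∧ 2*k ≤ cnt (i,y) ∧ 2*k ≤ cnt (i,y')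
    · obtain ⟨i, y, y', hyy, hc1, hc2⟩ := hswap
      have hcnt1 : cnt (i, y) = (univ.filter (fun j : Fin M₀ =>
          f (i,y) ∈ G.neighborFinset (ma j) ∩ G.neighborFinset (mb j))).card := rfl
      have hcnt2 : cnt (i, y') = (univ.filter (fun j : Fin M₀ =>
          f (i,y') ∈ G.neighborFinset (ma j) ∩ G.neighborFinset (mb j))).card := rfl
      obtain ⟨σ₁, hσ₁inj, hσ₁mem⟩ := exists_inj_fun
        (univ.filter (fun j : Fin M₀ =>
          f (i,y) ∈ G.neighborFinset (ma j) ∩ G.neighborFinset (mb j))) k (by omega)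
      have hJ2c : k ≤ ((univ.filter (fun j : Fin M₀ =>
          f (i,y') ∈ G.neighborFinset (ma j) ∩ G.neighborFinset (mb j))) \
          Finset.image σ₁ univ).card := by
        have h1' := Finset.card_le_card_sdiff_add_card
          (s := univ.filter (fun j : Fin M₀ =>
            f (i,y') ∈ G.neighborFinset (ma j) ∩ G.neighborFinset (mb j)))
          (t := Finset.image σ₁ univ)
        have h2' : (Finset.image σ₁ univ).card ≤ k :=
          le_trans Finset.card_image_le (by simp)
        omega
      obtain ⟨σ₂, hσ₂inj, hσ₂mem⟩ := exists_inj_fun _ k hJ2c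
      have hσ₂J2 : ∀ j, σ₂ j ∈ univ.filter (fun j : Fin M₀ =>
          f (i,y') ∈ G.neighborFinset (ma j) ∩ G.neighborFinset (mb j)) :=
        fun j => (Finset.mem_sdiff.mp (hσ₂mem j)).1
      have hσ₂notim : ∀ j, σ₂ j ∉ Finset.image σ₁ univ :=
        fun j => (Finset.mem_sdiff.mp (hσ₂mem j)).2
      have hadj1 : ∀ j, ma (σ₁ j) ∈ G.neighborFinset (f (i,y)) ∧
          mb (σ₁ j) ∈ G.neighborFinset (f (i,y)) := by
        intro j
        have h' := (Finset.mem_filter.mp (hσ₁mem j)).2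
        rw [Finset.mem_inter] at h'
        obtain ⟨ha', hb'⟩ := h'
        constructor
        · rw [SimpleGraph.mem_neighborFinset] at ha' ⊢
          exact ha'.symm
        · rw [SimpleGraph.mem_neighborFinset] at hb' ⊢
          exact hb'.symm
      have hadj2 : ∀ j, ma (σ₂ j) ∈ G.neighborFinset (f (i,y')) ∧
          mb (σ₂ j) ∈ G.neighborFinset (f (i,y')) := by
        intro j
        have h' := (Finset.mem_filter.mp (hσ₂J2 j)).2
        rw [Finset.mem_inter] at h'
        obtain ⟨ha', hb'⟩ := h'
        constructor
        · rw [SimpleGraph.mem_neighborFinset] at ha' ⊢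
          exact ha'.symm
        · rw [SimpleGraph.mem_neighborFinset] at hb' ⊢
          exact hb'.symm
      have hps1 : PairSys G k (fun j => ma (σ₁ j)) (fun j => mb (σ₁ j)) :=
        ⟨hmps.1.comp hσ₁inj, hmps.2.1.comp hσ₁inj,
          fun j j' => hmps.2.2.1 _ _, fun j => hmps.2.2.2 _⟩
      have hps2 : PairSys G k (fun j => ma (σ₂ j)) (fun j => mb (σ₂ j)) :=
        ⟨hmps.1.comp hσ₂inj, hmps.2.1.comp hσ₂inj,
          fun j j' => hmps.2.2.1 _ _, fun j => hmps.2.2.2 _⟩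
      obtain ⟨g₁, hg₁Fan, hg₁none, hg₁ab, hg₁vals⟩ := fan_of_pairs G hps1
        (fun j => (hadj1 j).1) (fun j => (hadj1 j).2)
      obtain ⟨g₂, hg₂Fan, hg₂none, hg₂ab, hg₂vals⟩ := fan_of_pairs G hps2
        (fun j => (hadj2 j).1) (fun j => (hadj2 j).2)
      apply hnot
      refine fam_swap hf i hg₁Fan hg₂Fan ?_ ?_ ?_
      · intro x z hxz
        rcases hg₁vals x with h1' | ⟨j, h1'⟩ | ⟨j, h1'⟩ <;>
          rcases hg₂vals z with h2' | ⟨j', h2'⟩ | ⟨j', h2'⟩ <;>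
          rw [h1', h2'] at hxz
        · have := hf.1 hxz
          rw [Prod.mk.injEq] at this
          exact hyy this.2
        · exact hmaWF (σ₂ j') (by rw [← hxz]; exact hfUF _)
        · exact hmbWF (σ₂ j') (by rw [← hxz]; exact hfUF _)
        · exact hmaWF (σ₁ j) (by rw [hxz]; exact hfUF _)
        · have := hmps.1 hxz
          exact hσ₂notim j' (this ▸ Finset.mem_image_of_mem σ₁ (Finset.mem_univ j))
        · exact hmps.2.2.1 (σ₁ j) (σ₂ j') hxz
        · exact hmbWF (σ₁ j) (by rw [hxz]; exact hfUF _)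
        · exact hmps.2.2.1 (σ₂ j') (σ₁ j) hxz.symm
        · have := hmps.2.1 hxz
          exact hσ₂notim j' (this ▸ Finset.mem_image_of_mem σ₁ (Finset.mem_univ j))
      · intro x i' z hii hxz
        rcases hg₁vals x with h1' | ⟨j, h1'⟩ | ⟨j, h1'⟩ <;> rw [h1'] at hxz
        · have := hf.1 hxz
          rw [Prod.mk.injEq] at this
          exact hii this.1.symm
        · exact hmaWF (σ₁ j) (by rw [hxz]; exact hfUF _)
        · exact hmbWF (σ₁ j) (by rw [hxz]; exact hfUF _)
      · intro x i' z hii hxz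
        rcases hg₂vals x with h1' | ⟨j, h1'⟩ | ⟨j, h1'⟩ <;> rw [h1'] at hxz
        · have := hf.1 hxz
          rw [Prod.mk.injEq] at this
          exact hii this.1.symm
        · exact hmaWF (σ₂ j) (by rw [hxz]; exact hfUF _)
        · exact hmbWF (σ₂ j) (by rw [hxz]; exact hfUF _)
    · -- no swap possible : counting contradiction
      push_neg at hswap
      have hedge : ∀ j : Fin M₀, p + 2 ≤
          (univ.filter (fun iy : Fin p × Opt k =>
            f iy ∈ G.neighborFinset (ma j) ∩ G.neighborFinset (mb j))).card := by
        intro j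
        rw [index_card hf.1]
        have hia := hXY (ma j) (hmaWF j)
        have hib := hXY (mb j) (hmbWF j)
        have hinter : (UF ∩ G.neighborFinset (ma j)) ∩ (UF ∩ G.neighborFinset (mb j)) =
            UF ∩ (G.neighborFinset (ma j) ∩ G.neighborFinset (mb j)) := by
          ext v
          simp only [Finset.mem_inter]
          tauto
        have hiu := Finset.card_union_add_card_inter
          (UF ∩ G.neighborFinset (ma j)) (UF ∩ G.neighborFinset (mb j))
        have hsubU : (UF ∩ G.neighborFinset (ma j)) ∪ (UF ∩ G.neighborFinset (mb j)) ⊆ UF := by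
          intro v hv
          rcases Finset.mem_union.mp hv with h | h
          · exact (Finset.mem_inter.mp h).1
          · exact (Finset.mem_inter.mp h).1
        have hcu := Finset.card_le_card hsubU
        rw [hinter] at hiu
        have hca : (k+1)*p < (UF ∩ G.neighborFinset (ma j)).card := by
          rw [Finset.inter_comm]; exact hia
        have hcb : (k+1)*p < (UF ∩ G.neighborFinset (mb j)).card := by
          rw [Finset.inter_comm]; exact hib
        have hrel : (k+1)*p + (k+1)*p = p*(2*k+1) + p := by ring
        have hUFc := hUFcard
        linarith
      have hcnt_le : ∀ iy, cnt iy ≤ M₀ := by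
        intro iy
        refine le_trans (Finset.card_filter_le _ _) ?_
        simp
      have hθ2M : θ2 ≤ M₀ := by
        have h1' : θ2 ≤ k*θ2 := Nat.le_mul_of_pos_left θ2 (by omega)
        have h2' : k*θ2 ≤ k*θ2*p := Nat.le_mul_of_pos_right _ (by omega)
        omega
      have hperi : ∀ i : Fin p, ∑ y : Opt k, cnt (i, y) ≤ M₀ + (2*k)*θ2 := by
        intro i
        have hcardop : ((univ : Finset (Opt k)).erase (none : Opt k)).card + 1 = 2*k + 1 := by
          rw [Finset.card_erase_of_mem (Finset.mem_univ _), Finset.card_univ]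
          simp only [Fintype.card_option, Fintype.card_prod, Fintype.card_fin]
          omega
        by_cases hex : ∃ y₀ : Opt k, 2*k ≤ cnt (i, y₀)
        · obtain ⟨y₀, hy₀⟩ := hex
          have hrest : ∀ y ∈ (univ : Finset (Opt k)).erase y₀, cnt (i, y) ≤ θ2 := by
            intro y hy
            have hne := Finset.ne_of_mem_erase hy
            have := hswap i y₀ y (fun h => hne h.symm) hy₀
            omega
          have hers : ((univ : Finset (Opt k)).erase y₀).card = 2*k := by
            rw [Finset.card_erase_of_mem (Finset.mem_univ _), Finset.card_univ]
            simp only [Fintype.card_option, Fintype.card_prod, Fintype.card_fin]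
            omega
          have hsplit : ∑ y : Opt k, cnt (i, y) =
              cnt (i, y₀) + ∑ y ∈ (univ : Finset (Opt k)).erase y₀, cnt (i, y) :=
            (Finset.add_sum_erase _ _ (Finset.mem_univ y₀)).symm
          have hsum2 : ∑ y ∈ (univ : Finset (Opt k)).erase y₀, cnt (i, y) ≤ 2*k*θ2 := by
            have := Finset.sum_le_card_nsmul ((univ : Finset (Opt k)).erase y₀)
              (fun y => cnt (i, y)) θ2 hrest
            rw [hers] at this
            simpa [smul_eq_mul] using this
          have := hcnt_le (i, y₀)
          omega
        · push_neg at hex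
          have hall : ∀ y ∈ (univ : Finset (Opt k)), cnt (i, y) ≤ θ2 := by
            intro y _
            have := hex y
            omega
          have := Finset.sum_le_card_nsmul (univ : Finset (Opt k))
            (fun y => cnt (i, y)) θ2 hall
          rw [Finset.card_univ] at this
          simp only [Fintype.card_option, Fintype.card_prod, Fintype.card_fin,
            smul_eq_mul] at this
          have hco : (k*2+1)*θ2 = 2*k*θ2 + θ2 := by ring
          omega
      have hsum : M₀ * (p + 2) ≤ p * (M₀ + (2*k)*θ2) := by
        calc M₀ * (p+2) = ∑ _j : Fin M₀, (p+2) := by simp [mul_comm]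
        _ ≤ ∑ j : Fin M₀, (univ.filter (fun iy : Fin p × Opt k =>
              f iy ∈ G.neighborFinset (ma j) ∩ G.neighborFinset (mb j))).card :=
            Finset.sum_le_sum (fun j _ => hedge j)
        _ = ∑ iy : Fin p × Opt k, cnt iy := by
            simp only [hcntdef, Finset.card_filter]
            rw [Finset.sum_comm]
        _ = ∑ i : Fin p, ∑ y : Opt k, cnt (i, y) := Fintype.sum_prod_type _
        _ ≤ ∑ _i : Fin p, (M₀ + (2*k)*θ2) := Finset.sum_le_sum (fun i _ => hperi i)
        _ = p * (M₀ + (2*k)*θ2) := by simp [mul_comm]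
      have hr1 : M₀ * (p+2) = p*M₀ + 2*M₀ := by ring
      have hr2 : p * (M₀ + (2*k)*θ2) = p*M₀ + 2*(k*θ2*p) := by ring
      linarith

section wrappers

lemma fan_adj_none {k : ℕ} (j : Fin k) (c : Fin 2) : (fan k).Adj none (some (j, c)) := by
  rw [fan, SimpleGraph.fromRel_adj]
  exact ⟨by simp, Or.inl (Or.inl rfl)⟩

lemma fan_adj_pair {k : ℕ} (j : Fin k) :
    (fan k).Adj (some (j, 0)) (some (j, 1)) := by
  rw [fan, SimpleGraph.fromRel_adj]
  refine ⟨?_, Or.inl (Or.inr ⟨j, 0, 1, rfl, rfl⟩)⟩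
  intro h
  simp only [Option.some.injEq, Prod.mk.injEq] at h
  exact absurd h.2 (by decide)

lemma fam_to_copy {N k t : ℕ} (B : SimpleGraph (Fin N)) {f : Fin t × Opt k → Fin N}
    (hf : IsFam B k t f) : B.ContainsCopy (copies t (fan k)) := by
  refine ⟨f, hf.1, ?_⟩
  rintro ⟨i, x⟩ ⟨i', y⟩ hadj
  obtain ⟨hi, hxy⟩ := hadj
  simp only at hi
  subst hi
  rw [fan, SimpleGraph.fromRel_adj] at hxy
  obtain ⟨hne, hrel⟩ := hxy
  have hsym : ∀ (j : Fin k) (c d : Fin 2), c ≠ d →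
      B.Adj (f (i, some (j, c))) (f (i, some (j, d))) := by
    intro j c d hcd
    rcases fin2_cases c with hc | hc <;> rcases fin2_cases d with hd | hd
    · exact absurd (hc.trans hd.symm) hcd
    · rw [hc, hd]; exact hf.2.2 i j
    · rw [hc, hd]; exact (hf.2.2 i j).symm
    · exact absurd (hc.trans hd.symm) hcd
  rcases hrel with (h | ⟨a, c, d, hx, hy⟩) | (h | ⟨a, c, d, hy, hx⟩)
  · subst h
    cases y with
    | none => exact absurd rfl hne
    | some jc =>
      obtain ⟨j, c⟩ := jc
      exact hf.2.1 i j c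
  · subst hx; subst hy
    exact hsym a c d (fun h => hne (by rw [h]))
  · subst h
    cases x with
    | none => exact absurd rfl hne
    | some jc =>
      obtain ⟨j, c⟩ := jc
      exact (hf.2.1 i j c).symm
  · subst hy; subst hx
    exact hsym a d c (fun h => hne (by rw [h]))

lemma star_copy {N n : ℕ} (red : SimpleGraph (Fin N)) [DecidableRel red.Adj]
    (v : Fin N) (hdeg : n - 1 ≤ red.degree v) :
    red.ContainsCopy (completeBipartiteGraph (Fin 1) (Fin (n - 1))) := by
  classical
  have hcard : n - 1 ≤ (red.neighborFinset v).card := by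
    rw [red.card_neighborFinset_eq_degree]; exact hdeg
  obtain ⟨σ, hσinj, hσmem⟩ := exists_inj_fun (red.neighborFinset v) (n-1) hcard
  refine ⟨Sum.elim (fun _ => v) σ, ?_, ?_⟩
  · rintro (a | a) (b | b) h
    · simp only [Sum.elim_inl] at h
      rw [Subsingleton.elim a b]
    · simp only [Sum.elim_inl, Sum.elim_inr] at h
      exfalso
      have := hσmem b
      rw [← h, SimpleGraph.mem_neighborFinset] at this
      exact red.irrefl this
    · simp only [Sum.elim_inl, Sum.elim_inr] at h
      exfalso
      have := hσmem a
      rw [h, SimpleGraph.mem_neighborFinset] at this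
      exact red.irrefl this
    · simp only [Sum.elim_inr] at h
      rw [hσinj h]
  · rintro (a | a) (b | b) hab <;>
      simp only [completeBipartiteGraph, Sum.isLeft_inl, Sum.isRight_inl, Sum.isLeft_inr,
        Sum.isRight_inr] at hab
    · exact absurd hab (by simp)
    · simp only [Sum.elim_inl, Sum.elim_inr]
      exact (SimpleGraph.mem_neighborFinset _ _ _).mp (hσmem b)
    · simp only [Sum.elim_inl, Sum.elim_inr]
      exact ((SimpleGraph.mem_neighborFinset _ _ _).mp (hσmem a)).symm
    · exact absurd hab (by simp)

theorem upper_bound (k t n : ℕ) (hk : 1 ≤ k) (ht : 1 ≤ t)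
    (h1 : B1 k t n) (h2 : B2 k t n) (h3 : B3 k t n) :
    ramseyProp (completeBipartiteGraph (Fin 1) (Fin (n - 1))) (copies t (fan k))
      (2*n + t - 2) := by
  classical
  intro red
  letI : DecidableRel red.Adj := Classical.decRel _
  have hn1 : 1 ≤ n := arN hk ht h3
  by_cases hstar : ∃ v, n - 1 ≤ red.degree v
  · obtain ⟨v, hv⟩ := hstar
    exact Or.inl (star_copy red v hv)
  · push_neg at hstar
    refine Or.inr ?_
    have hdegB : ∀ v, n + t - 1 ≤ (redᶜ).degree v := by
      intro v
      have h' := hstar v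
      have hc := SimpleGraph.degree_compl (G := red) (v := v)
      rw [Fintype.card_fin] at hc
      have hle : red.degree v + 1 ≤ n - 1 := h'
      omega
    have hB : Fam (redᶜ) k t := main_fam (redᶜ) k t n hk ht h1 h2 h3 (by simp) hdegB
    obtain ⟨f, hf⟩ := hB
    exact fam_to_copy (redᶜ) hf

/-- the extremal colouring -/
def lowRed (n t N₀ : ℕ) : SimpleGraph (Fin N₀) where
  Adj x y := x ≠ y ∧ ((x.val < n-1 ∧ y.val < n-1) ∨
    (n-1 ≤ x.val ∧ x.val < 2*n-2 ∧ n-1 ≤ y.val ∧ y.val < 2*n-2))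
  symm := by
    constructor
    intro x y h
    refine ⟨h.1.symm, ?_⟩
    rcases h.2 with h' | h'
    · exact Or.inl ⟨h'.2, h'.1⟩
    · exact Or.inr ⟨h'.2.2.1, h'.2.2.2, h'.1, h'.2.1⟩
  loopless := ⟨fun x h => h.1 rfl⟩

theorem lower_bound (k t n : ℕ) (hk : 1 ≤ k) (ht : 1 ≤ t)
    (h1 : B1 k t n) (h2 : B2 k t n) (h3 : B3 k t n) :
    ¬ ramseyProp (completeBipartiteGraph (Fin 1) (Fin (n - 1))) (copies t (fan k))
      (2*n + t - 3) := by
  classical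
  intro hR
  have hn1 : 1 ≤ n := arN hk ht h3
  set N₀ := 2*n + t - 3 with hN₀def
  rcases hR (lowRed n t N₀) with ⟨f, hfinj, hfadj⟩ | ⟨f, hfinj, hfadj⟩
  · -- a red star is impossible
    rcases Nat.lt_or_ge n 2 with hn2 | hn2
    · -- n = 1 : then k = t = 1 and there are no vertices at all
      have hn : n = 1 := by omega
      have hkt : k = 1 ∧ t = 1 := by
        unfold B3 at h3
        rw [hn] at h3
        have hk' : (1:ℤ) ≤ k := by exact_mod_cast hk
        have ht' : (1:ℤ) ≤ t := by exact_mod_cast ht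
        push_cast at h3
        constructor
        · by_contra hc
          have hk2 : (2:ℤ) ≤ k := by
            have : 2 ≤ k := by omega
            exact_mod_cast this
          nlinarith [mul_nonneg (by linarith : (0:ℤ) ≤ (t:ℤ)-1)
            (by nlinarith : (0:ℤ) ≤ 4*(k:ℤ)^2-k-1), (by nlinarith : (2:ℤ) ≤ 2*(k:ℤ)^2-k-1)]
        · by_contra hc
          have ht2 : (2:ℤ) ≤ t := by
            have : 2 ≤ t := by omega
            exact_mod_cast this
          nlinarith [mul_nonneg (by linarith : (0:ℤ) ≤ (t:ℤ)-2)
            (by nlinarith : (0:ℤ) ≤ 4*(k:ℤ)^2-k-1), (by nlinarith : (2:ℤ) ≤ 6*(k:ℤ)^2-2*k-2)]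
      have hN0 : N₀ = 0 := by omega
      have x := f (Sum.inl 0)
      rw [hN0] at x
      exact x.elim0
    · -- n ≥ 2
      set v := f (Sum.inl 0) with hvdef
      have hadj : ∀ i : Fin (n-1), (lowRed n t N₀).Adj v (f (Sum.inr i)) := by
        intro i
        refine hfadj ?_
        simp [completeBipartiteGraph]
      obtain ⟨lo, hlo⟩ : ∃ lo, lo ≤ v.val ∧ v.val < lo + (n-1) ∧
          ∀ i : Fin (n-1), lo ≤ (f (Sum.inr i)).val ∧ (f (Sum.inr i)).val < lo + (n-1) := by
        rcases Nat.lt_or_ge v.val (n-1) with h | h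
        · refine ⟨0, by omega, by omega, ?_⟩
          intro i
          rcases (hadj i).2 with hc | hc
          · omega
          · omega
        · rcases Nat.lt_or_ge v.val (2*n-2) with h' | h'
          · refine ⟨n-1, by omega, by omega, ?_⟩
            intro i
            rcases (hadj i).2 with hc | hc
            · omega
            · omega
          · exfalso
            have h0 : 0 < n - 1 := by omega
            rcases (hadj ⟨0, h0⟩).2 with hc | hc
            · omega
            · omega
      have hmemv : ∀ i : Fin (n-1),
          (f (Sum.inr i)).val ∈ (Finset.Ico lo (lo + (n-1))).erase v.val := by
        intro i
        rw [Finset.mem_erase, Finset.mem_Ico]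
        refine ⟨?_, (hlo.2.2 i).1, (hlo.2.2 i).2⟩
        intro hval
        have : f (Sum.inr i) = v := Fin.ext hval
        have := hfinj this
        simp at this
      have hinj : Set.InjOn (fun i : Fin (n-1) => (f (Sum.inr i)).val)
          (univ : Finset (Fin (n-1))) := by
        intro a _ b _ hab
        have : f (Sum.inr a) = f (Sum.inr b) := Fin.ext hab
        have := hfinj this
        simpa using this
      have hcle := Finset.card_le_card_of_injOn _ (fun i _ => hmemv i) hinj
      rw [Finset.card_univ, Fintype.card_fin,
        Finset.card_erase_of_mem (Finset.mem_Ico.mpr ⟨hlo.1, hlo.2.1⟩),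
        Nat.card_Ico] at hcle
      omega
  · -- a blue copy of t disjoint fans is impossible
    have hj0 : 0 < k := hk
    set j0 : Fin k := ⟨0, hj0⟩ with hj0def
    have hpair : ∀ (i : Fin t) (x y : Opt k), (copies t (fan k)).Adj (i, x) (i, y) →
        ¬((f (i,x)).val < n-1 ∧ (f (i,y)).val < n-1) ∧
        ¬(n-1 ≤ (f (i,x)).val ∧ (f (i,x)).val < 2*n-2 ∧
          n-1 ≤ (f (i,y)).val ∧ (f (i,y)).val < 2*n-2) := by
      intro i x y hxy
      have hb := hfadj hxy
      rw [SimpleGraph.compl_adj] at hb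
      constructor
      · intro hc; exact hb.2 ⟨hb.1, Or.inl hc⟩
      · intro hc; exact hb.2 ⟨hb.1, Or.inr hc⟩
    have hchoice : ∀ i : Fin t, ∃ x : Opt k, 2*n-2 ≤ (f (i,x)).val := by
      intro i
      by_contra hcon
      push_neg at hcon
      have h0 := hcon none
      have h1 := hcon (some (j0, 0))
      have h2 := hcon (some (j0, 1))
      have hA01 : (copies t (fan k)).Adj (i, (none : Opt k)) (i, some (j0, 0)) :=
        ⟨rfl, fan_adj_none j0 0⟩
      have hA02 : (copies t (fan k)).Adj (i, (none : Opt k)) (i, some (j0, 1)) :=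
        ⟨rfl, fan_adj_none j0 1⟩
      have hA12 : (copies t (fan k)).Adj (i, some (j0, 0)) (i, (some (j0, 1) : Opt k)) :=
        ⟨rfl, fan_adj_pair j0⟩
      have hp01 := hpair i _ _ hA01
      have hp02 := hpair i _ _ hA02
      have hp12 := hpair i _ _ hA12
      rcases Nat.lt_or_ge (f (i, (none : Opt k))).val (n-1) with hr0 | hr0 <;>
        rcases Nat.lt_or_ge (f (i, some (j0, 0))).val (n-1) with hr1 | hr1 <;>
        rcases Nat.lt_or_ge (f (i, some (j0, 1))).val (n-1) with hr2 | hr2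
      · exact hp01.1 ⟨hr0, hr1⟩
      · exact hp01.1 ⟨hr0, hr1⟩
      · exact hp02.1 ⟨hr0, hr2⟩
      · exact hp12.2 ⟨hr1, h1, hr2, h2⟩
      · exact hp12.1 ⟨hr1, hr2⟩
      · exact hp02.2 ⟨hr0, h0, hr2, h2⟩
      · exact hp01.2 ⟨hr0, h0, hr1, h1⟩
      · exact hp01.2 ⟨hr0, h0, hr1, h1⟩
    choose sel hsel using hchoice
    have hinj : Set.InjOn (fun i : Fin t => (f (i, sel i)).val) (univ : Finset (Fin t)) := by
      intro a _ b _ hab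
      have : f (a, sel a) = f (b, sel b) := Fin.ext hab
      have := hfinj this
      rw [Prod.mk.injEq] at this
      exact this.1
    have hmem : ∀ i : Fin t, (f (i, sel i)).val ∈ Finset.Ico (2*n-2) N₀ := by
      intro i
      rw [Finset.mem_Ico]
      exact ⟨hsel i, (f (i, sel i)).isLt⟩
    have hcle := Finset.card_le_card_of_injOn _ (fun i _ => hmem i) hinj
    rw [Finset.card_univ, Fintype.card_fin, Nat.card_Ico] at hcle
    omega

lemma ramseyProp_mono {α β : Type*} (G : SimpleGraph α) (H : SimpleGraph β) {M N : ℕ}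
    (h : M ≤ N) (hM : ramseyProp G H M) : ramseyProp G H N := by
  intro red
  have hembinj : Function.Injective (Fin.castLE h) := Fin.castLE_injective h
  rcases hM (SimpleGraph.comap (Fin.castLE h) red) with ⟨g, hg, hadj⟩ | ⟨g, hg, hadj⟩
  · exact Or.inl ⟨(Fin.castLE h) ∘ g, hembinj.comp hg, fun a b h' => hadj h'⟩
  · refine Or.inr ⟨(Fin.castLE h) ∘ g, hembinj.comp hg, ?_⟩
    intro a b h'
    have hc := hadj h'
    rw [SimpleGraph.compl_adj] at hc ⊢
    exact ⟨fun he => hc.1 (hembinj he), hc.2⟩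

end wrappers

end StarFan

/-- The strengthened form of Theorem 6: `r(K_{1,n−1}, tF_k) = 2n + t − 2` whenever
`n ≥ max{12kt + 2k − 19, 10kt + 2k − 13, 4k²t − 2k² − kt − t + 1}`. -/
theorem star_vs_tFan_strong (k t n : ℕ) (hk : 1 ≤ k) (ht : 1 ≤ t)
    (hn1 : 12 * (k : ℤ) * (t : ℤ) + 2 * (k : ℤ) - 19 ≤ (n : ℤ))
    (hn2 : 10 * (k : ℤ) * (t : ℤ) + 2 * (k : ℤ) - 13 ≤ (n : ℤ))
    (hn3 : 4 * (k : ℤ) ^ 2 * (t : ℤ) - 2 * (k : ℤ) ^ 2 - (k : ℤ) * (t : ℤ) - (t : ℤ) + 1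
      ≤ (n : ℤ)) :
    ramseyNumber (completeBipartiteGraph (Fin 1) (Fin (n - 1))) (copies t (fan k)) =
      2 * n + t - 2 := by
  have h1 : StarFan.B1 k t n := hn1
  have h2 : StarFan.B2 k t n := hn2
  have h3 : StarFan.B3 k t n := hn3
  have hub := StarFan.upper_bound k t n hk ht h1 h2 h3
  have hn : 1 ≤ n := StarFan.arN hk ht h3
  apply le_antisymm
  · exact Nat.sInf_le hub
  · refine le_csInf ⟨_, hub⟩ ?_
    intro m hm
    by_contra hlt
    push_neg at hlt
    have hm' : m ≤ 2*n + t - 3 := by omega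
    exact StarFan.lower_bound k t n hk ht h1 h2 h3
      (StarFan.ramseyProp_mono _ _ hm' hm)
end

section
/- Let G be a graph on n ≥ 2 vertices with no isolated vertex, let v be a vertex of G of minimum degree δ = δ(G), and let k be a positive integer. Then r(G, F_k) ≤ max{ r(G − v, F_k), δ·(r(G, kK_2) − 1) + n }, where G − v denotes the graph obtained from G by deleting v. -/
open SimpleGraph

lemma exists_inj_of_le_card {β : Type*} {s : Finset β} {m : ℕ} (h : m ≤ s.card) :
    ∃ g : Fin m → β, Function.Injective g ∧ ∀ i, g i ∈ s := by
  set e := s.equivFin.symm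
  refine ⟨fun i => (e (Fin.castLE h i) : β), ?_, fun i => (e _).2⟩
  intro i j hij
  exact Fin.castLE_injective h (e.injective (Subtype.ext hij))

lemma containsCopy_comap {β α γ : Type*} {host : SimpleGraph β} {G : SimpleGraph α}
    {g : γ → β} (hg : Function.Injective g) (h : (host.comap g).ContainsCopy G) :
    host.ContainsCopy G := by
  obtain ⟨f, hf, hadj⟩ := h
  exact ⟨g ∘ f, hg.comp hf, fun a b hab => hadj hab⟩

lemma containsCopy_compl_comap {β α γ : Type*} {host : SimpleGraph β} {G : SimpleGraph α}
    {g : γ → β} (hg : Function.Injective g) (h : ((host.comap g)ᶜ).ContainsCopy G) :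
    (hostᶜ).ContainsCopy G := by
  obtain ⟨f, hf, hadj⟩ := h
  refine ⟨g ∘ f, hg.comp hf, fun a b hab => ?_⟩
  obtain ⟨hne, hnadj⟩ := (SimpleGraph.compl_adj _ _ _).mp (hadj hab)
  exact (SimpleGraph.compl_adj _ _ _).mpr ⟨hg.ne hne, hnadj⟩

lemma ramseyProp_pull {α β : Type*} {G : SimpleGraph α} {H : SimpleGraph β} {N : ℕ}
    (h : ramseyProp G H N) {γ : Type*} (red : SimpleGraph γ) (g : Fin N → γ)
    (hg : Function.Injective g) :
    red.ContainsCopy G ∨ (redᶜ).ContainsCopy H := by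
  rcases h (red.comap g) with h' | h'
  · exact Or.inl (containsCopy_comap hg h')
  · exact Or.inr (containsCopy_compl_comap hg h')

lemma ramsey_matching {V : Type*} [Fintype V] (G : SimpleGraph V) (k : ℕ) :
    ramseyProp G (copies k (⊤ : SimpleGraph (Fin 2))) (2 * k + Fintype.card V) := by
  classical
  induction k with
  | zero =>
    intro red
    exact Or.inr ⟨fun p => p.1.elim0, fun p => p.1.elim0, fun p _ _ => p.1.elim0⟩
  | succ k ih =>
    intro red
    by_cases hb : ∃ x y, (redᶜ).Adj x y
    · obtain ⟨x, y, hxy⟩ := hb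
      have hxyne : x ≠ y := hxy.ne
      have hcard : 2 * k + Fintype.card V ≤ (Finset.univ \ {x, y}).card := by
        rw [Finset.card_sdiff_of_subset (Finset.subset_univ _), Finset.card_univ, Fintype.card_fin]
        rw [Finset.card_insert_of_notMem (by simp [hxyne]), Finset.card_singleton]
        omega
      obtain ⟨g, hg, hgmem⟩ := exists_inj_of_le_card hcard
      have hgx : ∀ i, g i ≠ x ∧ g i ≠ y := by
        intro i
        have := hgmem i
        simp only [Finset.mem_sdiff, Finset.mem_insert, Finset.mem_singleton] at this
        exact ⟨fun h => this.2 (Or.inl h), fun h => this.2 (Or.inr h)⟩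
      rcases ih (red.comap g) with h' | h'
      · exact Or.inl (containsCopy_comap hg h')
      · obtain ⟨f, hfinj, hfadj⟩ := h'
        right
        refine ⟨fun p => if h : (p.1 : ℕ) < k then g (f (⟨p.1, h⟩, p.2)) else
          (if p.2 = 0 then x else y), ?_, ?_⟩
        · rintro ⟨p1, p2⟩ ⟨q1, q2⟩ h
          dsimp only at h
          by_cases hp : (p1 : ℕ) < k <;> by_cases hq : (q1 : ℕ) < k
          · rw [dif_pos hp, dif_pos hq] at h
            have h2 := hfinj (hg h)
            rw [Prod.ext_iff] at h2
            have h3 := congrArg Fin.val h2.1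
            simp only at h3
            exact Prod.ext (Fin.ext h3) h2.2
          · rw [dif_pos hp, dif_neg hq] at h
            rcases (hgx (f (⟨p1, hp⟩, p2))) with ⟨h1, h2⟩
            by_cases hq2 : q2 = 0 <;> simp [hq2] at h <;> tauto
          · rw [dif_neg hp, dif_pos hq] at h
            rcases (hgx (f (⟨q1, hq⟩, q2))) with ⟨h1, h2⟩
            by_cases hp2 : p2 = 0 <;> simp [hp2] at h <;> [exact absurd h.symm h1; exact absurd h.symm h2]
          · rw [dif_neg hp, dif_neg hq] at h
            have hp1 : p1 = q1 := by
              have := p1.isLt; have := q1.isLt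
              exact Fin.ext (by omega)
            have hp2 : p2 = q2 := by
              by_cases h1 : p2 = 0 <;> by_cases h2 : q2 = 0
              · rw [h1, h2]
              · rw [if_pos h1, if_neg h2] at h; exact absurd h hxyne
              · rw [if_neg h1, if_pos h2] at h; exact absurd h.symm hxyne
              · have v1 : (p2 : ℕ) ≠ 0 := fun hh => h1 (Fin.ext hh)
                have v2 : (q2 : ℕ) ≠ 0 := fun hh => h2 (Fin.ext hh)
                have := p2.isLt
                have := q2.isLt
                exact Fin.ext (by omega)
            exact Prod.ext hp1 hp2
        · rintro ⟨p1, p2⟩ ⟨q1, q2⟩ hadj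
          obtain ⟨h1, h2⟩ : (p1, p2).1 = (q1, q2).1 ∧ (⊤ : SimpleGraph (Fin 2)).Adj p2 q2 := hadj
          simp only at h1
          subst h1
          dsimp only
          have hne2 : p2 ≠ q2 := (SimpleGraph.top_adj _ _).mp h2
          by_cases hp : (p1 : ℕ) < k
          · rw [dif_pos hp, dif_pos hp]
            have := hfadj (show (copies k (⊤ : SimpleGraph (Fin 2))).Adj (⟨p1, hp⟩, p2) (⟨p1, hp⟩, q2)
              from (show _ = _ ∧ (⊤ : SimpleGraph (Fin 2)).Adj p2 q2 from ⟨rfl, (SimpleGraph.top_adj _ _).mpr hne2⟩))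
            obtain ⟨hne, hnadj⟩ := (SimpleGraph.compl_adj _ _ _).mp this
            exact (SimpleGraph.compl_adj _ _ _).mpr ⟨hg.ne hne, hnadj⟩
          · rw [dif_neg hp, dif_neg hp]
            fin_cases p2 <;> fin_cases q2
            · exact absurd rfl hne2
            · simpa using hxy
            · simpa using hxy.symm
            · exact absurd rfl hne2
    · push_neg at hb
      left
      have hcomplete : ∀ a b : Fin (2 * (k+1) + Fintype.card V), a ≠ b → red.Adj a b := by
        intro a b hne
        by_contra hred
        exact hb a b ((SimpleGraph.compl_adj _ _ _).mpr ⟨hne, hred⟩)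
      have hle : Fintype.card V ≤ 2 * (k+1) + Fintype.card V := by omega
      set e := Fintype.equivFin V
      refine ⟨fun a => Fin.castLE hle (e a), ?_, fun a b hab => ?_⟩
      · exact (Fin.castLE_injective hle).comp e.injective
      · exact hcomplete _ _ (fun h => hab.ne (e.injective (Fin.castLE_injective hle h)))

lemma greedy {V β : Type*} [Fintype V] [Fintype β] [DecidableEq V] [DecidableEq β]
    (G : SimpleGraph V) (red : SimpleGraph β) [DecidableRel red.Adj] (D : ℕ)
    (hdeg : ∀ x : β, (Finset.univ.filter fun u => ¬ red.Adj x u).card ≤ D)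
    (hN : Fintype.card V * (D + 1) ≤ Fintype.card β) :
    red.ContainsCopy G := by
  rcases isEmpty_or_nonempty V with hV | hV
  · exact ⟨isEmptyElim, fun a => isEmptyElim a, fun a _ _ => isEmptyElim a⟩
  have hβ : Nonempty β := by
    rw [← Fintype.card_pos_iff]
    have h1 : 1 ≤ Fintype.card V := Fintype.card_pos_iff.mpr hV
    nlinarith
  obtain ⟨b₀⟩ := hβ
  have key : ∀ s : Finset V, ∃ f : V → β, Set.InjOn f ↑s ∧
      ∀ a ∈ s, ∀ b ∈ s, G.Adj a b → red.Adj (f a) (f b) := by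
    intro s
    induction s using Finset.cons_induction with
    | empty => exact ⟨fun _ => b₀, by simp, by simp⟩
    | cons a s ha ih =>
      obtain ⟨f, hinj, hedge⟩ := ih
      set bad : Finset β :=
        s.image f ∪ s.biUnion (fun b => Finset.univ.filter fun u => ¬ red.Adj (f b) u) with hbad
      have hbadcard : bad.card < Fintype.card β := by
        have h1 : bad.card ≤ s.card + s.card * D := by
          refine le_trans (Finset.card_union_le _ _) ?_
          refine Nat.add_le_add (Finset.card_image_le) ?_
          refine le_trans (Finset.card_biUnion_le) ?_
          calc ∑ b ∈ s, (Finset.univ.filter fun u => ¬ red.Adj (f b) u).card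
              ≤ ∑ _b ∈ s, D := Finset.sum_le_sum (fun b _ => hdeg (f b))
            _ = s.card * D := by rw [Finset.sum_const, smul_eq_mul]
        have h2 : s.card + 1 ≤ Fintype.card V := by
          have := Finset.card_le_univ (Finset.cons a s ha)
          rwa [Finset.card_cons] at this
        have h3 : (s.card + 1) * (D + 1) ≤ Fintype.card V * (D + 1) :=
          Nat.mul_le_mul_right _ h2
        have h4 : s.card + s.card * D + (D + 1) = (s.card + 1) * (D + 1) := by ring
        omega
      have hbad2 : ∃ u : β, u ∉ bad := by
        by_contra hcon
        push_neg at hcon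
        have : (Finset.univ : Finset β) ⊆ bad := fun u _ => hcon u
        have := Finset.card_le_card this
        rw [Finset.card_univ] at this
        omega
      obtain ⟨u, hu⟩ := hbad2
      have huimg : ∀ b ∈ s, u ≠ f b := by
        intro b hb he
        exact hu (Finset.mem_union_left _ (Finset.mem_image.mpr ⟨b, hb, he.symm⟩))
      have hured : ∀ b ∈ s, red.Adj (f b) u := by
        intro b hb
        by_contra hcon
        exact hu (Finset.mem_union_right _ (Finset.mem_biUnion.mpr
          ⟨b, hb, Finset.mem_filter.mpr ⟨Finset.mem_univ _, hcon⟩⟩))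
      refine ⟨Function.update f a u, ?_, ?_⟩
      · rw [Finset.cons_eq_insert, Finset.coe_insert]
        intro x hx y hy hxy
        rcases hx with hx | hx <;> rcases hy with hy | hy
        · rw [hx, hy]
        · have hyne : y ≠ a := fun h => ha (h ▸ hy)
          rw [hx, Function.update_self, Function.update_of_ne hyne] at hxy
          exact absurd hxy (huimg y hy)
        · have hxne : x ≠ a := fun h => ha (h ▸ hx)
          rw [hy, Function.update_self, Function.update_of_ne hxne] at hxy
          exact absurd hxy.symm (huimg x hx)
        · have hxne : x ≠ a := fun h => ha (h ▸ hx)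
          have hyne : y ≠ a := fun h => ha (h ▸ hy)
          rw [Function.update_of_ne hxne, Function.update_of_ne hyne] at hxy
          exact hinj hx hy hxy
      · intro x hx y hy hxy
        rw [Finset.mem_cons] at hx hy
        rcases hx with hx | hx <;> rcases hy with hy | hy
        · rw [hx, hy] at hxy; exact absurd hxy (G.loopless.irrefl _)
        · have hyne : y ≠ a := fun h => ha (h ▸ hy)
          rw [hx, Function.update_self, Function.update_of_ne hyne]
          rw [hx] at hxy
          exact (hured y hy).symm
        · have hxne : x ≠ a := fun h => ha (h ▸ hx)
          rw [hy, Function.update_self, Function.update_of_ne hxne]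
          rw [hy] at hxy
          exact hured x hx
        · have hxne : x ≠ a := fun h => ha (h ▸ hx)
          have hyne : y ≠ a := by exact fun h => ha (h ▸ hy)
          rw [Function.update_of_ne hxne, Function.update_of_ne hyne]
          exact hedge x hx y hy hxy
  obtain ⟨f, hinj, hedge⟩ := key Finset.univ
  rw [Finset.coe_univ] at hinj
  exact ⟨f, Set.injOn_univ.mp hinj,
    fun a b hab => hedge a (Finset.mem_univ _) b (Finset.mem_univ _) hab⟩

lemma fan_adj_some {k : ℕ} {i j : Fin k} {a b : Fin 2}
    (h : (fan k).Adj (some (i, a)) (some (j, b))) : i = j ∧ a ≠ b := by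
  rw [fan, SimpleGraph.fromRel_adj] at h
  obtain ⟨hne, h | h⟩ := h
  · rcases h with h | ⟨i', a', b', h1, h2⟩
    · simp at h
    · obtain ⟨h1a, h1b⟩ : i = i' ∧ a = a' := by simpa [Prod.ext_iff] using h1
      obtain ⟨h2a, h2b⟩ : j = i' ∧ b = b' := by simpa [Prod.ext_iff] using h2
      subst h1a; subst h1b; subst h2a; subst h2b
      refine ⟨rfl, fun hab => hne ?_⟩
      rw [hab]
  · rcases h with h | ⟨i', a', b', h1, h2⟩
    · simp at h
    · obtain ⟨h1a, h1b⟩ : j = i' ∧ b = a' := by simpa [Prod.ext_iff] using h1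
      obtain ⟨h2a, h2b⟩ : i = i' ∧ a = b' := by simpa [Prod.ext_iff] using h2
      subst h1a; subst h1b; subst h2a; subst h2b
      refine ⟨rfl, fun hab => hne ?_⟩
      rw [hab]

lemma fan_step {V β : Type*} (G : SimpleGraph V) (red : SimpleGraph β) (k m : ℕ)
    (hm : ramseyProp G (copies k (⊤ : SimpleGraph (Fin 2))) m)
    (w : β) (g : Fin m → β) (hg : Function.Injective g)
    (hblue : ∀ i, (redᶜ).Adj w (g i)) :
    red.ContainsCopy G ∨ (redᶜ).ContainsCopy (fan k) := by
  rcases hm (red.comap g) with h' | h'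
  · exact Or.inl (containsCopy_comap hg h')
  · obtain ⟨f, hfinj, hfadj⟩ := h'
    right
    refine ⟨fun p => p.elim w (fun q => g (f q)), ?_, ?_⟩
    · rintro (_ | p) (_ | q) h
      · rfl
      · exact absurd h (hblue (f q)).ne
      · exact absurd h.symm (hblue (f p)).ne
      · exact congrArg some (hfinj (hg h))
    · rintro (_ | ⟨i, a⟩) (_ | ⟨j, b⟩) h
      · exact absurd rfl h.ne
      · exact hblue (f (j, b))
      · exact (hblue (f (i, a))).symm
      · obtain ⟨hij, hab⟩ := fan_adj_some h
        subst hij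
        have := hfadj (show (copies k (⊤ : SimpleGraph (Fin 2))).Adj (i, a) (i, b)
          from (show i = i ∧ (⊤ : SimpleGraph (Fin 2)).Adj a b from ⟨rfl, (SimpleGraph.top_adj _ _).mpr hab⟩))
        obtain ⟨hne, hnadj⟩ := (SimpleGraph.compl_adj _ _ _).mp this
        exact (SimpleGraph.compl_adj _ _ _).mpr ⟨hg.ne hne, hnadj⟩

lemma ramsey_fan_exists {V : Type*} [Fintype V] (G : SimpleGraph V) (k : ℕ) :
    ∃ N, ramseyProp G (fan k) N := by
  classical
  set n := Fintype.card V with hn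
  set m := 2 * k + n with hm
  refine ⟨n * (m + 1) + m, ?_⟩
  intro red
  by_cases hw : ∃ w, m ≤ (Finset.univ.filter fun u => (redᶜ).Adj w u).card
  · obtain ⟨w, hwm⟩ := hw
    obtain ⟨g, hg, hgmem⟩ := exists_inj_of_le_card hwm
    refine fan_step G red k m (ramsey_matching G k) w g hg ?_
    intro i
    exact (Finset.mem_filter.mp (hgmem i)).2
  · push_neg at hw
    left
    refine greedy G red m ?_ ?_
    · intro x
      have hsub : (Finset.univ.filter fun u => ¬ red.Adj x u) ⊆
          insert x (Finset.univ.filter fun u => (redᶜ).Adj x u) := by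
        intro u hu
        rw [Finset.mem_filter] at hu
        by_cases hux : u = x
        · exact Finset.mem_insert.mpr (Or.inl hux)
        · exact Finset.mem_insert.mpr (Or.inr (Finset.mem_filter.mpr
            ⟨Finset.mem_univ _, (SimpleGraph.compl_adj _ _ _).mpr ⟨Ne.symm hux, hu.2⟩⟩))
      have h1 := Finset.card_le_card hsub
      have h2 := Finset.card_insert_le x (Finset.univ.filter fun u => (redᶜ).Adj x u)
      have h3 := hw x
      omega
    · rw [Fintype.card_fin, ← hn]
      omega

/-- The recursive bound from the proof of Lemma 9: for `v` a vertex of minimum degree `δ`,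
`r(G, F_k) ≤ max{r(G − v, F_k), δ(r(G, kK₂) − 1) + n}`. -/
theorem ramsey_fan_recursive {V : Type*} [Fintype V] (n k : ℕ) (hk : 1 ≤ k) (hn : 2 ≤ n)
    (G : SimpleGraph V) (hcard : Fintype.card V = n)
    (hiso : ∀ v : V, ∃ w : V, G.Adj v w)
    (v : V) (hv : ∀ w : V, (G.neighborSet v).ncard ≤ (G.neighborSet w).ncard) :
    ramseyNumber G (fan k) ≤
      max (ramseyNumber (G.induce {w : V | w ≠ v}) (fan k))
        ((G.neighborSet v).ncard *
            (ramseyNumber G (copies k (⊤ : SimpleGraph (Fin 2))) - 1) + n) := by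
  classical
  set δ := (G.neighborSet v).ncard with hδdef
  set r₁ := ramseyNumber (G.induce {w : V | w ≠ v}) (fan k) with hr₁
  set r₂ := ramseyNumber G (copies k (⊤ : SimpleGraph (Fin 2))) with hr₂
  set M := max r₁ (δ * (r₂ - 1) + n) with hMdef
  have hprop₁ : ramseyProp (G.induce {w : V | w ≠ v}) (fan k) r₁ :=
    Nat.sInf_mem (ramsey_fan_exists _ k)
  have hprop₂ : ramseyProp G (copies k (⊤ : SimpleGraph (Fin 2))) r₂ :=
    Nat.sInf_mem (s := {N | ramseyProp G (copies k (⊤ : SimpleGraph (Fin 2))) N}) ⟨_, ramsey_matching G k⟩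
  have hMmem : ramseyProp G (fan k) M := by
    intro red
    rcases ramseyProp_pull hprop₁ red (Fin.castLE (le_max_left _ _))
        (Fin.castLE_injective _) with h | hfan
    swap
    · exact Or.inr hfan
    obtain ⟨f₀, hf₀inj, hf₀adj⟩ := h
    by_cases hex : ∃ u : Fin M, (∀ w' : {w : V | w ≠ v}, u ≠ f₀ w') ∧
        ∀ (x : V) (h : x ≠ v), G.Adj v x → red.Adj u (f₀ ⟨x, h⟩)
    · obtain ⟨u, hu1, hu2⟩ := hex
      left
      refine ⟨fun x => if h : x ≠ v then f₀ ⟨x, h⟩ else u, ?_, ?_⟩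
      · intro a b hab
        dsimp only at hab
        by_cases ha : a ≠ v <;> by_cases hb : b ≠ v
        · rw [dif_pos ha, dif_pos hb] at hab
          exact congrArg Subtype.val (hf₀inj hab)
        · rw [dif_pos ha, dif_neg hb] at hab
          exact absurd hab.symm (hu1 ⟨a, ha⟩)
        · rw [dif_neg ha, dif_pos hb] at hab
          exact absurd hab (hu1 ⟨b, hb⟩)
        · rw [not_not] at ha hb
          rw [ha, hb]
      · intro a b hab
        dsimp only
        by_cases ha : a ≠ v <;> by_cases hb : b ≠ v
        · rw [dif_pos ha, dif_pos hb]
          exact hf₀adj (show (G.induce {w : V | w ≠ v}).Adj ⟨a, ha⟩ ⟨b, hb⟩ from hab)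
        · rw [not_not] at hb
          rw [dif_pos ha, dif_neg (not_not_intro hb)]
          subst hb
          exact (hu2 a ha hab.symm).symm
        · rw [not_not] at ha
          rw [dif_neg (not_not_intro ha), dif_pos hb]
          subst ha
          exact hu2 b hb hab
        · rw [not_not] at ha hb
          rw [ha, hb] at hab
          exact absurd hab (G.loopless.irrefl v)
    · push_neg at hex
      set U : Finset (Fin M) := (Finset.univ.image f₀)ᶜ with hUdef
      have hUmem : ∀ u ∈ U, ∀ w' : {w : V | w ≠ v}, u ≠ f₀ w' := by
        intro u hu w' he
        rw [hUdef, Finset.mem_compl] at hu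
        exact hu (Finset.mem_image.mpr ⟨w', Finset.mem_univ _, he.symm⟩)
      have hsubcard : Fintype.card {w : V | w ≠ v} < n := by
        rw [← hcard]
        exact Fintype.card_lt_of_injective_of_notMem (Subtype.val)
          Subtype.val_injective (b := v) (by simp)
      have hUcard : M - (n - 1) ≤ U.card := by
        rw [hUdef, Finset.card_compl, Finset.card_image_of_injective _ hf₀inj,
          Finset.card_univ, Fintype.card_fin]
        omega
      set c : Fin M → V := fun u =>
        if h : ∀ w' : {w : V | w ≠ v}, u ≠ f₀ w' then (hex u h).choose else v with hcdef
      have hcprop : ∀ u ∈ U, G.Adj v (c u) ∧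
          ∀ h : c u ≠ v, ¬ red.Adj u (f₀ ⟨c u, h⟩) := by
        intro u hu
        have h := hUmem u hu
        simp only [hcdef, dif_pos h]
        obtain ⟨hx, hadj, hred⟩ := (hex u h).choose_spec
        exact ⟨hadj, fun _ => hred⟩
      set Dfin : Finset V := Finset.univ.filter (fun x => G.Adj v x) with hDf
      have hDcard : Dfin.card = δ := by
        rw [hδdef, ← Set.ncard_coe_finset]
        congr 1
        ext x
        simp [hDf, SimpleGraph.mem_neighborSet]
      have hmaps : ∀ u ∈ U, c u ∈ Dfin := by
        intro u hu
        rw [hDf, Finset.mem_filter]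
        exact ⟨Finset.mem_univ _, (hcprop u hu).1⟩
      have hkey : Dfin.card * (r₂ - 1) < U.card := by
        have hM2 : δ * (r₂ - 1) + n ≤ M := le_max_right _ _
        rw [hDcard]
        have := hUcard
        omega
      obtain ⟨d, hd, hT⟩ := Finset.exists_lt_card_fiber_of_mul_lt_card_of_maps_to hmaps hkey
      have hdadj : G.Adj v d := by
        rw [hDf, Finset.mem_filter] at hd
        exact hd.2
      have hdne : d ≠ v := hdadj.ne'
      set w : Fin M := f₀ ⟨d, hdne⟩ with hw
      have hr₂T : r₂ ≤ (U.filter fun u => c u = d).card := by omega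
      obtain ⟨g, hg, hgmem⟩ := exists_inj_of_le_card hr₂T
      have hblue : ∀ i, (redᶜ).Adj w (g i) := by
        intro i
        have hgT := hgmem i
        rw [Finset.mem_filter] at hgT
        obtain ⟨hgU, hgc⟩ := hgT
        have h1 : g i ≠ w := hUmem _ hgU ⟨d, hdne⟩
        have h2 := (hcprop _ hgU).2
        rw [hgc] at h2
        have h3 : ¬ red.Adj (g i) w := h2 hdne
        exact (SimpleGraph.compl_adj _ _ _).mpr ⟨h1.symm, fun hr => h3 hr.symm⟩
      exact fan_step G red k r₂ hprop₂ w g hg hblue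
  exact Nat.sInf_le hMmem
end
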